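/- arXiv:2111.14499 — 16 statements merged into one kernel-verified Lean document; each statement's English description precedes it below -/
import Mathlib

section
/- For all parameters r, k ∈ ℝ, the one-dimensional Chialvo map f_{r,k}(x) = x²·exp(r − x) + k has negative Schwarzian derivative: for every x ∈ ℝ with x ≠ 0 and x ≠ 2 one has 2·f'''(x)·f'(x) < 3·(f''(x))², i.e. Sf(x) = f'''(x)/f'(x) − (3/2)·(f''(x)/f'(x))² < 0. -/
private lemma chialvo_hd (r a b c y : ℝ) :
    HasDerivAt (fun y : ℝ => (a + b * y + c * y ^ 2) * Real.exp (r - y))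
      ((b + 2 * c * y - (a + b * y + c * y ^ 2)) * Real.exp (r - y)) y := by
  have he : HasDerivAt (fun y : ℝ => Real.exp (r - y)) (Real.exp (r - y) * (-1)) y :=
    ((hasDerivAt_id y).const_sub r).exp
  have hP : HasDerivAt (fun y : ℝ => a + b * y + c * y ^ 2) (b + c * (2 * y)) y := by
    have h1 : HasDerivAt (fun y : ℝ => b * y) b y := by
      simpa using (hasDerivAt_id y).const_mul b
    have h2 : HasDerivAt (fun y : ℝ => c * y ^ 2) (c * (2 * y)) y := by
      simpa using ((hasDerivAt_pow 2 y).const_mul c)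
    have h3 := (h1.add h2).const_add a
    have hfe : (fun y : ℝ => a + b * y + c * y ^ 2) =
        fun x : ℝ => a + ((fun y : ℝ => b * y) + fun y : ℝ => c * y ^ 2 : ℝ → ℝ) x := by
      funext z; simp only [Pi.add_apply]; ring
    rw [hfe]; exact h3
  have := hP.mul he
  rw [show (b + 2 * c * y - (a + b * y + c * y ^ 2)) * Real.exp (r - y) =
      (b + c * (2 * y)) * Real.exp (r - y) + (a + b * y + c * y ^ 2) * (Real.exp (r - y) * -1) by
    ring]
  exact this

private lemma chialvo_d (r a b c : ℝ) :
    deriv (fun y : ℝ => (a + b * y + c * y ^ 2) * Real.exp (r - y)) =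
      fun y : ℝ => ((b - a) + (2 * c - b) * y + (-c) * y ^ 2) * Real.exp (r - y) := by
  funext y
  have := (chialvo_hd r a b c y).deriv
  rw [this]; ring

/-- The 1D Chialvo map `f_{r,k}(x) = x² exp(r − x) + k` has negative Schwarzian
derivative at every non-critical point `x ≠ 0`, `x ≠ 2`:
`2 f'''(x) f'(x) < 3 (f''(x))²`, i.e. `Sf(x) = f'''/f' − (3/2)(f''/f')² < 0`. -/
theorem chialvo_negative_schwarzian (r k x : ℝ) (hx0 : x ≠ 0) (hx2 : x ≠ 2) :
    2 * deriv (deriv (deriv (fun y : ℝ => y ^ 2 * Real.exp (r - y) + k))) x *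
        deriv (fun y : ℝ => y ^ 2 * Real.exp (r - y) + k) x <
      3 * (deriv (deriv (fun y : ℝ => y ^ 2 * Real.exp (r - y) + k)) x) ^ 2 ∧
    deriv (deriv (deriv (fun y : ℝ => y ^ 2 * Real.exp (r - y) + k))) x /
          deriv (fun y : ℝ => y ^ 2 * Real.exp (r - y) + k) x -
        (3 / 2) * (deriv (deriv (fun y : ℝ => y ^ 2 * Real.exp (r - y) + k)) x /
          deriv (fun y : ℝ => y ^ 2 * Real.exp (r - y) + k) x) ^ 2 < 0 := by
  have h0 : deriv (fun y : ℝ => y ^ 2 * Real.exp (r - y) + k) =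
      fun y : ℝ => (0 + 2 * y + (-1) * y ^ 2) * Real.exp (r - y) := by
    funext y
    have hfun : (fun y : ℝ => y ^ 2 * Real.exp (r - y) + k) =
        fun y : ℝ => (0 + 0 * y + 1 * y ^ 2) * Real.exp (r - y) + k := by funext z; ring
    rw [hfun, ((chialvo_hd r 0 0 1 y).add_const k).deriv]; ring
  have h1 : deriv (deriv (fun y : ℝ => y ^ 2 * Real.exp (r - y) + k)) =
      fun y : ℝ => (2 + (-4) * y + 1 * y ^ 2) * Real.exp (r - y) := by
    rw [h0, chialvo_d]
    funext y; ring_nf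
  have h2 : deriv (deriv (deriv (fun y : ℝ => y ^ 2 * Real.exp (r - y) + k))) =
      fun y : ℝ => ((-6) + 6 * y + (-1) * y ^ 2) * Real.exp (r - y) := by
    rw [h1, chialvo_d]
    funext y; ring_nf
  rw [h2, h1, h0]
  simp only
  set E := Real.exp (r - x) with hE
  have hEpos : 0 < E := Real.exp_pos _
  -- key polynomial inequality: -x⁴+8x³-24x²+24x-12 < 0
  have key : 2 * (((-6) + 6 * x + (-1) * x ^ 2) * E) * ((0 + 2 * x + (-1) * x ^ 2) * E) <
      3 * ((2 + (-4) * x + 1 * x ^ 2) * E) ^ 2 := by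
    have hE2 : 0 < E ^ 2 := by positivity
    nlinarith [sq_nonneg ((x - 2) ^ 2 - 2), sq_nonneg (x - 1), hE2,
      mul_pos hE2 (by nlinarith [sq_nonneg ((x - 2) ^ 2 - 2), sq_nonneg (x - 1)] :
        (0:ℝ) < (x - 2) ^ 4 + 8 * (x - 2) + 12)]
  refine ⟨key, ?_⟩
  have hb : (0 + 2 * x + (-1) * x ^ 2) * E ≠ 0 := by
    have : 0 + 2 * x + (-1) * x ^ 2 = x * (2 - x) := by ring
    rw [this]
    exact mul_ne_zero (mul_ne_zero hx0 (sub_ne_zero.mpr (Ne.symm hx2))) (ne_of_gt hEpos)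
  set a := ((-6) + 6 * x + (-1) * x ^ 2) * E
  set b := (0 + 2 * x + (-1) * x ^ 2) * E
  set c := (2 + (-4) * x + 1 * x ^ 2) * E
  have heq : a / b - 3 / 2 * (c / b) ^ 2 = (2 * a * b - 3 * c ^ 2) / (2 * b ^ 2) := by
    field_simp
  rw [heq]
  apply div_neg_of_neg_of_pos
  · linarith
  · positivity
end

section
/- For every x ∈ ℝ with x ≠ 0 and x ≠ 2, the Schwarzian derivative of the one-dimensional Chialvo map f_{r,k}(x) = x²·exp(r − x) + k satisfies the identity Sf(x) = −(1/2)·(x⁴ − 8x³ + 24x² − 24x + 12)/(2x − x²)² = −(1/2)·((x² − 4x + 2)² + 4(x − 1)² + 4)/(2x − x²)², independently of r and k. -/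
open Real

private lemma expDeriv (r y : ℝ) : HasDerivAt (fun y : ℝ => Real.exp (r - y)) (-Real.exp (r - y)) y := by
  have h : HasDerivAt (fun y : ℝ => r - y) (-1) y := by
    exact (hasDerivAt_id' y).const_sub r
  convert h.exp using 1; ring

private lemma polyExpDeriv (r y : ℝ) (p dp : Polynomial ℝ) (h : dp = Polynomial.derivative p) :
    HasDerivAt (fun y : ℝ => p.eval y * Real.exp (r - y))
      ((dp.eval y - p.eval y) * Real.exp (r - y)) y := by
  have := (p.hasDerivAt y).mul (expDeriv r y)
  rw [h]
  refine this.congr_deriv ?_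
  ring

private lemma chialvo_d1 (r k : ℝ) :
    deriv (fun y : ℝ => y ^ 2 * Real.exp (r - y) + k)
      = fun y : ℝ => (2 * y - y ^ 2) * Real.exp (r - y) := by
  funext y
  have h := (polyExpDeriv r y (Polynomial.X ^ 2) (2 * Polynomial.X) (by simp [Polynomial.derivative_X_pow]; try ring_nf; try simp [map_ofNat])).add_const k
  have := h.deriv
  simpa using this

private lemma chialvo_d2 (r k : ℝ) :
    deriv (deriv (fun y : ℝ => y ^ 2 * Real.exp (r - y) + k))
      = fun y : ℝ => (y ^ 2 - 4 * y + 2) * Real.exp (r - y) := by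
  rw [chialvo_d1]
  funext y
  have h := polyExpDeriv r y (2 * Polynomial.X - Polynomial.X ^ 2)
    (2 - 2 * Polynomial.X) (by simp [Polynomial.derivative_X_pow]; try ring_nf; try simp [map_ofNat])
  have := h.deriv
  simp only [Polynomial.eval_sub, Polynomial.eval_mul, Polynomial.eval_ofNat, Polynomial.eval_X,
    Polynomial.eval_pow] at this
  rw [show (fun y : ℝ => (2 * y - y ^ 2) * Real.exp (r - y)) = fun y : ℝ => (Polynomial.eval y (2 * Polynomial.X - Polynomial.X ^ 2)) * Real.exp (r - y) by funext z; simp]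
  rw [h.deriv]
  simp; ring

private lemma chialvo_d3 (r k : ℝ) :
    deriv (deriv (deriv (fun y : ℝ => y ^ 2 * Real.exp (r - y) + k)))
      = fun y : ℝ => (-y ^ 2 + 6 * y - 6) * Real.exp (r - y) := by
  rw [chialvo_d2]
  funext y
  have h := polyExpDeriv r y (Polynomial.X ^ 2 - 4 * Polynomial.X + 2)
    (2 * Polynomial.X - 4) (by simp [Polynomial.derivative_X_pow]; try ring_nf; try simp [map_ofNat])
  rw [show (fun y : ℝ => (y ^ 2 - 4 * y + 2) * Real.exp (r - y)) = fun y : ℝ => (Polynomial.eval y (Polynomial.X ^ 2 - 4 * Polynomial.X + 2)) * Real.exp (r - y) by funext z; simp]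
  rw [h.deriv]
  simp; ring

/-- Explicit formula for the Schwarzian derivative of the 1D Chialvo map
`f_{r,k}(x) = x² exp(r − x) + k` at every non-critical point `x ≠ 0`, `x ≠ 2`:
`Sf(x) = −(1/2)(x⁴ − 8x³ + 24x² − 24x + 12)/(2x − x²)²
       = −(1/2)((x² − 4x + 2)² + 4(x − 1)² + 4)/(2x − x²)²`,
independently of `r` and `k`. -/
theorem chialvo_schwarzian_formula (r k x : ℝ) (hx0 : x ≠ 0) (hx2 : x ≠ 2) :
    deriv (deriv (deriv (fun y : ℝ => y ^ 2 * Real.exp (r - y) + k))) x /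
          deriv (fun y : ℝ => y ^ 2 * Real.exp (r - y) + k) x -
        (3 / 2) * (deriv (deriv (fun y : ℝ => y ^ 2 * Real.exp (r - y) + k)) x /
          deriv (fun y : ℝ => y ^ 2 * Real.exp (r - y) + k) x) ^ 2 =
      -(1 / 2) * (x ^ 4 - 8 * x ^ 3 + 24 * x ^ 2 - 24 * x + 12) / (2 * x - x ^ 2) ^ 2 ∧
    deriv (deriv (deriv (fun y : ℝ => y ^ 2 * Real.exp (r - y) + k))) x /
          deriv (fun y : ℝ => y ^ 2 * Real.exp (r - y) + k) x -
        (3 / 2) * (deriv (deriv (fun y : ℝ => y ^ 2 * Real.exp (r - y) + k)) x /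
          deriv (fun y : ℝ => y ^ 2 * Real.exp (r - y) + k) x) ^ 2 =
      -(1 / 2) * ((x ^ 2 - 4 * x + 2) ^ 2 + 4 * (x - 1) ^ 2 + 4) / (2 * x - x ^ 2) ^ 2 := by
  rw [chialvo_d3, chialvo_d2, chialvo_d1]
  have hq : (2 * x - x ^ 2) ≠ 0 := by
    intro h
    have h2 : x * (2 - x) = 0 := by linear_combination h
    rcases mul_eq_zero.mp h2 with h' | h'
    · exact hx0 h'
    · exact hx2 (by linarith)
  have he : Real.exp (r - x) ≠ 0 := Real.exp_ne_zero _
  constructor <;> field_simp <;> ring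
end

section
/- Fix k ≥ 0 and set x₀ = (k + 3 + √(k² − 2k + 9))/2 and r₀ = x₀ + ln((x₀ − k)/x₀²). Then: x₀ > 2 and x₀ > k; x₀ is a fixed point of the Chialvo map at parameter r₀, i.e. x₀²·exp(r₀ − x₀) + k = x₀; the multiplier there is −1, i.e. x₀(2 − x₀)·exp(r₀ − x₀) = −1; the transversality condition holds, i.e. ∂²f/∂r∂x evaluated at (x₀, r₀) equals −1 ≠ 0; and the flip nondegeneracy quantity (1/2)·(∂²f/∂x²(x₀, r₀))² + (1/3)·∂³f/∂x³(x₀, r₀) is strictly positive (so the flip bifurcation at r₀ is supercritical). -/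
private lemma exp_sub_deriv (r x : ℝ) :
    HasDerivAt (fun x : ℝ => Real.exp (r - x)) (-Real.exp (r - x)) x := by
  have h := (Real.hasDerivAt_exp (r - x)).comp x ((hasDerivAt_id x).const_sub r)
  simpa [Function.comp_def] using h

private lemma d1 (k r x : ℝ) :
    HasDerivAt (fun x : ℝ => x ^ 2 * Real.exp (r - x) + k)
      ((2 * x - x ^ 2) * Real.exp (r - x)) x := by
  have hpow : HasDerivAt (fun x : ℝ => x ^ 2) (2 * x) x := by
    simpa using hasDerivAt_pow 2 x
  have h := (hpow.mul (exp_sub_deriv r x)).add_const k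
  exact h.congr_deriv (by ring)

private lemma d2 (r x : ℝ) :
    HasDerivAt (fun x : ℝ => (2 * x - x ^ 2) * Real.exp (r - x))
      ((x ^ 2 - 4 * x + 2) * Real.exp (r - x)) x := by
  have hpow : HasDerivAt (fun x : ℝ => x ^ 2) (2 * x) x := by
    simpa using hasDerivAt_pow 2 x
  have hpoly : HasDerivAt (fun x : ℝ => 2 * x - x ^ 2) (2 - 2 * x) x := by
    have := ((hasDerivAt_id x).const_mul 2).sub hpow
    exact this.congr_deriv (by ring)
  have h := hpoly.mul (exp_sub_deriv r x)
  exact h.congr_deriv (by ring)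

private lemma d3 (r x : ℝ) :
    HasDerivAt (fun x : ℝ => (x ^ 2 - 4 * x + 2) * Real.exp (r - x))
      ((-x ^ 2 + 6 * x - 6) * Real.exp (r - x)) x := by
  have hpow : HasDerivAt (fun x : ℝ => x ^ 2) (2 * x) x := by
    simpa using hasDerivAt_pow 2 x
  have hpoly : HasDerivAt (fun x : ℝ => x ^ 2 - 4 * x + 2) (2 * x - 4) x := by
    simpa using (hpow.sub ((hasDerivAt_id x).const_mul 4)).add_const 2
  have h := hpoly.mul (exp_sub_deriv r x)
  exact h.congr_deriv (by ring)

private lemma chialvo_nondeg (x : ℝ) (hx : 2 < x) :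
    0 < (1 / 2) * ((x ^ 2 - 4 * x + 2) * (1 / (x ^ 2 - 2 * x))) ^ 2
      + (1 / 3) * ((-x ^ 2 + 6 * x - 6) * (1 / (x ^ 2 - 2 * x))) := by
  have hu : 0 < x ^ 2 - 2 * x := by nlinarith
  have hu' : x ^ 2 - 2 * x ≠ 0 := ne_of_gt hu
  have hP : (0:ℝ) < (x - 2) ^ 4 + 8 * x - 4 := by
    have h4 : (0:ℝ) ≤ (x - 2) ^ 4 := by positivity
    linarith
  have hform : (1 / 2) * ((x ^ 2 - 4 * x + 2) * (1 / (x ^ 2 - 2 * x))) ^ 2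
      + (1 / 3) * ((-x ^ 2 + 6 * x - 6) * (1 / (x ^ 2 - 2 * x)))
      = ((x - 2) ^ 4 + 8 * x - 4) / (6 * (x ^ 2 - 2 * x) ^ 2) := by
    field_simp
    ring
  rw [hform]
  positivity

/-- Supercritical flip bifurcation in the 1D Chialvo map. For fixed `k ≥ 0`,
with `x₀ = (k + 3 + √(k² − 2k + 9))/2` and `r₀ = x₀ + ln((x₀ − k)/x₀²)`:
`x₀ > 2`, `x₀ > k`, `x₀` is a fixed point of `f(x,r) = x² exp(r − x) + k` at `r₀`
with multiplier `−1`, the transversality condition `∂²f/∂r∂x (x₀,r₀) = −1 ≠ 0`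
holds, and the flip nondegeneracy quantity is strictly positive. -/
theorem chialvo_flip_bifurcation (k x₀ r₀ : ℝ) (hk : 0 ≤ k)
    (hx₀ : x₀ = (k + 3 + Real.sqrt (k ^ 2 - 2 * k + 9)) / 2)
    (hr₀ : r₀ = x₀ + Real.log ((x₀ - k) / x₀ ^ 2)) :
    2 < x₀ ∧ k < x₀ ∧
    x₀ ^ 2 * Real.exp (r₀ - x₀) + k = x₀ ∧
    x₀ * (2 - x₀) * Real.exp (r₀ - x₀) = -1 ∧
    deriv (fun r : ℝ => deriv (fun x : ℝ => x ^ 2 * Real.exp (r - x) + k) x₀) r₀ = -1 ∧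
    deriv (fun r : ℝ => deriv (fun x : ℝ => x ^ 2 * Real.exp (r - x) + k) x₀) r₀ ≠ 0 ∧
    0 < (1 / 2) * (deriv (deriv (fun x : ℝ => x ^ 2 * Real.exp (r₀ - x) + k)) x₀) ^ 2 +
        (1 / 3) * deriv (deriv (deriv (fun x : ℝ => x ^ 2 * Real.exp (r₀ - x) + k))) x₀ := by
  set s := Real.sqrt (k ^ 2 - 2 * k + 9) with hs
  have hdisc : (0:ℝ) ≤ k ^ 2 - 2 * k + 9 := by nlinarith [sq_nonneg (k - 1)]
  have hs0 : 0 ≤ s := Real.sqrt_nonneg _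
  have hs2 : s ^ 2 = k ^ 2 - 2 * k + 9 := Real.sq_sqrt hdisc
  have hsgt : 2 < s := by nlinarith [sq_nonneg (k - 1), sq_nonneg (s - 2), sq_nonneg (s + 2)]
  have hx2 : 2 < x₀ := by rw [hx₀]; linarith
  have hxk : k < x₀ := by
    rw [hx₀]
    nlinarith [sq_nonneg (s + k - 3)]
  have hx0 : (0:ℝ) < x₀ := by linarith
  -- key quadratic relation
  have hq : x₀ ^ 2 = (k + 3) * x₀ - 2 * k := by
    have h2x : 2 * x₀ - (k + 3) = s := by rw [hx₀]; ring
    nlinarith [hs2, h2x]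
  -- value of the exponential
  have hratio : (0:ℝ) < (x₀ - k) / x₀ ^ 2 :=
    div_pos (by linarith) (by positivity)
  have hE : Real.exp (r₀ - x₀) = (x₀ - k) / x₀ ^ 2 := by
    rw [hr₀]
    simpa using Real.exp_log hratio
  set E := Real.exp (r₀ - x₀) with hEdef
  have hE0 : 0 < E := Real.exp_pos _
  have hE' : x₀ ^ 2 * E = x₀ - k := by
    rw [hE]; field_simp
  have hfix : x₀ ^ 2 * E + k = x₀ := by linarith
  have hmul : x₀ * (2 - x₀) * E = -1 := by
    have h : x₀ * (x₀ * (2 - x₀) * E) = x₀ * (-1) := by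
      have : x₀ * (x₀ * (2 - x₀) * E) = (2 - x₀) * (x₀ ^ 2 * E) := by ring
      rw [this, hE']
      nlinarith [hq]
    exact mul_left_cancel₀ (ne_of_gt hx0) h
  -- mixed partial
  have hderiv_x : ∀ r : ℝ, deriv (fun x : ℝ => x ^ 2 * Real.exp (r - x) + k) x₀
      = (2 * x₀ - x₀ ^ 2) * Real.exp (r - x₀) := fun r => (d1 k r x₀).deriv
  have hmixed : deriv (fun r : ℝ => deriv (fun x : ℝ => x ^ 2 * Real.exp (r - x) + k) x₀) r₀
      = -1 := by
    have heq : (fun r : ℝ => deriv (fun x : ℝ => x ^ 2 * Real.exp (r - x) + k) x₀)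
        = fun r : ℝ => (2 * x₀ - x₀ ^ 2) * Real.exp (r - x₀) := funext hderiv_x
    rw [heq]
    have h : HasDerivAt (fun r : ℝ => (2 * x₀ - x₀ ^ 2) * Real.exp (r - x₀))
        ((2 * x₀ - x₀ ^ 2) * Real.exp (r₀ - x₀)) r₀ := by
      have := ((Real.hasDerivAt_exp (r₀ - x₀)).comp r₀
        ((hasDerivAt_id r₀).sub_const x₀)).const_mul (2 * x₀ - x₀ ^ 2)
      simpa using this
    rw [h.deriv, ← hEdef]
    nlinarith [hmul]
  -- second and third x-derivatives
  have hD1 : deriv (fun x : ℝ => x ^ 2 * Real.exp (r₀ - x) + k)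
      = fun x : ℝ => (2 * x - x ^ 2) * Real.exp (r₀ - x) :=
    funext fun x => (d1 k r₀ x).deriv
  have hD2 : deriv (deriv (fun x : ℝ => x ^ 2 * Real.exp (r₀ - x) + k))
      = fun x : ℝ => (x ^ 2 - 4 * x + 2) * Real.exp (r₀ - x) := by
    rw [hD1]; exact funext fun x => (d2 r₀ x).deriv
  have hD3 : deriv (deriv (deriv (fun x : ℝ => x ^ 2 * Real.exp (r₀ - x) + k))) x₀
      = (-x₀ ^ 2 + 6 * x₀ - 6) * E := by
    rw [hD2]; exact (d3 r₀ x₀).deriv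
  have hD2x : deriv (deriv (fun x : ℝ => x ^ 2 * Real.exp (r₀ - x) + k)) x₀
      = (x₀ ^ 2 - 4 * x₀ + 2) * E := by rw [hD2]
  -- nondegeneracy
  have hu : 0 < x₀ ^ 2 - 2 * x₀ := by nlinarith
  have hEval : E = 1 / (x₀ ^ 2 - 2 * x₀) := by
    have h1 : (x₀ ^ 2 - 2 * x₀) * E = 1 := by nlinarith [hmul]
    field_simp
    rw [eq_div_iff (by linarith)]
    linarith [h1]
  refine ⟨hx2, hxk, hfix, hmul, hmixed, by rw [hmixed]; norm_num, ?_⟩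
  rw [hD2x, hD3, hEval]
  exact chialvo_nondeg x₀ hx2
end

section
/- Fix k ≥ 0. The equation (x − k)(x − 2) = x has exactly two real roots, x = (k + 3 − √(k² − 2k + 9))/2 and x = (k + 3 + √(k² − 2k + 9))/2, and among them only x = (k + 3 + √(k² − 2k + 9))/2 satisfies x > k (and it also satisfies x > 2). Consequently, if x₀ is a fixed point of the Chialvo map f_{r,k}(x) = x²·exp(r − x) + k with multiplier f'_{r,k}(x₀) = −1, then x₀ = (k + 3 + √(k² − 2k + 9))/2. -/
/-- For fixed `k ≥ 0`, the equation `(x − k)(x − 2) = x` has exactly the two real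
roots `(k + 3 ± √(k² − 2k + 9))/2`; they are distinct, and only the larger one
exceeds `k` (and it also exceeds `2`). Consequently, any fixed point of the Chialvo
map `f_{r,k}(x) = x² exp(r − x) + k` with multiplier `−1` equals the larger root. -/
theorem chialvo_flip_fixed_point_candidate (k : ℝ) (hk : 0 ≤ k) :
    (∀ x : ℝ, (x - k) * (x - 2) = x ↔
      x = (k + 3 - Real.sqrt (k ^ 2 - 2 * k + 9)) / 2 ∨
      x = (k + 3 + Real.sqrt (k ^ 2 - 2 * k + 9)) / 2) ∧
    (k + 3 - Real.sqrt (k ^ 2 - 2 * k + 9)) / 2 ≠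
      (k + 3 + Real.sqrt (k ^ 2 - 2 * k + 9)) / 2 ∧
    ¬ k < (k + 3 - Real.sqrt (k ^ 2 - 2 * k + 9)) / 2 ∧
    k < (k + 3 + Real.sqrt (k ^ 2 - 2 * k + 9)) / 2 ∧
    2 < (k + 3 + Real.sqrt (k ^ 2 - 2 * k + 9)) / 2 ∧
    (∀ r x₀ : ℝ, x₀ ^ 2 * Real.exp (r - x₀) + k = x₀ →
      x₀ * (2 - x₀) * Real.exp (r - x₀) = -1 →
      x₀ = (k + 3 + Real.sqrt (k ^ 2 - 2 * k + 9)) / 2) := by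
  set s := Real.sqrt (k ^ 2 - 2 * k + 9) with hs
  have harg : (0:ℝ) < k ^ 2 - 2 * k + 9 := by nlinarith [sq_nonneg (k - 1)]
  have hs2 : s ^ 2 = k ^ 2 - 2 * k + 9 := Real.sq_sqrt harg.le
  have hspos : 0 < s := Real.sqrt_pos.mpr harg
  have hiff : ∀ x : ℝ, (x - k) * (x - 2) = x ↔
      x = (k + 3 - s) / 2 ∨ x = (k + 3 + s) / 2 := by
    intro x
    constructor
    · intro h
      have h0 : (x - (k + 3 - s) / 2) * (x - (k + 3 + s) / 2) = 0 := by nlinarith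
      rcases mul_eq_zero.mp h0 with h1 | h1
      · left; linarith
      · right; linarith
    · rintro (rfl | rfl) <;> nlinarith
  have hne : (k + 3 - s) / 2 ≠ (k + 3 + s) / 2 := by
    intro h; nlinarith
  have hlt : k < (k + 3 + s) / 2 := by nlinarith
  have hle : ¬ k < (k + 3 - s) / 2 := by
    intro h; nlinarith
  have h2 : 2 < (k + 3 + s) / 2 := by nlinarith
  refine ⟨hiff, hne, hle, hlt, h2, ?_⟩
  intro r x₀ hfix hmul
  have hepos : 0 < Real.exp (r - x₀) := Real.exp_pos _
  have hx0 : x₀ ≠ 0 := by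
    rintro rfl; simp at hmul
  have hq : (x₀ - k) * (x₀ - 2) = x₀ := by
    linear_combination (2 - x₀) * hfix - x₀ * hmul
  rcases (hiff x₀).mp hq with h | h
  · exfalso
    have hxk : k < x₀ := by nlinarith [sq_nonneg x₀, mul_pos (mul_pos (mul_self_pos.mpr hx0) hepos) hepos]
    exact hle (h ▸ hxk)
  · exact h
end

section
/- For k = 0 and r₀ = 1, the one-dimensional Chialvo map undergoes a fold bifurcation at the fixed point x₀ = 1; explicitly, with f(x, r) = x²·exp(r − x): f(1, 1) = 1; ∂f/∂x(1, 1) = 1; ∂²f/∂x²(1, 1) = −1 ≠ 0; and ∂f/∂r(1, 1) = 1 ≠ 0. Moreover (x₀, r₀) = (1, 1) is the only pair satisfying simultaneously the fixed-point condition x²·exp(r − x) = x with x > 0 and the multiplier condition x(2 − x)·exp(r − x) = 1. -/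
lemma chialvo_hd1 (x : ℝ) :
    HasDerivAt (fun x : ℝ => x ^ 2 * Real.exp (1 - x))
      ((2 * x - x ^ 2) * Real.exp (1 - x)) x := by
  have h1 : HasDerivAt (fun x : ℝ => 1 - x) (-1) x := by
    simpa [Pi.sub_def] using (hasDerivAt_const x (1 : ℝ)).sub (hasDerivAt_id x)
  have h2 := h1.exp
  have h3 := (hasDerivAt_pow 2 x).mul h2
  simp only [Pi.mul_def] at h3
  refine h3.congr_deriv ?_
  ring

lemma chialvo_deriv1 :
    deriv (fun x : ℝ => x ^ 2 * Real.exp (1 - x)) =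
      fun x : ℝ => (2 * x - x ^ 2) * Real.exp (1 - x) := by
  funext x
  exact (chialvo_hd1 x).deriv

lemma chialvo_hd2 (x : ℝ) :
    HasDerivAt (fun x : ℝ => (2 * x - x ^ 2) * Real.exp (1 - x))
      ((x ^ 2 - 4 * x + 2) * Real.exp (1 - x)) x := by
  have h1 : HasDerivAt (fun x : ℝ => 1 - x) (-1) x := by
    simpa [Pi.sub_def] using (hasDerivAt_const x (1 : ℝ)).sub (hasDerivAt_id x)
  have h2 := h1.exp
  have hp : HasDerivAt (fun x : ℝ => 2 * x - x ^ 2) (2 - 2 * x) x := by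
    have := ((hasDerivAt_id x).const_mul 2).sub (hasDerivAt_pow 2 x)
    simpa [Pi.sub_def, mul_comm] using this
  have h3 := hp.mul h2
  simp only [Pi.mul_def] at h3
  refine h3.congr_deriv ?_
  ring

/-- Fold bifurcation of the 1D Chialvo map for `k = 0` at `(x₀, r₀) = (1, 1)`:
with `f(x, r) = x² exp(r − x)` one has `f(1,1) = 1`, `∂f/∂x(1,1) = 1`,
`∂²f/∂x²(1,1) = −1 ≠ 0`, `∂f/∂r(1,1) = 1 ≠ 0`, and `(1,1)` is the only pair
satisfying the fixed-point condition (with `x > 0`) and the multiplier condition. -/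
theorem chialvo_fold_bifurcation_k_zero :
    (1 : ℝ) ^ 2 * Real.exp (1 - 1) = 1 ∧
    deriv (fun x : ℝ => x ^ 2 * Real.exp (1 - x)) 1 = 1 ∧
    deriv (deriv (fun x : ℝ => x ^ 2 * Real.exp (1 - x))) 1 = -1 ∧
    deriv (deriv (fun x : ℝ => x ^ 2 * Real.exp (1 - x))) 1 ≠ 0 ∧
    deriv (fun r : ℝ => (1 : ℝ) ^ 2 * Real.exp (r - 1)) 1 = 1 ∧
    deriv (fun r : ℝ => (1 : ℝ) ^ 2 * Real.exp (r - 1)) 1 ≠ 0 ∧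
    (∀ x r : ℝ, 0 < x → x ^ 2 * Real.exp (r - x) = x →
      x * (2 - x) * Real.exp (r - x) = 1 → x = 1 ∧ r = 1) := by
  have hd2 : deriv (deriv (fun x : ℝ => x ^ 2 * Real.exp (1 - x))) 1 = -1 := by
    rw [chialvo_deriv1, (chialvo_hd2 1).deriv]
    norm_num
  have hdr : deriv (fun r : ℝ => (1 : ℝ) ^ 2 * Real.exp (r - 1)) 1 = 1 := by
    have h1 : HasDerivAt (fun r : ℝ => r - 1) 1 (1 : ℝ) := by
      simpa [Pi.sub_def] using (hasDerivAt_id (1 : ℝ)).sub (hasDerivAt_const 1 (1 : ℝ))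
    have h2 := (h1.exp.const_mul ((1 : ℝ) ^ 2)).deriv
    simpa using h2
  refine ⟨by norm_num, ?_, hd2, by rw [hd2]; norm_num, hdr, by rw [hdr]; norm_num, ?_⟩
  · rw [(chialvo_hd1 1).deriv]; norm_num
  · intro x r hx hfix hmul
    have hkey : x * Real.exp (r - x) = 1 := by
      have h : x * (x * Real.exp (r - x)) = x * 1 := by rw [mul_one]; nlinarith [hfix]
      exact mul_left_cancel₀ (ne_of_gt hx) h
    have hx1 : x = 1 := by
      have : (2 - x) * (x * Real.exp (r - x)) = 1 := by linarith [hmul, mul_comm x (2 - x)]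
      rw [hkey, mul_one] at this
      linarith
    subst hx1
    have : Real.exp (r - 1) = 1 := by linarith [hkey]
    have hr : r - 1 = 0 := by
      have := Real.exp_injective (by simpa [Real.exp_zero] using this)
      simpa using this
    exact ⟨rfl, by linarith⟩
end

section
/- Fix 0 < k < 3 − 2√2 and set x_{0,1} = (k + 1 − √(k² − 6k + 1))/2, x_{0,2} = (k + 1 + √(k² − 6k + 1))/2, and r_{0,i} = x_{0,i} − ln((2 − x_{0,i})·x_{0,i}) for i = 1, 2. Then k < x_{0,1} < x_{0,2} < 2, and for each i: x_{0,i} is a fixed point of the Chialvo map at parameter r_{0,i}, i.e. x_{0,i}²·exp(r_{0,i} − x_{0,i}) + k = x_{0,i}; the multiplier there is 1, i.e. x_{0,i}(2 − x_{0,i})·exp(r_{0,i} − x_{0,i}) = 1; ∂²f/∂x²(x_{0,i}, r_{0,i}) ≠ 0; and ∂f/∂r(x_{0,i}, r_{0,i}) ≠ 0. Hence the map undergoes a fold bifurcation at each of these two parameter values. -/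
theorem chialvo_aux (k x₀ r₀ : ℝ) (h0 : 0 < x₀) (h2 : x₀ < 2)
    (hq : x₀ ^ 2 = (k + 1) * x₀ - 2 * k)
    (hnd : x₀ ^ 2 - 4 * x₀ + 2 ≠ 0)
    (hr : r₀ = x₀ - Real.log ((2 - x₀) * x₀)) :
    x₀ ^ 2 * Real.exp (r₀ - x₀) + k = x₀ ∧
    x₀ * (2 - x₀) * Real.exp (r₀ - x₀) = 1 ∧
    deriv (deriv (fun x : ℝ => x ^ 2 * Real.exp (r₀ - x) + k)) x₀ ≠ 0 ∧
    deriv (fun r : ℝ => x₀ ^ 2 * Real.exp (r - x₀) + k) r₀ ≠ 0 := by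
  have hpos : 0 < (2 - x₀) * x₀ := by nlinarith
  have hexp : Real.exp (r₀ - x₀) = ((2 - x₀) * x₀)⁻¹ := by
    rw [hr, show x₀ - Real.log ((2 - x₀) * x₀) - x₀ = -Real.log ((2 - x₀) * x₀) by ring,
      Real.exp_neg, Real.exp_log hpos]
  have hfix : x₀ ^ 2 * Real.exp (r₀ - x₀) + k = x₀ := by
    rw [hexp]; have : (2 - x₀) ≠ 0 := by linarith
    field_simp; nlinarith
  have hmul : x₀ * (2 - x₀) * Real.exp (r₀ - x₀) = 1 := by
    rw [hexp, mul_comm x₀ (2 - x₀)]; exact mul_inv_cancel₀ hpos.ne'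
  have hd1 : ∀ x : ℝ, HasDerivAt (fun x : ℝ => x ^ 2 * Real.exp (r₀ - x) + k)
      ((2 * x - x ^ 2) * Real.exp (r₀ - x)) x := by
    intro x
    have h := ((hasDerivAt_pow 2 x).mul
      (((hasDerivAt_id x).const_sub r₀).exp)).add_const k
    refine h.congr_deriv ?_
    simp; ring
  have hderiv1 : deriv (fun x : ℝ => x ^ 2 * Real.exp (r₀ - x) + k)
      = fun x : ℝ => (2 * x - x ^ 2) * Real.exp (r₀ - x) := by
    funext x; exact (hd1 x).deriv
  have hd2 : HasDerivAt (fun x : ℝ => (2 * x - x ^ 2) * Real.exp (r₀ - x))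
      ((x₀ ^ 2 - 4 * x₀ + 2) * Real.exp (r₀ - x₀)) x₀ := by
    have h := (((hasDerivAt_id x₀).const_mul 2).sub (hasDerivAt_pow 2 x₀)).mul
      (((hasDerivAt_id x₀).const_sub r₀).exp)
    refine h.congr_deriv ?_
    simp; ring
  have hsnd : deriv (deriv (fun x : ℝ => x ^ 2 * Real.exp (r₀ - x) + k)) x₀
      = (x₀ ^ 2 - 4 * x₀ + 2) * Real.exp (r₀ - x₀) := by
    rw [hderiv1]; exact hd2.deriv
  have hrd : deriv (fun r : ℝ => x₀ ^ 2 * Real.exp (r - x₀) + k) r₀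
      = x₀ ^ 2 * Real.exp (r₀ - x₀) := by
    have h := (((hasDerivAt_id r₀).sub_const x₀).exp.const_mul (x₀ ^ 2)).add_const k
    have := h.deriv
    simpa using this
  refine ⟨hfix, hmul, ?_, ?_⟩
  · rw [hsnd]
    exact mul_ne_zero hnd (Real.exp_ne_zero _)
  · rw [hrd]
    exact mul_ne_zero (pow_ne_zero 2 h0.ne') (Real.exp_ne_zero _)

/-- Fold bifurcations of the 1D Chialvo map for fixed `0 < k < 3 − 2√2`. With
`x_{0,1} = (k + 1 − √(k² − 6k + 1))/2`, `x_{0,2} = (k + 1 + √(k² − 6k + 1))/2` and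
`r_{0,i} = x_{0,i} − ln((2 − x_{0,i}) x_{0,i})`, one has `k < x_{0,1} < x_{0,2} < 2`,
each `x_{0,i}` is a fixed point of `f(x,r) = x² exp(r − x) + k` at parameter `r_{0,i}`
with multiplier `1`, and the fold nondegeneracy conditions
`∂²f/∂x²(x_{0,i}, r_{0,i}) ≠ 0` and `∂f/∂r(x_{0,i}, r_{0,i}) ≠ 0` hold. -/
theorem chialvo_fold_bifurcation_two_branches (k x₀₁ x₀₂ r₀₁ r₀₂ : ℝ)
    (hk0 : 0 < k) (hk1 : k < 3 - 2 * Real.sqrt 2)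
    (hx1 : x₀₁ = (k + 1 - Real.sqrt (k ^ 2 - 6 * k + 1)) / 2)
    (hx2 : x₀₂ = (k + 1 + Real.sqrt (k ^ 2 - 6 * k + 1)) / 2)
    (hr1 : r₀₁ = x₀₁ - Real.log ((2 - x₀₁) * x₀₁))
    (hr2 : r₀₂ = x₀₂ - Real.log ((2 - x₀₂) * x₀₂)) :
    k < x₀₁ ∧ x₀₁ < x₀₂ ∧ x₀₂ < 2 ∧
    x₀₁ ^ 2 * Real.exp (r₀₁ - x₀₁) + k = x₀₁ ∧
    x₀₂ ^ 2 * Real.exp (r₀₂ - x₀₂) + k = x₀₂ ∧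
    x₀₁ * (2 - x₀₁) * Real.exp (r₀₁ - x₀₁) = 1 ∧
    x₀₂ * (2 - x₀₂) * Real.exp (r₀₂ - x₀₂) = 1 ∧
    deriv (deriv (fun x : ℝ => x ^ 2 * Real.exp (r₀₁ - x) + k)) x₀₁ ≠ 0 ∧
    deriv (deriv (fun x : ℝ => x ^ 2 * Real.exp (r₀₂ - x) + k)) x₀₂ ≠ 0 ∧
    deriv (fun r : ℝ => x₀₁ ^ 2 * Real.exp (r - x₀₁) + k) r₀₁ ≠ 0 ∧
    deriv (fun r : ℝ => x₀₂ ^ 2 * Real.exp (r - x₀₂) + k) r₀₂ ≠ 0 := by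
  have hs2 : Real.sqrt 2 ^ 2 = 2 := Real.sq_sqrt (by norm_num)
  have hs2pos : 0 < Real.sqrt 2 := Real.sqrt_pos.mpr (by norm_num)
  have hk1' : k < 1 := by nlinarith
  have hD : 0 < k ^ 2 - 6 * k + 1 := by nlinarith
  set s := Real.sqrt (k ^ 2 - 6 * k + 1) with hs
  have hsD2 : s ^ 2 = k ^ 2 - 6 * k + 1 := Real.sq_sqrt hD.le
  have hsDpos : 0 < s := Real.sqrt_pos.mpr hD
  -- inequalities
  have hkx1 : k < x₀₁ := by rw [hx1]; nlinarith [sq_nonneg (s - (1 - k))]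
  have hx12 : x₀₁ < x₀₂ := by rw [hx1, hx2]; linarith
  have hx22 : x₀₂ < 2 := by rw [hx2]; nlinarith [sq_nonneg (s - (3 - k))]
  have h01 : 0 < x₀₁ := lt_trans hk0 hkx1
  have h02 : 0 < x₀₂ := lt_trans h01 hx12
  have h12lt2 : x₀₁ < 2 := lt_trans hx12 hx22
  -- quadratic identities
  have hq1 : x₀₁ ^ 2 = (k + 1) * x₀₁ - 2 * k := by
    rw [hx1]; nlinarith [hsD2]
  have hq2 : x₀₂ ^ 2 = (k + 1) * x₀₂ - 2 * k := by
    rw [hx2]; nlinarith [hsD2]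
  -- nondegeneracy
  have hnd1 : x₀₁ ^ 2 - 4 * x₀₁ + 2 ≠ 0 := by
    rw [hx1]; intro h
    nlinarith [mul_pos hsDpos (show (0:ℝ) < 3 - k by linarith)]
  have hnd2 : x₀₂ ^ 2 - 4 * x₀₂ + 2 ≠ 0 := by
    rw [hx2]; intro h
    have h' : s * s = (3 - k) * s := by linear_combination 2 * h + hsD2 / 2
    have hseq : s = 3 - k := mul_right_cancel₀ hsDpos.ne' h'
    rw [hseq] at hsD2
    have h9 : (9:ℝ) = 1 := by linear_combination hsD2
    norm_num at h9
  obtain ⟨f1, m1, d1, r1⟩ := chialvo_aux k x₀₁ r₀₁ h01 h12lt2 hq1 hnd1 hr1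
  obtain ⟨f2, m2, d2, r2⟩ := chialvo_aux k x₀₂ r₀₂ h02 hx22 hq2 hnd2 hr2
  exact ⟨hkx1, hx12, hx22, f1, f2, m1, m2, d1, d2, r1, r2⟩
end

section
/- Let k > 0 and suppose x₀ is a fixed point of the Chialvo map f_{r,k}(x) = x²·exp(r − x) + k with multiplier 1, i.e. x₀²·exp(r − x₀) + k = x₀ and x₀(2 − x₀)·exp(r − x₀) = 1. Then k < x₀ < 2, x₀ satisfies the quadratic equation x₀² − (k + 1)x₀ + 2k = 0, and necessarily k ≤ 3 − 2√2. -/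
/-- Necessary conditions for a fold bifurcation in the 1D Chialvo map with `k > 0`:
if `x₀` is a fixed point of `f_{r,k}(x) = x² exp(r − x) + k` with multiplier `1`,
then `k < x₀ < 2`, `x₀² − (k + 1)x₀ + 2k = 0`, and necessarily `k ≤ 3 − 2√2`. -/
theorem chialvo_fold_necessary_conditions (k r x₀ : ℝ) (hk : 0 < k)
    (hfix : x₀ ^ 2 * Real.exp (r - x₀) + k = x₀)
    (hmult : x₀ * (2 - x₀) * Real.exp (r - x₀) = 1) :
    k < x₀ ∧ x₀ < 2 ∧ x₀ ^ 2 - (k + 1) * x₀ + 2 * k = 0 ∧ k ≤ 3 - 2 * Real.sqrt 2 := by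
  set E := Real.exp (r - x₀) with hE
  have hEpos : 0 < E := Real.exp_pos _
  have hx0 : x₀ ≠ 0 := by
    intro h; rw [h] at hmult; simp at hmult
  have h1 : x₀ ^ 2 * E = x₀ - k := by linarith
  have h2 : (x₀ - k) * (2 - x₀) = x₀ := by
    have h3 : x₀ * (2 - x₀) * E * x₀ = x₀ := by rw [hmult]; ring
    nlinarith [h3, h1]
  have hkx : k < x₀ := by
    have : 0 < x₀ ^ 2 * E := by positivity
    linarith
  have hx2 : x₀ < 2 := by
    have h4 : 0 < x₀ * (2 - x₀) := by
      have : x₀ * (2 - x₀) * E > 0 := by rw [hmult]; norm_num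
      nlinarith [this, hEpos]
    nlinarith [h4, hkx, hk]
  have hquad : x₀ ^ 2 - (k + 1) * x₀ + 2 * k = 0 := by nlinarith [h2]
  refine ⟨hkx, hx2, hquad, ?_⟩
  have hs : Real.sqrt 2 > 0 := by positivity
  have hs2 : Real.sqrt 2 ^ 2 = 2 := Real.sq_sqrt (by norm_num)
  have hdisc : k ^ 2 - 6 * k + 1 ≥ 0 := by nlinarith [sq_nonneg (2 * x₀ - (k + 1)), hquad]
  have hk3 : k < 3 := by
    -- both roots < 2: other root is k+1-x₀, and (2-x₀)(2-(k+1-x₀)) = 2 > 0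
    nlinarith [hquad, hx2, hkx]
  nlinarith [hdisc, hs, hs2, sq_nonneg (3 - k - 2 * Real.sqrt 2), sq_nonneg (Real.sqrt 2 - 1)]
end

section
/- Fix r > 2 − √2 − ln(2√2 − 2). Then the multiplier equation (2x − x²)·exp(r − x) = 1 has a unique solution x(r) in the open interval (0, 2 − √2). Moreover, setting k* = x(r) − x(r)/(2 − x(r)), the point x(r) is a fixed point of the Chialvo map f_{r,k*}(x) = x²·exp(r − x) + k* with multiplier 1, and the fold nondegeneracy conditions with respect to the parameter k hold: ∂²f/∂x² at (x(r), k*) equals exp(r − x(r))·((x(r) − 2)² − 2) ≠ 0, and ∂f/∂k = 1 ≠ 0. Hence x(r) undergoes a fold bifurcation with respect to k at the bifurcation value k*. -/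
private lemma hexp_aux (r x : ℝ) :
    HasDerivAt (fun t => Real.exp (r - t)) (-Real.exp (r - x)) x := by
  have h := (Real.hasDerivAt_exp (r - x)).comp x
    ((hasDerivAt_const x r).sub (hasDerivAt_id x))
  refine h.congr_deriv ?_
  simp

private lemma hg_aux (r x : ℝ) :
    HasDerivAt (fun t => (2 * t - t ^ 2) * Real.exp (r - t))
      (((x - 2) ^ 2 - 2) * Real.exp (r - x)) x := by
  have hpoly : HasDerivAt (fun t : ℝ => 2 * t - t ^ 2) (2 - 2 * x) x := by
    have := ((hasDerivAt_id x).const_mul 2).sub (hasDerivAt_pow 2 x)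
    refine this.congr_deriv ?_
    ring
  have := hpoly.mul (hexp_aux r x)
  refine this.congr_deriv ?_
  ring

private lemma hf_aux (r x C : ℝ) :
    HasDerivAt (fun t => t ^ 2 * Real.exp (r - t) + C)
      ((2 * x - x ^ 2) * Real.exp (r - x)) x := by
  have := ((hasDerivAt_pow 2 x).mul (hexp_aux r x)).add_const C
  refine this.congr_deriv ?_
  ring

/-- Fold bifurcation with respect to `k` in the 1D Chialvo map. For fixed
`r > 2 − √2 − ln(2√2 − 2)`, the multiplier equation `(2x − x²) exp(r − x) = 1`
has a unique solution `x(r)` in `(0, 2 − √2)`; moreover, with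
`k* = x(r) − x(r)/(2 − x(r))`, the point `x(r)` is a fixed point of
`f(x, k) = x² exp(r − x) + k` at `k = k*` (with multiplier `1`), the second
derivative `∂²f/∂x²` at `(x(r), k*)` equals `exp(r − x(r))((x(r) − 2)² − 2) ≠ 0`,
and `∂f/∂k = 1 ≠ 0`. -/
theorem chialvo_fold_bifurcation_in_k (r : ℝ)
    (hr : 2 - Real.sqrt 2 - Real.log (2 * Real.sqrt 2 - 2) < r) :
    (∃! x : ℝ, x ∈ Set.Ioo 0 (2 - Real.sqrt 2) ∧
      (2 * x - x ^ 2) * Real.exp (r - x) = 1) ∧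
    (∀ x : ℝ, x ∈ Set.Ioo 0 (2 - Real.sqrt 2) →
      (2 * x - x ^ 2) * Real.exp (r - x) = 1 →
      x ^ 2 * Real.exp (r - x) + (x - x / (2 - x)) = x ∧
      deriv (deriv (fun t : ℝ => t ^ 2 * Real.exp (r - t) + (x - x / (2 - x)))) x =
        Real.exp (r - x) * ((x - 2) ^ 2 - 2) ∧
      Real.exp (r - x) * ((x - 2) ^ 2 - 2) ≠ 0 ∧
      deriv (fun k : ℝ => x ^ 2 * Real.exp (r - x) + k) (x - x / (2 - x)) = 1 ∧
      (1 : ℝ) ≠ 0) := by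
  have hs2 : Real.sqrt 2 ^ 2 = 2 := Real.sq_sqrt (by norm_num)
  have hs1 : 1 < Real.sqrt 2 := by
    nlinarith [Real.sqrt_nonneg 2]
  have hslt2 : Real.sqrt 2 < 2 := by
    nlinarith [Real.sqrt_nonneg 2]
  set b : ℝ := 2 - Real.sqrt 2 with hb
  clear_value b
  have hb0 : 0 < b := by rw [hb]; linarith
  set g : ℝ → ℝ := fun x => (2 * x - x ^ 2) * Real.exp (r - x) with hgdef
  have hcont : ContinuousOn g (Set.Icc 0 b) := by fun_prop
  have hmono : StrictMonoOn g (Set.Icc 0 b) := by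
    apply strictMonoOn_of_deriv_pos (convex_Icc 0 b) hcont
    intro x hx
    rw [interior_Icc] at hx
    rw [(hg_aux r x).deriv]
    have h2x : Real.sqrt 2 < 2 - x := by
      have := hx.2; rw [hb] at this; linarith
    have h3 : 2 < (x - 2) ^ 2 := by nlinarith [Real.sqrt_nonneg 2]
    exact mul_pos (by linarith) (Real.exp_pos _)
  have hgb : 1 < g b := by
    have hc : (0 : ℝ) < 2 * Real.sqrt 2 - 2 := by linarith
    have h1 : -Real.log (2 * Real.sqrt 2 - 2) < r - b := by
      linarith
    have h3 : (2 * Real.sqrt 2 - 2)⁻¹ < Real.exp (r - b) := by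
      calc (2 * Real.sqrt 2 - 2)⁻¹ = Real.exp (-Real.log (2 * Real.sqrt 2 - 2)) := by
            rw [Real.exp_neg, Real.exp_log hc]
        _ < _ := Real.exp_lt_exp.mpr h1
    have h4 : 1 < (2 * Real.sqrt 2 - 2) * Real.exp (r - b) := by
      have := mul_lt_mul_of_pos_left h3 hc
      rwa [mul_inv_cancel₀ (ne_of_gt hc)] at this
    have hval : 2 * b - b ^ 2 = 2 * Real.sqrt 2 - 2 := by
      rw [hb]; nlinarith
    have hgbv : g b = (2 * Real.sqrt 2 - 2) * Real.exp (r - b) := by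
      rw [hgdef]; simp only; rw [hval]
    linarith [hgbv ▸ h4]
  have hg0 : g 0 = 0 := by simp [hgdef]
  have hex : ∃ x ∈ Set.Ioo 0 b, g x = 1 := by
    have := intermediate_value_Ioo (le_of_lt hb0) hcont
    have h1 : (1 : ℝ) ∈ Set.Ioo (g 0) (g b) := by
      rw [hg0]; exact ⟨one_pos, hgb⟩
    obtain ⟨x, hx, hgx⟩ := this h1
    exact ⟨x, hx, hgx⟩
  constructor
  · obtain ⟨x, hx, hgx⟩ := hex
    refine ⟨x, ⟨hx, hgx⟩, ?_⟩
    rintro y ⟨hy, hgy⟩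
    exact hmono.injOn (Set.mem_Icc_of_Ioo hy) (Set.mem_Icc_of_Ioo hx) (hgy.trans hgx.symm)
  · rintro x ⟨hx0, hxb⟩ hgx
    have h2x : Real.sqrt 2 < 2 - x := by rw [hb] at hxb; linarith
    have h2x0 : 0 < 2 - x := by linarith
    have hE := Real.exp_pos (r - x)
    refine ⟨?_, ?_, ?_, ?_, one_ne_zero⟩
    · field_simp
      nlinarith [hgx]
    · have hd1 : deriv (fun t : ℝ => t ^ 2 * Real.exp (r - t) + (x - x / (2 - x))) =
          fun t => (2 * t - t ^ 2) * Real.exp (r - t) := by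
        funext t; exact (hf_aux r t _).deriv
      rw [hd1, (hg_aux r x).deriv]; ring
    · have h3 : 2 < (x - 2) ^ 2 := by nlinarith [Real.sqrt_nonneg 2]
      exact ne_of_gt (mul_pos (Real.exp_pos _) (by linarith))
    · exact ((hasDerivAt_id _).const_add _).deriv
end

section
/- For every k with 0 ≤ k < 2 there exists r* = r*(k) ∈ ℝ such that for all r ≥ r* the one-dimensional Chialvo map f_{r,k} satisfies f_{r,k}(f_{r,k}(2)) < 2 < f_{r,k}(2), i.e. the second iterate of the critical point c = 2 lies strictly to the left of c and the first iterate strictly to the right. -/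
/-- Dynamical core condition for the 1D Chialvo map: for every `0 ≤ k < 2` there is
`r*` such that for all `r ≥ r*` the map `f_{r,k}(x) = x² exp(r − x) + k` satisfies
`f_{r,k}(f_{r,k}(2)) < 2 < f_{r,k}(2)`. -/
theorem chialvo_dynamical_core (k : ℝ) (hk0 : 0 ≤ k) (hk2 : k < 2) :
    ∃ rstar : ℝ, ∀ r : ℝ, rstar ≤ r →
      (fun x : ℝ => x ^ 2 * Real.exp (r - x) + k)
          ((fun x : ℝ => x ^ 2 * Real.exp (r - x) + k) 2) < 2 ∧
      2 < (fun x : ℝ => x ^ 2 * Real.exp (r - x) + k) 2 := by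
  refine ⟨3 + Real.log (16 / (2 - k)), fun r hr => ?_⟩
  have h2k : 0 < 2 - k := by linarith
  have hq : (1:ℝ) < 16 / (2 - k) := by
    rw [lt_div_iff₀ h2k]; linarith
  have hlog : 0 < Real.log (16 / (2 - k)) := Real.log_pos hq
  have hr3 : 3 ≤ r := by linarith
  have hexp1 : 2 ≤ Real.exp (r - 2) := by
    have := Real.add_one_le_exp (r - 2); linarith
  beta_reduce
  set y : ℝ := 2 ^ 2 * Real.exp (r - 2) + k with hy
  clear_value y
  have hy0 : 0 < y := by
    have := Real.exp_pos (r - 2); simp only [hy]; nlinarith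
  constructor
  ·     -- Step A : y^2 ≤ 16 * exp (y/2)
    have h4 : y / 4 ≤ Real.exp (y / 4) := by
      have := Real.add_one_le_exp (y / 4); linarith
    have hsq : Real.exp (y / 4) ^ 2 = Real.exp (y / 2) := by
      rw [sq, ← Real.exp_add]; ring_nf
    have hA : y ^ 2 ≤ 16 * Real.exp (y / 2) := by
      have h2 : (y / 4) ^ 2 ≤ Real.exp (y / 4) ^ 2 :=
        pow_le_pow_left₀ (by positivity) h4 2
      nlinarith [h2, hsq]
    -- Step B : y^2 * exp (r - y) ≤ 16 * exp (r - y/2)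
    have e1 : Real.exp (y / 2) * Real.exp (r - y) = Real.exp (r - y / 2) := by
      rw [← Real.exp_add]; ring_nf
    have hB : y ^ 2 * Real.exp (r - y) ≤ 16 * Real.exp (r - y / 2) := by
      nlinarith [mul_nonneg (sub_nonneg.2 hA) (Real.exp_nonneg (r - y)), e1]
    -- Step C : r - y/2 ≤ 2 - r
    have hC : r - y / 2 ≤ 2 - r := by
      have := Real.add_one_le_exp (r - 2)
      simp only [hy]; nlinarith
    -- Step D : 16 * exp (2 - r) < 2 - k
    have hD : 16 * Real.exp (2 - r) < 2 - k := by
      have hlt : 16 / (2 - k) < Real.exp (r - 2) := by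
        calc 16 / (2 - k) = Real.exp (Real.log (16 / (2 - k))) :=
              (Real.exp_log (by positivity)).symm
          _ < Real.exp (r - 2) := Real.exp_lt_exp.2 (by linarith)
      have h16 : 16 < Real.exp (r - 2) * (2 - k) := (div_lt_iff₀ h2k).mp hlt
      have hprod : Real.exp (2 - r) * Real.exp (r - 2) = 1 := by
        rw [← Real.exp_add]; norm_num
      nlinarith [Real.exp_pos (r - 2), Real.exp_pos (2 - r), hprod, h16]
    have hmono : Real.exp (r - y / 2) ≤ Real.exp (2 - r) := Real.exp_le_exp.2 hC
    nlinarith [hB, hmono, hD]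
  ·     simp only [hy]; nlinarith
end

section
/- Let 0 ≤ k < 2 and let x_f be a fixed point of the one-dimensional Chialvo map f_{r,k}(x) = x²·exp(r − x) + k with x_f > (3 + k + √((k − 1)² + 8))/2. Then |f'_{r,k}(x_f)| > 1; equivalently, (x_f − k)(x_f − 2)/x_f > 1, so the fixed point x_f is unstable (repelling). -/
/-- Instability criterion for fixed points of the 1D Chialvo map: if `0 ≤ k < 2`
and `x_f` is a fixed point of `f_{r,k}(x) = x² exp(r − x) + k` with
`x_f > (3 + k + √((k − 1)² + 8))/2`, then `|f'_{r,k}(x_f)| > 1`; equivalently,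
`(x_f − k)(x_f − 2)/x_f > 1`, so `x_f` is unstable (repelling). -/
theorem chialvo_fixed_point_unstable (k r xf : ℝ) (hk0 : 0 ≤ k) (hk2 : k < 2)
    (hfix : xf ^ 2 * Real.exp (r - xf) + k = xf)
    (hgt : (3 + k + Real.sqrt ((k - 1) ^ 2 + 8)) / 2 < xf) :
    1 < |deriv (fun x : ℝ => x ^ 2 * Real.exp (r - x) + k) xf| ∧
    1 < (xf - k) * (xf - 2) / xf := by
  set s := Real.sqrt ((k - 1) ^ 2 + 8) with hs
  have hs0 : 0 ≤ s := Real.sqrt_nonneg _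
  have hssq : s ^ 2 = (k - 1) ^ 2 + 8 := Real.sq_sqrt (by positivity)
  have hs2 : 2 < s := by nlinarith [hssq, hs0]
  have hx2 : 2 < xf := by nlinarith
  have hx0 : 0 < xf := by linarith
  have hxk : k < xf := by linarith
  -- key quadratic inequality
  have hquad : xf < (xf - k) * (xf - 2) := by nlinarith [hssq, hs0]
  have h2 : 1 < (xf - k) * (xf - 2) / xf := by
    rw [lt_div_iff₀ hx0]; linarith
  refine ⟨?_, h2⟩
  -- compute the derivative
  have hder : HasDerivAt (fun x : ℝ => x ^ 2 * Real.exp (r - x) + k)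
      (2 * xf * Real.exp (r - xf) + xf ^ 2 * (Real.exp (r - xf) * (-1))) xf := by
    have h1 : HasDerivAt (fun x : ℝ => x ^ 2) (2 * xf) xf := by
      simpa using (hasDerivAt_pow 2 xf)
    have h3 : HasDerivAt (fun x : ℝ => Real.exp (r - x)) (Real.exp (r - xf) * (-1)) xf := by
      have : HasDerivAt (fun x : ℝ => r - x) (-1) xf := by
        simpa using (hasDerivAt_id xf).const_sub r
      exact (Real.hasDerivAt_exp (r - xf)).comp xf this
    simpa using (h1.mul h3).add_const k
  have hE : xf ^ 2 * Real.exp (r - xf) = xf - k := by linarith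
  have hEx : Real.exp (r - xf) = (xf - k) / xf ^ 2 := by
    field_simp at hE ⊢; linarith [hE]
  rw [hder.deriv]
  have hval : 2 * xf * Real.exp (r - xf) + xf ^ 2 * (Real.exp (r - xf) * (-1))
      = -((xf - k) * (xf - 2) / xf) := by
    rw [hEx]; field_simp; ring
  rw [hval, abs_neg,
    abs_of_pos (div_pos (mul_pos (by linarith) (by linarith)) hx0)]
  exact h2
end

section
/- Fix 0 ≤ k < 2 and let r₁ < r₂. If x₁ > 2 is a fixed point of the Chialvo map f_{r₁,k} and x₂ > 2 is a fixed point of f_{r₂,k}, then x₁ < x₂; i.e., the fixed point located to the right of the critical point c = 2 moves strictly to the right as r increases. Equivalently: the function x ↦ (1/x − k/x²)·exp(x) is strictly increasing on (2, ∞), and a point x > 2 is a fixed point of f_{r,k} exactly when exp(r) = (1/x − k/x²)·exp(x). -/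
private lemma chialvo_mono (k : ℝ) (hk0 : 0 ≤ k) (hk2 : k < 2) :
    StrictMonoOn (fun x : ℝ => (1 / x - k / x ^ 2) * Real.exp x) (Set.Ioi 2) := by
  have hderiv : ∀ x : ℝ, 2 < x →
      HasDerivAt (fun x : ℝ => (1 / x - k / x ^ 2) * Real.exp x)
        ((-(x ^ 2)⁻¹ - k * (-(2 * x) / (x ^ 2) ^ 2)) * Real.exp x
          + (1 / x - k / x ^ 2) * Real.exp x) x := by
    intro x hx
    have hx0 : x ≠ 0 := by positivity
    have h1 : HasDerivAt (fun x : ℝ => 1 / x) (-(x ^ 2)⁻¹) x := by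
      simpa [one_div] using hasDerivAt_inv hx0
    have h2 : HasDerivAt (fun x : ℝ => k / x ^ 2) (k * (-(2 * x) / (x ^ 2) ^ 2)) x := by
      have hp : HasDerivAt (fun x : ℝ => x ^ 2) (2 * x) x := by
        simpa using hasDerivAt_pow 2 x
      have := (hp.inv (pow_ne_zero 2 hx0)).const_mul k
      simpa [div_eq_mul_inv, mul_comm, neg_div] using this
    exact (h1.sub h2).mul (Real.hasDerivAt_exp x)
  apply strictMonoOn_of_deriv_pos (convex_Ioi 2)
  · apply ContinuousOn.mul
    · apply ContinuousOn.sub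
      · exact continuousOn_const.div continuousOn_id (fun x hx => by
          have : (2:ℝ) < x := hx; positivity)
      · exact continuousOn_const.div (continuousOn_pow 2) (fun x hx => by
          have : (2:ℝ) < x := hx; positivity)
    · exact Real.continuous_exp.continuousOn
  · intro x hx
    rw [interior_Ioi] at hx
    have hx2 : (2:ℝ) < x := hx
    rw [(hderiv x hx2).deriv]
    have hx0 : (0:ℝ) < x := by linarith
    have hex : 0 < Real.exp x := Real.exp_pos x
    have key : (-(x ^ 2)⁻¹ - k * (-(2 * x) / (x ^ 2) ^ 2)) + (1 / x - k / x ^ 2)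
        = ((x - 2) * (x - k) + x) / x ^ 3 := by
      field_simp
      ring
    have hpos : 0 < (-(x ^ 2)⁻¹ - k * (-(2 * x) / (x ^ 2) ^ 2)) + (1 / x - k / x ^ 2) := by
      rw [key]
      have h1 : 0 < (x - 2) * (x - k) + x := by nlinarith
      positivity
    nlinarith [mul_pos hpos hex]

private lemma chialvo_iff (k : ℝ) (hk0 : 0 ≤ k) (hk2 : k < 2) (r x : ℝ) (hx : 2 < x) :
    x ^ 2 * Real.exp (r - x) + k = x ↔
      Real.exp r = (1 / x - k / x ^ 2) * Real.exp x := by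
  have hx0 : (0:ℝ) < x := by linarith
  have hx2 : (0:ℝ) < x ^ 2 := by positivity
  have hexp : Real.exp (r - x) = Real.exp r / Real.exp x := by
    rw [Real.exp_sub]
  have hepos : 0 < Real.exp x := Real.exp_pos x
  rw [hexp]
  constructor
  · intro h
    field_simp at h ⊢
    nlinarith [h]
  · intro h
    field_simp at h ⊢
    nlinarith [h]

/-- Monotone motion of the right fixed point of the 1D Chialvo map. Fix `0 ≤ k < 2`.
If `r₁ < r₂`, `x₁ > 2` is a fixed point of `f_{r₁,k}` and `x₂ > 2` is a fixed point
of `f_{r₂,k}`, then `x₁ < x₂`. Equivalently: `x ↦ (1/x − k/x²) exp(x)` is strictly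
increasing on `(2, ∞)`, and `x > 2` is a fixed point of `f_{r,k}` exactly when
`exp(r) = (1/x − k/x²) exp(x)`. -/
theorem chialvo_fixed_point_moves_right (k : ℝ) (hk0 : 0 ≤ k) (hk2 : k < 2) :
    (∀ r₁ r₂ x₁ x₂ : ℝ, r₁ < r₂ → 2 < x₁ → 2 < x₂ →
      x₁ ^ 2 * Real.exp (r₁ - x₁) + k = x₁ →
      x₂ ^ 2 * Real.exp (r₂ - x₂) + k = x₂ → x₁ < x₂) ∧
    StrictMonoOn (fun x : ℝ => (1 / x - k / x ^ 2) * Real.exp x) (Set.Ioi 2) ∧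
    (∀ r x : ℝ, 2 < x →
      (x ^ 2 * Real.exp (r - x) + k = x ↔
        Real.exp r = (1 / x - k / x ^ 2) * Real.exp x)) := by
  refine ⟨?_, chialvo_mono k hk0 hk2, fun r x hx => chialvo_iff k hk0 hk2 r x hx⟩
  intro r₁ r₂ x₁ x₂ hr hx₁ hx₂ h₁ h₂
  have e₁ := (chialvo_iff k hk0 hk2 r₁ x₁ hx₁).mp h₁
  have e₂ := (chialvo_iff k hk0 hk2 r₂ x₂ hx₂).mp h₂
  have hlt : (1 / x₁ - k / x₁ ^ 2) * Real.exp x₁ < (1 / x₂ - k / x₂ ^ 2) * Real.exp x₂ := by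
    rw [← e₁, ← e₂]; exact Real.exp_lt_exp.mpr hr
  by_contra hle
  push_neg at hle
  rcases eq_or_lt_of_le hle with heq | hlt2
  · rw [heq] at hlt; exact lt_irrefl _ hlt
  · exact absurd hlt (not_lt.mpr (le_of_lt (chialvo_mono k hk0 hk2 hx₂ hx₁ hlt2)))
end

section
/- For every k with 0 ≤ k < 2 there exists r* = r*(k) ∈ ℝ such that for all r ≥ r* the one-dimensional Chialvo map f_{r,k}(x) = x²·exp(r − x) + k possesses a fixed point x_f > 2 which is unstable, i.e. f_{r,k}(x_f) = x_f and |f'_{r,k}(x_f)| > 1. -/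
open Real

lemma chialvo_deriv (r k x : ℝ) :
    deriv (fun x : ℝ => x ^ 2 * Real.exp (r - x) + k) x
      = x * (2 - x) * Real.exp (r - x) := by
  have h1 : HasDerivAt (fun x : ℝ => r - x) (-1) x := by
    exact (hasDerivAt_id' x).const_sub r
  have h2 : HasDerivAt (fun x : ℝ => Real.exp (r - x)) (Real.exp (r - x) * (-1)) x :=
    (Real.hasDerivAt_exp (r - x)).comp x h1
  have h3 : HasDerivAt (fun x : ℝ => x ^ 2) (2 * x) x := by
    simpa using hasDerivAt_pow 2 x
  have h4 : HasDerivAt (fun x : ℝ => x ^ 2 * Real.exp (r - x) + k)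
      (2 * x * Real.exp (r - x) + x ^ 2 * (Real.exp (r - x) * (-1))) x :=
    (h3.mul h2).add_const k
  rw [h4.deriv]; ring

/-- For every `0 ≤ k < 2` there exists `r*` such that for all `r ≥ r*` the 1D
Chialvo map `f_{r,k}(x) = x² exp(r − x) + k` has an unstable fixed point `x_f > 2`:
`f_{r,k}(x_f) = x_f` and `|f'_{r,k}(x_f)| > 1`. -/
theorem chialvo_unstable_fixed_point_exists (k : ℝ) (hk0 : 0 ≤ k) (hk2 : k < 2) :
    ∃ rstar : ℝ, ∀ r : ℝ, rstar ≤ r →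
      ∃ xf : ℝ, 2 < xf ∧ xf ^ 2 * Real.exp (r - xf) + k = xf ∧
        1 < |deriv (fun x : ℝ => x ^ 2 * Real.exp (r - x) + k) xf| := by
  refine ⟨7, fun r hr => ?_⟩
  set g : ℝ → ℝ := fun x => x ^ 2 * Real.exp (r - x) + k - x with hg
  have hcont : ContinuousOn g (Set.Icc 5 (3 * r)) := by fun_prop
  have he : (2.7 : ℝ) < Real.exp 1 := by
    have := Real.exp_one_gt_d9; linarith
  -- g 5 > 0
  have hg5 : 0 < g 5 := by
    have h1 : (1 : ℝ) ≤ Real.exp (r - 5) := by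
      rw [Real.one_le_exp_iff]; linarith
    have : (25 : ℝ) ≤ 25 * Real.exp (r - 5) := by nlinarith
    simp only [hg]; nlinarith
  -- g (3r) < 0
  have hg3r : g (3 * r) < 0 := by
    have h1 : r - 1 ≤ Real.exp (r - 2) := by
      have := Real.add_one_le_exp (r - 2); linarith
    have he2 : (7 : ℝ) < Real.exp 1 * Real.exp 1 := by nlinarith
    have h3 : 3 * r < Real.exp r := by
      have : Real.exp r = Real.exp (r - 2) * (Real.exp 1 * Real.exp 1) := by
        rw [← Real.exp_add, ← Real.exp_add]; ring_nf
      have hrp : (0 : ℝ) < r - 1 := by linarith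
      nlinarith [Real.exp_pos (r - 2)]
    have h4 : (3 * r) ^ 2 * Real.exp (r - 3 * r) < 1 := by
      have hE : Real.exp (r - 3 * r) = (Real.exp r * Real.exp r)⁻¹ := by
        rw [← Real.exp_add, ← Real.exp_neg]; ring_nf
      have hp : (0:ℝ) < Real.exp r * Real.exp r := by positivity
      have h5 : (3 * r) ^ 2 < Real.exp r * Real.exp r := by nlinarith
      calc (3 * r) ^ 2 * Real.exp (r - 3 * r)
          = (3 * r) ^ 2 * (Real.exp r * Real.exp r)⁻¹ := by rw [hE]
        _ < (Real.exp r * Real.exp r) * (Real.exp r * Real.exp r)⁻¹ :=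
            mul_lt_mul_of_pos_right h5 (by positivity)
        _ = 1 := mul_inv_cancel₀ (ne_of_gt hp)
    simp only [hg]; nlinarith
  -- IVT
  have hle : (5 : ℝ) ≤ 3 * r := by linarith
  have := intermediate_value_Icc' hle hcont
  have h0 : (0 : ℝ) ∈ Set.Icc (g (3 * r)) (g 5) := ⟨le_of_lt hg3r, le_of_lt hg5⟩
  obtain ⟨xf, hxf_mem, hxf0⟩ := this h0
  obtain ⟨hxf5, _⟩ := hxf_mem
  have hxf2 : 2 < xf := by linarith
  have hfix : xf ^ 2 * Real.exp (r - xf) + k = xf := by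
    simp only [hg] at hxf0; linarith
  refine ⟨xf, hxf2, hfix, ?_⟩
  rw [chialvo_deriv]
  have hE : 0 < Real.exp (r - xf) := Real.exp_pos _
  have habs : |xf * (2 - xf) * Real.exp (r - xf)|
      = xf * (xf - 2) * Real.exp (r - xf) := by
    rw [abs_of_nonpos (by nlinarith)]; ring
  rw [habs]
  -- xf^2 * E = xf - k, want xf*(xf-2)*E > 1, i.e. (xf-2)*(xf-k) > xf
  nlinarith [hE, hfix, hxf5, hk0, hk2]
end

section
/- There exists a parameter value r* ∈ (2.43, 2.44) such that for the Chialvo map f_{r*}(x) = x²·exp(r* − x) (i.e. k = 0) the third iterate of the critical point c = 2 is an unstable fixed point: setting p = f_{r*}³(2), one has f_{r*}(p) = p and p > 3 (so that |f'_{r*}(p)| = p − 2 > 1). In particular, f_{r*} is a Misiurewicz map: the critical orbit lands on an unstable fixed point in finitely many steps. -/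
open Real

lemma expLB7 {x : ℝ} (hx : 0 ≤ x) :
    1 + x + x^2/2 + x^3/6 + x^4/24 + x^5/120 + x^6/720 ≤ Real.exp x := by
  have h := Real.sum_le_exp_of_nonneg hx 7
  simp [Finset.sum_range_succ, Nat.factorial] at h
  linarith

lemma expUB7 {x : ℝ} (hx : 0 ≤ x) (hx1 : x ≤ 1) :
    Real.exp x ≤ 1 + x + x^2/2 + x^3/6 + x^4/24 + x^5/120 + x^6/720 + x^7/4410 := by
  have h := Real.exp_bound' hx hx1 (n := 7) (by norm_num)
  simp [Finset.sum_range_succ, Nat.factorial] at h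
  convert h using 1; ring

lemma exp_pow_eq (n : ℕ) : Real.exp 1 ^ n = Real.exp n := by
  rw [← Real.exp_nat_mul, mul_one]

lemma exp_shift_neg (t : ℝ) (n : ℕ) : Real.exp t = Real.exp (t + n) / Real.exp 1 ^ n := by
  rw [exp_pow_eq, ← Real.exp_sub, add_sub_cancel_right]

lemma exp_shift_pos (t : ℝ) (n : ℕ) : Real.exp t = Real.exp (t - n) * Real.exp 1 ^ n := by
  rw [exp_pow_eq, ← Real.exp_add, sub_add_cancel]

lemma exp_lb01 {t l s : ℝ} (hs : t = s) (h0 : 0 ≤ s)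
    (h : l ≤ 1 + s + s^2/2 + s^3/6 + s^4/24 + s^5/120 + s^6/720) : l ≤ Real.exp t := by
  rw [hs]; exact h.trans (expLB7 h0)

lemma exp_ub01 {t u s : ℝ} (hs : t = s) (h0 : 0 ≤ s) (h1 : s ≤ 1)
    (h : 1 + s + s^2/2 + s^3/6 + s^4/24 + s^5/120 + s^6/720 + s^7/4410 ≤ u) :
    Real.exp t ≤ u := by
  rw [hs]; exact (expUB7 h0 h1).trans h

lemma exp_lb_neg {t l A B : ℝ} (n : ℕ) {s : ℝ} (hs : t + (n:ℕ) = s) (hA : A ≤ Real.exp s)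
    (hB : Real.exp 1 ^ n ≤ B) (hl : 0 ≤ l) (h : l * B ≤ A) : l ≤ Real.exp t := by
  rw [exp_shift_neg t n, le_div_iff₀ (by positivity)]
  calc l * Real.exp 1 ^ n ≤ l * B := by nlinarith [pow_pos (Real.exp_pos 1) n]
    _ ≤ A := h
    _ ≤ _ := by rw [hs]; exact hA

lemma exp_ub_neg {t u A B : ℝ} (n : ℕ) {s : ℝ} (hs : t + (n:ℕ) = s) (hA : Real.exp s ≤ A)
    (hB : B ≤ Real.exp 1 ^ n) (hB0 : 0 < B) (h : A ≤ u * B) : Real.exp t ≤ u := by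
  rw [exp_shift_neg t n, div_le_iff₀ (by positivity)]
  have hu : 0 ≤ u := by nlinarith [(Real.exp_pos s).le]
  calc Real.exp (t + n) = Real.exp s := by rw [hs]
    _ ≤ A := hA
    _ ≤ u * B := h
    _ ≤ u * Real.exp 1 ^ n := by nlinarith

lemma exp_lb_pos {t l A B : ℝ} (n : ℕ) {s : ℝ} (hs : t - (n:ℕ) = s) (hA : A ≤ Real.exp s)
    (hB : B ≤ Real.exp 1 ^ n) (hA0 : 0 ≤ A) (hB0 : 0 ≤ B) (h : l ≤ A * B) :
    l ≤ Real.exp t := by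
  rw [exp_shift_pos t n, hs]
  exact h.trans (mul_le_mul hA hB hB0 (Real.exp_pos _).le)

lemma exp_ub_pos {t u A B : ℝ} (n : ℕ) {s : ℝ} (hs : t - (n:ℕ) = s) (hA : Real.exp s ≤ A)
    (hB : Real.exp 1 ^ n ≤ B) (h : A * B ≤ u) : Real.exp t ≤ u := by
  rw [exp_shift_pos t n, hs]
  have h1 := (Real.exp_pos s).le
  have h2 := (pow_pos (Real.exp_pos 1) n).le
  nlinarith

noncomputable def Fc (r x : ℝ) : ℝ := x ^ 2 * Real.exp (r - x)

lemma step {r x a b L U rlo rhi : ℝ} (hr1 : rlo ≤ r) (hr2 : r ≤ rhi)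
    (ha : 0 ≤ a) (hax : a ≤ x) (hxb : x ≤ b) (hL0 : 0 ≤ L)
    (hL : L ≤ Real.exp (rlo - b)) (hU : Real.exp (rhi - a) ≤ U) :
    a ^ 2 * L ≤ Fc r x ∧ Fc r x ≤ b ^ 2 * U := by
  have e1 : Real.exp (rlo - b) ≤ Real.exp (r - x) := Real.exp_le_exp.2 (by linarith)
  have e2 : Real.exp (r - x) ≤ Real.exp (rhi - a) := Real.exp_le_exp.2 (by linarith)
  have hp := (Real.exp_pos (r - x)).le
  constructor
  · unfold Fc; exact mul_le_mul (by nlinarith) (hL.trans e1) hL0 (by positivity)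
  · unfold Fc; exact mul_le_mul (by nlinarith) (e2.trans hU) hp (by positivity)

lemma chain243 : Fc 2.43 (Fc 2.43 (Fc 2.43 (Fc 2.43 2))) < Fc 2.43 (Fc 2.43 (Fc 2.43 2)) := by
  have hs1 := step (r := (2.43:ℝ)) (rlo := (2.43:ℝ)) (rhi := (2.43:ℝ)) (x := (2:ℝ)) (a := (2 : ℝ)) (b := (2 : ℝ)) (by norm_num) (by norm_num) (by norm_num) le_rfl le_rfl (by norm_num) (exp_lb01 (s := (43/100 : ℝ)) (by norm_num) (by norm_num) (by norm_num) : (1106825006728849/720000000000000 : ℝ) ≤ Real.exp ((2.43:ℝ) - (2 : ℝ))) (exp_ub01 (s := (43/100 : ℝ)) (by norm_num) (by norm_num) (by norm_num) (by norm_num) : Real.exp ((2.43:ℝ) - (2 : ℝ)) ≤ (150651241875562471/98000000000000000 : ℝ))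
  have ha1 : (6149027/1000000 : ℝ) ≤ Fc (2.43:ℝ) (2:ℝ) := le_trans (by norm_num) hs1.1
  have hb1 : Fc (2.43:ℝ) (2:ℝ) ≤ (6149031/1000000 : ℝ) := le_trans hs1.2 (by norm_num)
  have hs2 := step (r := (2.43:ℝ)) (rlo := (2.43:ℝ)) (rhi := (2.43:ℝ)) (x := (Fc (2.43:ℝ) (2:ℝ))) (a := (6149027/1000000 : ℝ)) (b := (6149031/1000000 : ℝ)) (by norm_num) (by norm_num) (by norm_num) ha1 hb1 (by norm_num) (exp_lb_neg 4 (by norm_num : ((2.43:ℝ) - (6149031/1000000 : ℝ)) + (4:ℕ) = (280969/1000000 : ℝ)) (exp_lb01 (s := (280969/1000000 : ℝ)) (by norm_num) (by norm_num) (by norm_num) : (953577013023880364386526090492447917681/720000000000000000000000000000000000000 : ℝ) ≤ Real.exp ((280969/1000000 : ℝ))) (le_trans (pow_le_pow_left₀ (Real.exp_pos 1).le Real.exp_one_lt_d9.le 4) (by norm_num) : Real.exp 1 ^ 4 ≤ (34123843777793029748544875305108782813601/625000000000000000000000000000000000000 : ℝ)) (by norm_num) (by norm_num) : (119197126627985045548315761311555989710125/4913833504002196283790462043935664725158544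 : ℝ) ≤ Real.exp ((2.43:ℝ) - (6149031/1000000 : ℝ))) (exp_ub_neg 4 (by norm_num : ((2.43:ℝ) - (6149027/1000000 : ℝ)) + (4:ℕ) = (280973/1000000 : ℝ)) (exp_ub01 (s := (280973/1000000 : ℝ)) (by norm_num) (by norm_num) (by norm_num) (by norm_num) : Real.exp ((280973/1000000 : ℝ)) ≤ (119197606238543118907502713787732186443257853/90000000000000000000000000000000000000000000 : ℝ)) (le_trans (by norm_num) (pow_le_pow_left₀ (by norm_num) Real.exp_one_gt_d9.le 4) : (545981500203662032900872079044043258111921/10000000000000000000000000000000000000000 : ℝ) ≤ Real.exp 1 ^ 4) (by norm_num) (by norm_num) : Real.exp ((2.43:ℝ) - (6149027/1000000 : ℝ)) ≤ (119197606238543118907502713787732186443257853/4913833501832958296107848711396389323007289000 : ℝ))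
  have ha2 : (917187/1000000 : ℝ) ≤ Fc (2.43:ℝ) (Fc (2.43:ℝ) (2:ℝ)) := le_trans (by norm_num) hs2.1
  have hb2 : Fc (2.43:ℝ) (Fc (2.43:ℝ) (2:ℝ)) ≤ (917193/1000000 : ℝ) := le_trans hs2.2 (by norm_num)
  have hs3 := step (r := (2.43:ℝ)) (rlo := (2.43:ℝ)) (rhi := (2.43:ℝ)) (x := (Fc (2.43:ℝ) (Fc (2.43:ℝ) (2:ℝ)))) (a := (917187/1000000 : ℝ)) (b := (917193/1000000 : ℝ)) (by norm_num) (by norm_num) (by norm_num) ha2 hb2 (by norm_num) (exp_lb_pos 1 (by norm_num : ((2.43:ℝ) - (917193/1000000 : ℝ)) - (1:ℕ) = (512807/1000000 : ℝ)) (exp_lb01 (s := (512807/1000000 : ℝ)) (by norm_num) (by norm_num) (by norm_num) : (1202378585792589584736374109617971495249/720000000000000000000000000000000000000 : ℝ) ≤ Real.exp ((512807/1000000 : ℝ))) (le_trans (by norm_num) (pow_le_pow_left₀ (by norm_num) Real.exp_one_gt_d9.le 1) : (27182818283/10000000000 : ℝ) ≤ Real.exp 1 ^ 1) (by norm_num)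 (by norm_num) (by norm_num) : (32684038604970488209887287882051241706427364837467/7200000000000000000000000000000000000000000000000 : ℝ) ≤ Real.exp ((2.43:ℝ) - (917193/1000000 : ℝ))) (exp_ub_pos 1 (by norm_num : ((2.43:ℝ) - (917187/1000000 : ℝ)) - (1:ℕ) = (512813/1000000 : ℝ)) (exp_ub01 (s := (512813/1000000 : ℝ)) (by norm_num) (by norm_num) (by norm_num) (by norm_num) : Real.exp ((512813/1000000 : ℝ)) ≤ (150298415331398083352558176799929738943856733/90000000000000000000000000000000000000000000 : ℝ)) (le_trans (pow_le_pow_left₀ (Real.exp_pos 1).le Real.exp_one_lt_d9.le 1) (by norm_num) : Real.exp 1 ^ 1 ≤ (13591409143/5000000000 : ℝ)) (by norm_num) : Real.exp ((2.43:ℝ) - (917187/1000000 : ℝ)) ≤ (2042767256313575285050635296597975535639137564578309819/450000000000000000000000000000000000000000000000000000 : ℝ))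
  have ha3 : (381873/100000 : ℝ) ≤ Fc (2.43:ℝ) (Fc (2.43:ℝ) (Fc (2.43:ℝ) (2:ℝ))) := le_trans (by norm_num) hs3.1
  have hb3 : Fc (2.43:ℝ) (Fc (2.43:ℝ) (Fc (2.43:ℝ) (2:ℝ))) ≤ (3818809/1000000 : ℝ) := le_trans hs3.2 (by norm_num)
  have hs4 := step (r := (2.43:ℝ)) (rlo := (2.43:ℝ)) (rhi := (2.43:ℝ)) (x := (Fc (2.43:ℝ) (Fc (2.43:ℝ) (Fc (2.43:ℝ) (2:ℝ))))) (a := (381873/100000 : ℝ)) (b := (3818809/1000000 : ℝ)) (by norm_num) (by norm_num) (by norm_num) ha3 hb3 (by norm_num) (exp_lb_neg 2 (by norm_num : ((2.43:ℝ) - (3818809/1000000 : ℝ)) + (2:ℕ) = (611191/1000000 : ℝ)) (exp_lb01 (s := (611191/1000000 : ℝ)) (by norm_num) (by norm_num) (by norm_num) : (1326684829837588210639844622501699638641/720000000000000000000000000000000000000 : ℝ) ≤ Real.exp ((611191/1000000 : ℝ))) (le_trans (pow_le_pow_left₀ (Real.exp_pos 1).le Real.exp_one_lt_d9.le 2) (by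 norm_num) : Real.exp 1 ^ 2 ≤ (184726402492423994449/25000000000000000000 : ℝ)) (by norm_num) (by norm_num) : (1326684829837588210639844622501699638641/5320120391781811040131200000000000000000 : ℝ) ≤ Real.exp ((2.43:ℝ) - (3818809/1000000 : ℝ))) (exp_ub_neg 2 (by norm_num : ((2.43:ℝ) - (381873/100000 : ℝ)) + (2:ℕ) = (61127/100000 : ℝ)) (exp_ub01 (s := (61127/100000 : ℝ)) (by norm_num) (by norm_num) (by norm_num) (by norm_num) : Real.exp ((61127/100000 : ℝ)) ≤ (812661842081643077116552503412291381003/441000000000000000000000000000000000000 : ℝ)) (le_trans (by norm_num) (pow_le_pow_left₀ (by norm_num) Real.exp_one_gt_d9.le 2) : (738905609806599068089/100000000000000000000 : ℝ) ≤ Real.exp 1 ^ 2) (by norm_num) (by norm_num) : Real.exp ((2.43:ℝ) - (381873/100000 : ℝ)) ≤ (812661842081643077116552503412291381003/3258573739247101890272490000000000000000 : ℝ))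
  have ha4 : (727301/200000 : ℝ) ≤ Fc (2.43:ℝ) (Fc (2.43:ℝ) (Fc (2.43:ℝ) (Fc (2.43:ℝ) (2:ℝ)))) := le_trans (by norm_num) hs4.1
  have hb4 : Fc (2.43:ℝ) (Fc (2.43:ℝ) (Fc (2.43:ℝ) (Fc (2.43:ℝ) (2:ℝ)))) ≤ (1818479/500000 : ℝ) := le_trans hs4.2 (by norm_num)
  linarith

lemma chain244 : Fc 2.44 (Fc 2.44 (Fc 2.44 (Fc 2.44 2))) > Fc 2.44 (Fc 2.44 (Fc 2.44 2)) := by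
  have hs1 := step (r := (2.44:ℝ)) (rlo := (2.44:ℝ)) (rhi := (2.44:ℝ)) (x := (2:ℝ)) (a := (2 : ℝ)) (b := (2 : ℝ)) (by norm_num) (by norm_num) (by norm_num) le_rfl le_rfl (by norm_num) (exp_lb01 (s := (11/25 : ℝ)) (by norm_num) (by norm_num) (by norm_num) : (272936697961/175781250000 : ℝ) ≤ Real.exp ((2.44:ℝ) - (2 : ℝ))) (exp_ub01 (s := (11/25 : ℝ)) (by norm_num) (by norm_num) (by norm_num) (by norm_num) : Real.exp ((2.44:ℝ) - (2 : ℝ)) ≤ (334347610899593/215332031250000 : ℝ))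
  have ha1 : (3105413/500000 : ℝ) ≤ Fc (2.44:ℝ) (2:ℝ) := le_trans (by norm_num) hs1.1
  have hb1 : Fc (2.44:ℝ) (2:ℝ) ≤ (621083/100000 : ℝ) := le_trans hs1.2 (by norm_num)
  have hs2 := step (r := (2.44:ℝ)) (rlo := (2.44:ℝ)) (rhi := (2.44:ℝ)) (x := (Fc (2.44:ℝ) (2:ℝ))) (a := (3105413/500000 : ℝ)) (b := (621083/100000 : ℝ)) (by norm_num) (by norm_num) (by norm_num) ha1 hb1 (by norm_num) (exp_lb_neg 4 (by norm_num : ((2.44:ℝ) - (621083/100000 : ℝ)) + (4:ℕ) = (22917/100000 : ℝ)) (exp_lb01 (s := (22917/100000 : ℝ)) (by norm_num) (by norm_num) (by norm_num) : (100604463883655918638217897871041/80000000000000000000000000000000 : ℝ) ≤ Real.exp ((22917/100000 : ℝ))) (le_trans (pow_le_pow_left₀ (Real.exp_pos 1).le Real.exp_one_lt_d9.le 4) (by norm_num) : Real.exp 1 ^ 4 ≤ (34123843777793029748544875305108782813601/625000000000000000000000000000000000000 : ℝ)) (by norm_num) (by norm_num) : (7210755725606072150101626854289062500/313062786952229630720595186285401677189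 : ℝ) ≤ Real.exp ((2.44:ℝ) - (621083/100000 : ℝ))) (exp_ub_neg 4 (by norm_num : ((2.44:ℝ) - (3105413/500000 : ℝ)) + (4:ℕ) = (114587/500000 : ℝ)) (exp_ub01 (s := (114587/500000 : ℝ)) (by norm_num) (by norm_num) (by norm_num) (by norm_num) : Real.exp ((114587/500000 : ℝ)) ≤ (4814100076487078179125005710421450833057087/3828125000000000000000000000000000000000000 : ℝ)) (le_trans (by norm_num) (pow_le_pow_left₀ (by norm_num) Real.exp_one_gt_d9.le 4) : (545981500203662032900872079044043258111921/10000000000000000000000000000000000000000 : ℝ) ≤ Real.exp 1 ^ 4) (by norm_num) (by norm_num) : Real.exp ((2.44:ℝ) - (3105413/500000 : ℝ)) ≤ (77025601223793250866000091366743213328913392/3344136688747429951517841484144764955935516125 : ℝ))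
  have ha2 : (5553/6250 : ℝ) ≤ Fc (2.44:ℝ) (Fc (2.44:ℝ) (2:ℝ)) := le_trans (by norm_num) hs2.1
  have hb2 : Fc (2.44:ℝ) (Fc (2.44:ℝ) (2:ℝ)) ≤ (444243/500000 : ℝ) := le_trans hs2.2 (by norm_num)
  have hs3 := step (r := (2.44:ℝ)) (rlo := (2.44:ℝ)) (rhi := (2.44:ℝ)) (x := (Fc (2.44:ℝ) (Fc (2.44:ℝ) (2:ℝ)))) (a := (5553/6250 : ℝ)) (b := (444243/500000 : ℝ)) (by norm_num) (by norm_num) (by norm_num) ha2 hb2 (by norm_num) (exp_lb_pos 1 (by norm_num : ((2.44:ℝ) - (444243/500000 : ℝ)) - (1:ℕ) = (275757/500000 : ℝ)) (exp_lb01 (s := (275757/500000 : ℝ)) (by norm_num) (by norm_num) (by norm_num) : (2169844806209829700362290787133942961/1250000000000000000000000000000000000 : ℝ) ≤ Real.exp ((275757/500000 : ℝ))) (le_trans (by norm_num) (pow_le_pow_left₀ (by norm_num) Real.exp_one_gt_d9.le 1) : (27182818283/10000000000 : ℝ) ≤ Real.exp 1 ^ 1) (by norm_num) (by norm_num) (by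 norm_num) : (58982497069513150713324489732267005890149955963/12500000000000000000000000000000000000000000000 : ℝ) ≤ Real.exp ((2.44:ℝ) - (444243/500000 : ℝ))) (exp_ub_pos 1 (by norm_num : ((2.44:ℝ) - (5553/6250 : ℝ)) - (1:ℕ) = (3447/6250 : ℝ)) (exp_ub01 (s := (3447/6250 : ℝ)) (by norm_num) (by norm_num) (by norm_num) (by norm_num) : Real.exp ((3447/6250 : ℝ)) ≤ (1267471897604433516542876919253/730156898498535156250000000000 : ℝ)) (le_trans (pow_le_pow_left₀ (Real.exp_pos 1).le Real.exp_one_lt_d9.le 1) (by norm_num) : Real.exp 1 ^ 1 ≤ (13591409143/5000000000 : ℝ)) (by norm_num) : Real.exp ((2.44:ℝ) - (5553/6250 : ℝ)) ≤ (17226729137596457494076499111858896930179/3650784492492675781250000000000000000000 : ℝ))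
  have ha3 : (3724847/1000000 : ℝ) ≤ Fc (2.44:ℝ) (Fc (2.44:ℝ) (Fc (2.44:ℝ) (2:ℝ))) := le_trans (by norm_num) hs3.1
  have hb3 : Fc (2.44:ℝ) (Fc (2.44:ℝ) (Fc (2.44:ℝ) (2:ℝ))) ≤ (58202/15625 : ℝ) := le_trans hs3.2 (by norm_num)
  have hs4 := step (r := (2.44:ℝ)) (rlo := (2.44:ℝ)) (rhi := (2.44:ℝ)) (x := (Fc (2.44:ℝ) (Fc (2.44:ℝ) (Fc (2.44:ℝ) (2:ℝ))))) (a := (3724847/1000000 : ℝ)) (b := (58202/15625 : ℝ)) (by norm_num) (by norm_num) (by norm_num) ha3 hb3 (by norm_num) (exp_lb_neg 2 (by norm_num : ((2.44:ℝ) - (58202/15625 : ℝ)) + (2:ℕ) = (11173/15625 : ℝ)) (exp_lb01 (s := (11173/15625 : ℝ)) (by norm_num) (by norm_num) (by norm_num) : (21419042659229116923660657589/10477378964424133300781250000 : ℝ) ≤ Real.exp ((11173/15625 : ℝ))) (le_trans (pow_le_pow_left₀ (Real.exp_pos 1).le Real.exp_one_lt_d9.le 2) (by norm_num) : Real.exp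 1 ^ 2 ≤ (184726402492423994449/25000000000000000000 : ℝ)) (by norm_num) (by norm_num) : (350929594928809851677256213938176/1268415544457867393524932861328125 : ℝ) ≤ Real.exp ((2.44:ℝ) - (58202/15625 : ℝ))) (exp_ub_neg 2 (by norm_num : ((2.44:ℝ) - (3724847/1000000 : ℝ)) + (2:ℕ) = (715153/1000000 : ℝ)) (exp_ub01 (s := (715153/1000000 : ℝ)) (by norm_num) (by norm_num) (by norm_num) (by norm_num) : Real.exp ((715153/1000000 : ℝ)) ≤ (3005415494622808342871261825982769824815743379/1470000000000000000000000000000000000000000000 : ℝ)) (le_trans (by norm_num) (pow_le_pow_left₀ (by norm_num) Real.exp_one_gt_d9.le 2) : (738905609806599068089/100000000000000000000 : ℝ) ≤ Real.exp 1 ^ 2) (by norm_num) (by norm_num) : Real.exp ((2.44:ℝ) - (3724847/1000000 : ℝ)) ≤ (3005415494622808342871261825982769824815743379/10861912464157006300908300000000000000000000000 : ℝ))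
  have ha4 : (3838621/1000000 : ℝ) ≤ Fc (2.44:ℝ) (Fc (2.44:ℝ) (Fc (2.44:ℝ) (Fc (2.44:ℝ) (2:ℝ)))) := le_trans (by norm_num) hs4.1
  have hb4 : Fc (2.44:ℝ) (Fc (2.44:ℝ) (Fc (2.44:ℝ) (Fc (2.44:ℝ) (2:ℝ)))) ≤ (3839141/1000000 : ℝ) := le_trans hs4.2 (by norm_num)
  linarith

lemma chain_mid {r : ℝ} (hr1 : (2.43:ℝ) ≤ r) (hr2 : r ≤ (2.44:ℝ)) : 3 < Fc r (Fc r (Fc r 2)) := by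
  have hs1 := step (r := r) (rlo := (2.43:ℝ)) (rhi := (2.44:ℝ)) (x := (2:ℝ)) (a := (2 : ℝ)) (b := (2 : ℝ)) hr1 hr2 (by norm_num) le_rfl le_rfl (by norm_num) (exp_lb01 (s := (43/100 : ℝ)) (by norm_num) (by norm_num) (by norm_num) : (1106825006728849/720000000000000 : ℝ) ≤ Real.exp ((2.43:ℝ) - (2 : ℝ))) (exp_ub01 (s := (11/25 : ℝ)) (by norm_num) (by norm_num) (by norm_num) (by norm_num) : Real.exp ((2.44:ℝ) - (2 : ℝ)) ≤ (334347610899593/215332031250000 : ℝ))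
  have ha1 : (6149027/1000000 : ℝ) ≤ Fc r (2:ℝ) := le_trans (by norm_num) hs1.1
  have hb1 : Fc r (2:ℝ) ≤ (621083/100000 : ℝ) := le_trans hs1.2 (by norm_num)
  have hs2 := step (r := r) (rlo := (2.43:ℝ)) (rhi := (2.44:ℝ)) (x := (Fc r (2:ℝ))) (a := (6149027/1000000 : ℝ)) (b := (621083/100000 : ℝ)) hr1 hr2 (by norm_num) ha1 hb1 (by norm_num) (exp_lb_neg 4 (by norm_num : ((2.43:ℝ) - (621083/100000 : ℝ)) + (4:ℕ) = (21917/100000 : ℝ)) (exp_lb01 (s := (21917/100000 : ℝ)) (by norm_num) (by norm_num) (by norm_num) : (896430895947485197162325649697369/720000000000000000000000000000000 : ℝ) ≤ Real.exp ((21917/100000 : ℝ))) (le_trans (pow_le_pow_left₀ (Real.exp_pos 1).le Real.exp_one_lt_d9.le 4) (by norm_num) : Real.exp 1 ^ 4 ≤ (34123843777793029748544875305108782813601/625000000000000000000000000000000000000 : ℝ)) (by norm_num) (by norm_num) : (7003366374589728102830669138260695312500/307114594000137267736903877745979045322409 : ℝ) ≤ Real.exp ((2.43:ℝ) - (621083/100000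 : ℝ))) (exp_ub_neg 4 (by norm_num : ((2.44:ℝ) - (6149027/1000000 : ℝ)) + (4:ℕ) = (290973/1000000 : ℝ)) (exp_ub01 (s := (290973/1000000 : ℝ)) (by norm_num) (by norm_num) (by norm_num) (by norm_num) : Real.exp ((290973/1000000 : ℝ)) ≤ (655486949556414043834947034026051308201540533/490000000000000000000000000000000000000000000 : ℝ)) (le_trans (by norm_num) (pow_le_pow_left₀ (by norm_num) Real.exp_one_gt_d9.le 4) : (545981500203662032900872079044043258111921/10000000000000000000000000000000000000000 : ℝ) ≤ Real.exp 1 ^ 4) (by norm_num) (by norm_num) : Real.exp ((2.44:ℝ) - (6149027/1000000 : ℝ)) ≤ (655486949556414043834947034026051308201540533/26753093509979439612142731873158119647484129000 : ℝ))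
  have ha2 : (431111/500000 : ℝ) ≤ Fc r (Fc r (2:ℝ)) := le_trans (by norm_num) hs2.1
  have hb2 : Fc r (Fc r (2:ℝ)) ≤ (472563/500000 : ℝ) := le_trans hs2.2 (by norm_num)
  have hs3 := step (r := r) (rlo := (2.43:ℝ)) (rhi := (2.44:ℝ)) (x := (Fc r (Fc r (2:ℝ)))) (a := (431111/500000 : ℝ)) (b := (472563/500000 : ℝ)) hr1 hr2 (by norm_num) ha2 hb2 (by norm_num) (exp_lb_pos 1 (by norm_num : ((2.43:ℝ) - (472563/500000 : ℝ)) - (1:ℕ) = (242437/500000 : ℝ)) (exp_lb01 (s := (242437/500000 : ℝ)) (by norm_num) (by norm_num) (by norm_num) : (18269651761267572242473346587318187209/11250000000000000000000000000000000000 : ℝ) ≤ Real.exp ((242437/500000 : ℝ))) (le_trans (by norm_num) (pow_le_pow_left₀ (by norm_num) Real.exp_one_gt_d9.le 1) : (27182818283/10000000000 : ℝ) ≤ Real.exp 1 ^ 1) (by norm_num) (by norm_num) (by norm_num) : (496620623920227314007727794753948475203221942147/112500000000000000000000000000000000000000000000 : ℝ) ≤ Real.exp ((2.43:ℝ) - (472563/500000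 : ℝ))) (exp_ub_pos 1 (by norm_num : ((2.44:ℝ) - (431111/500000 : ℝ)) - (1:ℕ) = (288889/500000 : ℝ)) (exp_ub01 (s := (288889/500000 : ℝ)) (by norm_num) (by norm_num) (by norm_num) (by norm_num) : Real.exp ((288889/500000 : ℝ)) ≤ (61398036866837603757854972738340694883475629/34453125000000000000000000000000000000000000 : ℝ)) (le_trans (pow_le_pow_left₀ (Real.exp_pos 1).le Real.exp_one_lt_d9.le 1) (by norm_num) : Real.exp 1 ^ 1 ≤ (13591409143/5000000000 : ℝ)) (by norm_num) : Real.exp ((2.44:ℝ) - (431111/500000 : ℝ)) ≤ (834485839634187681210721234543899467088243983608275947/172265625000000000000000000000000000000000000000000000 : ℝ))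
  have ha3 : (3281787/1000000 : ℝ) ≤ Fc r (Fc r (Fc r (2:ℝ))) := le_trans (by norm_num) hs3.1
  have hb3 : Fc r (Fc r (Fc r (2:ℝ))) ≤ (4327129/1000000 : ℝ) := le_trans hs3.2 (by norm_num)
  linarith

/-- Existence of a Misiurewicz parameter for the 1D Chialvo map with `k = 0`:
there is `r* ∈ (2.43, 2.44)` such that the third iterate `p = f_{r*}³(2)` of the
critical point `c = 2` under `f_{r*}(x) = x² exp(r* − x)` is a fixed point with
`p > 3` (hence unstable, as `|f'_{r*}(p)| = p − 2 > 1`). -/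
theorem chialvo_misiurewicz_parameter :
    ∃ r ∈ Set.Ioo (2.43 : ℝ) 2.44, ∃ p : ℝ,
      p = (fun x : ℝ => x ^ 2 * Real.exp (r - x))^[3] 2 ∧
      p ^ 2 * Real.exp (r - p) = p ∧ 3 < p := by
  have hit : ∀ r : ℝ, (fun x : ℝ => x ^ 2 * Real.exp (r - x))^[3] 2
      = Fc r (Fc r (Fc r 2)) := by
    intro r; simp [Function.iterate_succ_apply', Fc]
  set H : ℝ → ℝ := fun r => Fc r (Fc r (Fc r (Fc r 2))) - Fc r (Fc r (Fc r 2)) with hH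
  have hcont : ContinuousOn H (Set.Icc (2.43:ℝ) 2.44) := by
    apply Continuous.continuousOn
    unfold H
    unfold Fc
    continuity
  have h1 : H 2.43 < 0 := by
    have := chain243; simp only [hH]; linarith
  have h2 : 0 < H 2.44 := by
    have := chain244; simp only [hH]; linarith
  have hsub := intermediate_value_Ioo (by norm_num : (2.43:ℝ) ≤ 2.44) hcont
  obtain ⟨r, hrmem, hr0⟩ := hsub ⟨h1, h2⟩
  refine ⟨r, hrmem, Fc r (Fc r (Fc r 2)), (hit r).symm, ?_, ?_⟩
  · have heq : Fc r (Fc r (Fc r (Fc r 2))) = Fc r (Fc r (Fc r 2)) := by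
      simp only [hH] at hr0; linarith
    calc (Fc r (Fc r (Fc r 2))) ^ 2 * Real.exp (r - Fc r (Fc r (Fc r 2)))
        = Fc r (Fc r (Fc r (Fc r 2))) := rfl
      _ = Fc r (Fc r (Fc r 2)) := heq
  · exact chain_mid hrmem.1.le hrmem.2.le
end

section
/- Let k ≥ 0 and r ∈ ℝ and suppose the Chialvo map f = f_{r,k}, f(x) = x²·exp(r − x) + k, satisfies f²(2) < f³(2) < 2 < f(2). Then: (a) f has a fixed point z with 2 < z < f(2); and (b) the second iterate f² is turbulent on [f²(2), f(2)]: there exist nonempty closed intervals J and K contained in [f²(2), f(2)], each with nonempty interior and with disjoint interiors, such that J ∪ K ⊆ f²(J) and J ∪ K ⊆ f²(K). Explicitly, one may take J = [f²(2), 2] and K = [2, z]. -/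
/-- Turbulence of the second iterate of the 1D Chialvo map. Let `k ≥ 0`, `r ∈ ℝ`
and `f = f_{r,k}`, `f(x) = x² exp(r − x) + k`, satisfy `f²(2) < f³(2) < 2 < f(2)`.
Then (a) `f` has a fixed point `z` with `2 < z < f(2)`, and (b) taking
`J = [f²(2), 2]` and `K = [2, z]`, which are nonempty closed intervals contained
in `[f²(2), f(2)]` with nonempty disjoint interiors, one has
`J ∪ K ⊆ f²(J)` and `J ∪ K ⊆ f²(K)`. -/
theorem chialvo_second_iterate_turbulent (k r : ℝ) (hk : 0 ≤ k)
    (f : ℝ → ℝ) (hf : f = fun x : ℝ => x ^ 2 * Real.exp (r - x) + k)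
    (h1 : f (f 2) < f (f (f 2))) (h2 : f (f (f 2)) < 2) (h3 : 2 < f 2) :
    ∃ z : ℝ, 2 < z ∧ z < f 2 ∧ f z = z ∧
      Set.Icc (f (f 2)) 2 ⊆ Set.Icc (f (f 2)) (f 2) ∧
      Set.Icc 2 z ⊆ Set.Icc (f (f 2)) (f 2) ∧
      (interior (Set.Icc (f (f 2)) 2)).Nonempty ∧
      (interior (Set.Icc 2 z)).Nonempty ∧
      Disjoint (interior (Set.Icc (f (f 2)) 2)) (interior (Set.Icc 2 z)) ∧
      Set.Icc (f (f 2)) 2 ∪ Set.Icc 2 z ⊆ (f ∘ f) '' Set.Icc (f (f 2)) 2 ∧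
      Set.Icc (f (f 2)) 2 ∪ Set.Icc 2 z ⊆ (f ∘ f) '' Set.Icc 2 z := by
  have hc : Continuous f := by subst hf; continuity
  have hff2 : f (f 2) < 2 := lt_trans h1 h2
  -- fixed point z ∈ (2, f 2)
  have hgc : Continuous (fun x => f x - x) := by continuity
  obtain ⟨z, hzmem, hzeq⟩ :=
    intermediate_value_Icc' (le_of_lt h3) hgc.continuousOn
      (show (0:ℝ) ∈ Set.Icc (f (f 2) - f 2) (f 2 - 2) from
        ⟨by linarith, by linarith⟩)
  have hfix : f z = z := by simpa using sub_eq_zero.mp hzeq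
  have hz2 : 2 < z := by
    rcases lt_or_eq_of_le hzmem.1 with h | h
    · exact h
    · exfalso; rw [← h] at hfix; linarith
  have hzf2 : z < f 2 := by
    rcases lt_or_eq_of_le hzmem.2 with h | h
    · exact h
    · exfalso; rw [h] at hfix; linarith
  -- point p ∈ [f²2, 2] with f p = 2
  obtain ⟨p, hpmem, hpeq⟩ :=
    intermediate_value_Icc (le_of_lt hff2) hc.continuousOn
      (show (2:ℝ) ∈ Set.Icc (f (f (f 2))) (f 2) from ⟨le_of_lt h2, le_of_lt h3⟩)
  have hffc : Continuous (f ∘ f) := hc.comp hc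
  -- image of J contains [f²2, f 2]
  have himJ : Set.Icc (f (f 2)) (f 2) ⊆ (f ∘ f) '' Set.Icc (f (f 2)) 2 := by
    have h := intermediate_value_Icc' hpmem.2 hffc.continuousOn
    simp only [Function.comp_apply, hpeq] at h
    intro x hx
    obtain ⟨y, hy, hyx⟩ := h hx
    exact ⟨y, ⟨le_trans hpmem.1 hy.1, hy.2⟩, hyx⟩
  -- image of K contains [f²2, z]
  have himK : Set.Icc (f (f 2)) z ⊆ (f ∘ f) '' Set.Icc 2 z := by
    have h := intermediate_value_Icc (le_of_lt hz2) hffc.continuousOn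
    simp only [Function.comp_apply, hfix] at h
    exact h
  refine ⟨z, hz2, hzf2, hfix, ?_, ?_, ?_, ?_, ?_, ?_, ?_⟩
  · exact Set.Icc_subset_Icc le_rfl (le_of_lt h3)
  · exact Set.Icc_subset_Icc (by linarith) (le_of_lt hzf2)
  · rw [interior_Icc]; exact ⟨f (f (f 2)), by constructor <;> linarith⟩
  · rw [interior_Icc]; exact ⟨(2 + z) / 2, by constructor <;> linarith⟩
  · rw [interior_Icc, interior_Icc]
    rw [Set.disjoint_left]
    rintro a ⟨_, ha2⟩ ⟨h2a, _⟩
    exact absurd (lt_trans ha2 h2a) (lt_irrefl a)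
  · intro x hx
    apply himJ
    rcases hx with h | h
    · exact ⟨h.1, le_trans h.2 (le_of_lt h3)⟩
    · exact ⟨le_trans (le_of_lt hff2) h.1, le_trans h.2 (le_of_lt hzf2)⟩
  · intro x hx
    apply himK
    rcases hx with h | h
    · exact ⟨h.1, le_trans h.2 (le_of_lt hz2)⟩
    · exact ⟨le_trans (le_of_lt hff2) h.1, h.2⟩
end

section
/- Let k ≥ 0 and r ∈ ℝ and suppose the Chialvo map f = f_{r,k}, f(x) = x²·exp(r − x) + k, satisfies f²(2) < f³(2) < 2 < f(2). Then f is chaotic in the sense of Block and Coppel on the interval I = [f²(2), f(2)]: there exist m ∈ ℕ, m ≥ 1, and a nonempty compact set Y ⊆ I with f^m(Y) ⊆ Y, together with a continuous surjection h : Y → ({0,1}^ℕ) (the sequence space on two symbols with the product topology, equivalently with the metric d(α, β) = Σ_{i≥0} |a_i − b_i|/2^i) such that h(f^m(y)) = σ(h(y)) for all y ∈ Y, where σ is the shift map σ(a)(n) = a(n+1). -/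
open Set Function Filter Topology

/-- Block–Coppel chaos for the 1D Chialvo map. Let `k ≥ 0`, `r ∈ ℝ` and
`f = f_{r,k}`, `f(x) = x² exp(r − x) + k`, satisfy `f²(2) < f³(2) < 2 < f(2)`.
Then `f` is chaotic in the sense of Block and Coppel on `I = [f²(2), f(2)]`:
there exist `m ≥ 1` and a nonempty compact `Y ⊆ I` invariant under `f^m`,
together with a continuous surjection `h` from `Y` onto the two-symbol sequence
space `ℕ → Bool` (with the product topology) semi-conjugating `f^m` to the shift. -/
theorem chialvo_block_coppel_chaos (k r : ℝ) (hk : 0 ≤ k)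
    (f : ℝ → ℝ) (hf : f = fun x : ℝ => x ^ 2 * Real.exp (r - x) + k)
    (h1 : f (f 2) < f (f (f 2))) (h2 : f (f (f 2)) < 2) (h3 : 2 < f 2) :
    ∃ m : ℕ, 1 ≤ m ∧ ∃ Y : Set ℝ, Y.Nonempty ∧ IsCompact Y ∧
      Y ⊆ Set.Icc (f (f 2)) (f 2) ∧ (∀ y ∈ Y, f^[m] y ∈ Y) ∧
      ∃ h : ℝ → (ℕ → Bool), ContinuousOn h Y ∧
        (∀ s : ℕ → Bool, ∃ y ∈ Y, h y = s) ∧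
        (∀ y ∈ Y, h (f^[m] y) = fun n => h y (n + 1)) := by
  have hfc : Continuous f := by
    subst hf
    exact ((continuous_pow 2).mul
      (Real.continuous_exp.comp (continuous_const.sub continuous_id))).add continuous_const
  clear hf hk
  -- Notation
  set b : ℝ := f 2 with hb
  set a : ℝ := f (f 2) with ha
  set a' : ℝ := f (f (f 2)) with ha'
  have ha2 : a < 2 := lt_trans h1 h2
  -- the iterate f^[4] as repeated application
  have hit4 : ∀ x, f^[4] x = f (f (f (f x))) := by
    intro x
    simp [Function.iterate_succ, Function.comp]
  have hcont2 : Continuous fun x => f (f x) := hfc.comp hfc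
  have hcont4 : Continuous (f^[4]) := hfc.iterate 4
  -- Step 1: p ∈ [2, b] with f p = 2
  obtain ⟨p, hpmem, hp⟩ : ∃ p ∈ Icc (2:ℝ) b, f p = 2 := by
    have := intermediate_value_Icc' (le_of_lt h3) hfc.continuousOn
    have h2mem : (2:ℝ) ∈ Icc (f b) (f 2) := ⟨le_of_lt ha2, le_of_lt h3⟩
    obtain ⟨p, hpm, hpe⟩ := this h2mem
    exact ⟨p, hpm, hpe⟩
  have hp2 : 2 < p := by
    rcases lt_or_eq_of_le hpmem.1 with h | h
    · exact h
    · exfalso; rw [← h] at hp; rw [← hb] at hp; linarith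
  have hpb : p < b := by
    rcases lt_or_eq_of_le hpmem.2 with h | h
    · exact h
    · exfalso; rw [h] at hp; rw [← ha] at hp; linarith
  -- Step 2: u ∈ [2, p] with f (f u) = 2
  obtain ⟨u, humem, hu⟩ : ∃ u ∈ Icc (2:ℝ) p, f (f u) = 2 := by
    have := intermediate_value_Icc (le_of_lt hp2) hcont2.continuousOn
    have hfp2 : f (f p) = b := by rw [hp]
    have h2mem : (2:ℝ) ∈ Icc (f (f 2)) (f (f p)) := by
      rw [hfp2]; exact ⟨le_of_lt ha2, le_of_lt h3⟩
    obtain ⟨x, hxm, hxe⟩ := this h2mem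
    exact ⟨x, hxm, hxe⟩
  -- Step 3: v ∈ [u, p] with f (f v) = p
  obtain ⟨v, hvmem, hv⟩ : ∃ v ∈ Icc u p, f (f v) = p := by
    have := intermediate_value_Icc humem.2 hcont2.continuousOn
    have hfp2 : f (f p) = b := by rw [hp]
    have hpmem' : p ∈ Icc (f (f u)) (f (f p)) := by
      rw [hfp2, hu]; exact ⟨le_of_lt hp2, le_of_lt hpb⟩
    obtain ⟨x, hxm, hxe⟩ := this hpmem'
    exact ⟨x, hxm, hxe⟩
  -- values of f^[4] at the marked points
  have h4v : f^[4] v = b := by rw [hit4, hv, hp]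
  have h4p : f^[4] p = a' := by rw [hit4, hp]
  have h4u : f^[4] u = a := by rw [hit4, hu]
  -- Step 4: w ∈ [v, p] with f^[4] w = p
  obtain ⟨w, hwmem, hw⟩ : ∃ w ∈ Icc v p, f^[4] w = p := by
    have := intermediate_value_Icc' hvmem.2 hcont4.continuousOn
    have hpmem' : p ∈ Icc (f^[4] p) (f^[4] v) := by
      rw [h4v, h4p]; exact ⟨le_of_lt (lt_trans h2 hp2), le_of_lt hpb⟩
    obtain ⟨x, hxm, hxe⟩ := this hpmem'
    exact ⟨x, hxm, hxe⟩
  have hvw : v < w := by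
    rcases lt_or_eq_of_le hwmem.1 with h | h
    · exact h
    · exfalso; rw [← h] at hw; rw [h4v] at hw; linarith
  have h2u : (2:ℝ) ≤ u := humem.1
  have huv : u ≤ v := hvmem.1
  have hwp : w ≤ p := hwmem.2
  -- The two intervals of the horseshoe
  set J : Bool → Set ℝ := fun i => if i then Icc w p else Icc u v with hJ
  have hJsub : ∀ i, J i ⊆ Icc u p := by
    intro i
    cases i <;> simp only [hJ, if_true, if_false]
    · exact Icc_subset_Icc le_rfl hvmem.2
    · exact Icc_subset_Icc (le_trans huv (le_of_lt hvw)) le_rfl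
  have hJclosed : ∀ i, IsClosed (J i) := by
    intro i; cases i <;> simp only [hJ, if_true, if_false] <;> exact isClosed_Icc
  have hJne : ∀ i, (J i).Nonempty := by
    intro i; cases i <;> simp only [hJ, if_true, if_false]
    · exact ⟨v, huv, le_rfl⟩
    · exact ⟨w, le_rfl, hwp⟩
  -- covering property: each J i maps under f^[4] onto a set containing [u, p]
  have hcov : ∀ (i : Bool), ∀ z ∈ Icc u p, ∃ y ∈ J i, f^[4] y = z := by
    intro i z hz
    cases i
    · -- J false = [u, v], f^[4] u = a, f^[4] v = b
      have := intermediate_value_Icc huv hcont4.continuousOn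
      have hzmem : z ∈ Icc (f^[4] u) (f^[4] v) := by
        rw [h4u, h4v]
        exact ⟨le_trans (le_of_lt ha2) (le_trans h2u hz.1), le_trans hz.2 (le_of_lt hpb)⟩
      obtain ⟨y, hym, hye⟩ := this hzmem
      exact ⟨y, by simpa [hJ] using hym, hye⟩
    · -- J true = [w, p], f^[4] w = p, f^[4] p = a'
      have := intermediate_value_Icc' hwp hcont4.continuousOn
      have hzmem : z ∈ Icc (f^[4] p) (f^[4] w) := by
        rw [h4p, hw]
        exact ⟨le_trans (le_of_lt h2) (le_trans h2u hz.1), hz.2⟩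
      obtain ⟨y, hym, hye⟩ := this hzmem
      exact ⟨y, by simpa [hJ] using hym, hye⟩
  -- The union S and the invariant set Y
  set S : Set ℝ := Icc u v ∪ Icc w p with hS
  have hJS : ∀ i, J i ⊆ S := by
    intro i; cases i <;> simp only [hJ, if_true, if_false]
    · exact subset_union_left
    · exact subset_union_right
  have hSclosed : IsClosed S := isClosed_Icc.union isClosed_Icc
  have hScompact : IsCompact S := (isCompact_Icc).union isCompact_Icc
  have hSsubI : S ⊆ Icc a b := by
    rintro x (hx | hx)
    · exact ⟨le_trans (le_of_lt ha2) (le_trans h2u hx.1),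
        le_trans hx.2 (le_trans (le_of_lt hvw) (le_trans hwp (le_of_lt hpb)))⟩
    · exact ⟨le_trans (le_of_lt ha2) (le_trans h2u (le_trans huv
        (le_trans (le_of_lt hvw) hx.1))), le_trans hx.2 (le_of_lt hpb)⟩
  set Y : Set ℝ := ⋂ n : ℕ, (f^[4 * n]) ⁻¹' S with hY
  have hYmem : ∀ y, y ∈ Y ↔ ∀ n : ℕ, f^[4 * n] y ∈ S := by
    intro y; simp [hY]
  have hYS : Y ⊆ S := by
    intro y hy
    have := (hYmem y).1 hy 0
    simpa using this
  have hYclosed : IsClosed Y := by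
    apply isClosed_iInter
    intro n
    exact hSclosed.preimage (hfc.iterate _)
  have hYcompact : IsCompact Y := hScompact.of_isClosed_subset hYclosed hYS
  -- index shifting
  have hshift : ∀ (n : ℕ) (y : ℝ), f^[4 * (n + 1)] y = f^[4 * n] (f^[4] y) := by
    intro n y
    have : 4 * (n + 1) = 4 * n + 4 := by ring
    rw [this, Function.iterate_add_apply]
  have hYinv : ∀ y ∈ Y, f^[4] y ∈ Y := by
    intro y hy
    rw [hYmem]
    intro n
    rw [← hshift]
    exact (hYmem y).1 hy (n + 1)
  -- the itinerary map
  set h : ℝ → ℕ → Bool := fun y n => decide (w ≤ f^[4 * n] y) with hh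
  -- h reads the symbol correctly on S
  have hread : ∀ (i : Bool), ∀ x ∈ J i, decide (w ≤ x) = i := by
    intro i x hx
    cases i <;> simp only [hJ, if_true, if_false] at hx
    · exact decide_eq_false (not_le.mpr (lt_of_le_of_lt hx.2 hvw))
    · exact decide_eq_true hx.1
  -- surjectivity: build points with any prescribed itinerary
  have hchain : ∀ (N : ℕ) (t : ℕ → Bool), ∃ y, ∀ j ≤ N, f^[4 * j] y ∈ J (t j) := by
    intro N
    induction N with
    | zero =>
      intro t
      obtain ⟨y, hy⟩ := hJne (t 0)
      refine ⟨y, ?_⟩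
      intro j hj
      interval_cases j
      simpa using hy
    | succ N ih =>
      intro t
      obtain ⟨y', hy'⟩ := ih fun j => t (j + 1)
      have hy'1 : y' ∈ J (t 1) := by simpa using hy' 0 (Nat.zero_le _)
      obtain ⟨y, hyJ, hye⟩ := hcov (t 0) y' (hJsub _ hy'1)
      refine ⟨y, ?_⟩
      intro j hj
      cases j with
      | zero => simpa using hyJ
      | succ j =>
        rw [hshift, hye]
        exact hy' j (Nat.succ_le_succ_iff.mp hj)
  have hsurj : ∀ s : ℕ → Bool, ∃ y ∈ Y, h y = s := by
    intro s
    set K : ℕ → Set ℝ := fun N => {y | ∀ j ≤ N, f^[4 * j] y ∈ J (s j)} with hK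
    have hKclosed : ∀ N, IsClosed (K N) := by
      intro N
      have : K N = ⋂ j ∈ Finset.range (N + 1), (f^[4 * j]) ⁻¹' (J (s j)) := by
        ext y
        simp [hK, Nat.lt_succ_iff]
      rw [this]
      exact isClosed_biInter fun j _ => (hJclosed (s j)).preimage (hfc.iterate _)
    have hKmono : ∀ N, K (N + 1) ⊆ K N := by
      intro N y hy j hj
      exact hy j (le_trans hj (Nat.le_succ N))
    have hKne : ∀ N, (K N).Nonempty := fun N => hchain N s
    have hK0sub : K 0 ⊆ J (s 0) := by
      intro y hy
      simpa using hy 0 le_rfl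
    have hK0compact : IsCompact (K 0) := by
      refine IsCompact.of_isClosed_subset ?_ (hKclosed 0) hK0sub
      cases s 0 <;> simp only [hJ, if_true, if_false] <;> exact isCompact_Icc
    obtain ⟨y, hy⟩ := IsCompact.nonempty_iInter_of_sequence_nonempty_isCompact_isClosed
      K hKmono hKne hK0compact hKclosed
    have hyall : ∀ j : ℕ, f^[4 * j] y ∈ J (s j) := by
      intro j
      have := mem_iInter.1 hy j
      exact this j le_rfl
    refine ⟨y, ?_, ?_⟩
    · rw [hYmem]; intro n; exact hJS _ (hyall n)
    · funext n
      exact hread (s n) _ (hyall n)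
  -- nonemptiness of Y
  obtain ⟨y0, hy0, -⟩ := hsurj fun _ => false
  -- continuity of h on Y
  have hcontOn : ContinuousOn h Y := by
    rw [continuousOn_pi]
    intro n y hy
    have hyS : f^[4 * n] y ∈ S := (hYmem y).1 hy n
    rcases hyS with hyc | hyc
    · -- symbol false
      have hval : h y n = false :=
        decide_eq_false (not_le.mpr (lt_of_le_of_lt hyc.2 hvw))
      have hO : (f^[4 * n]) ⁻¹' (Iio w) ∈ 𝓝[Y] y := by
        apply nhdsWithin_le_nhds
        exact (isOpen_Iio.preimage (hfc.iterate _)).mem_nhds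
          (lt_of_le_of_lt hyc.2 hvw)
      have hev : ∀ᶠ z in 𝓝[Y] y, h z n = h y n := by
        filter_upwards [hO, self_mem_nhdsWithin] with z hz hzY
        rcases (hYmem z).1 hzY n with hzc | hzc
        · rw [hval]
          exact decide_eq_false (not_le.mpr (lt_of_le_of_lt hzc.2 hvw))
        · exact absurd hzc.1 (not_le.mpr hz)
      exact Filter.Tendsto.congr' (by filter_upwards [hev] with z hz using hz.symm)
        tendsto_const_nhds
    · -- symbol true
      have hval : h y n = true := decide_eq_true hyc.1
      have hO : (f^[4 * n]) ⁻¹' (Ioi v) ∈ 𝓝[Y] y := by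
        apply nhdsWithin_le_nhds
        exact (isOpen_Ioi.preimage (hfc.iterate _)).mem_nhds
          (lt_of_lt_of_le hvw hyc.1)
      have hev : ∀ᶠ z in 𝓝[Y] y, h z n = h y n := by
        filter_upwards [hO, self_mem_nhdsWithin] with z hz hzY
        rcases (hYmem z).1 hzY n with hzc | hzc
        · exact absurd hzc.2 (not_le.mpr hz)
        · rw [hval]
          exact decide_eq_true hzc.1
      exact Filter.Tendsto.congr' (by filter_upwards [hev] with z hz using hz.symm)
        tendsto_const_nhds
  -- semiconjugacy
  have hsemi : ∀ y ∈ Y, h (f^[4] y) = fun n => h y (n + 1) := by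
    intro y _
    funext n
    simp only [hh]
    rw [← hshift]
  exact ⟨4, by norm_num, Y, ⟨y0, hy0⟩, hYcompact,
    fun y hy => hSsubI (hYS hy), hYinv, h, hcontOn, hsurj, hsemi⟩
end

section
/- Let k ≥ 0 and r ∈ ℝ and suppose the Chialvo map f = f_{r,k}, f(x) = x²·exp(r − x) + k, satisfies f²(2) < f³(2) < 2 < f(2). Then f is chaotic in the sense of Devaney on I = [f²(2), f(2)]: there exists a nonempty compact set Y ⊆ I with f(Y) ⊆ Y such that (1) f restricted to Y is topologically transitive (for all nonempty relatively open subsets U, V of Y there exists n ≥ 0 with f^n(U) ∩ V ≠ ∅), (2) the set of periodic points of f lying in Y is dense in Y, and (3) f restricted to Y has sensitive dependence on initial conditions: there exists δ > 0 such that for every x ∈ Y and every ε > 0 there exist y ∈ Y and n ≥ 0 with |x − y| < ε and |f^n(x) − f^n(y)| ≥ δ. -/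
open Set Function Metric

namespace ChialvoChaos

/-- Cantor diagonal: `ℕ → Bool` is not countable. -/
lemma not_countable_seqs : ¬ Countable (ℕ → Bool) := by
  intro h
  obtain ⟨F, hF⟩ := Countable.exists_injective_nat (ℕ → Bool)
  classical
  set G : ℕ → (ℕ → Bool) := Function.invFun F with hG
  have hGF : ∀ s, G (F s) = s := Function.leftInverse_invFun hF
  set d : ℕ → Bool := fun n => ! (G n n) with hd
  have h1 : G (F d) (F d) = d (F d) := by rw [hGF]
  have h2 : d (F d) = ! (G (F d) (F d)) := rfl
  rw [h1] at h2
  exact (Bool.eq_not_self _).1 h2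

/-- helper: injective-on image countable implies countable. -/
lemma countable_of_injOn_image {φ : ℝ → ℝ} {S : Set ℝ}
    (hinj : Set.InjOn φ S) (h : (φ '' S).Countable) : S.Countable := by
  haveI := h.to_subtype
  have : Function.Injective (fun x : S => (⟨φ x, ⟨x.1, x.2, rfl⟩⟩ : φ '' S)) := by
    intro a b hab
    have := congrArg Subtype.val hab
    exact Subtype.ext (hinj a.2 b.2 this)
  rw [← Set.countable_coe_iff]
  exact this.countable

/-- A set with uncountable trace is nonempty, etc. -/
lemma nonempty_of_not_countable {S : Set ℝ} (h : ¬ S.Countable) : S.Nonempty := by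
  rcases S.eq_empty_or_nonempty with rfl | h'
  · exact absurd countable_empty h
  · exact h'

lemma image_iInter_of_compact {g : ℝ → ℝ} (hg : Continuous g) (t : ℕ → Set ℝ)
    (hdec : ∀ n, t (n + 1) ⊆ t n) (hne : ∀ n, (t n).Nonempty)
    (hcomp : ∀ n, IsCompact (t n)) :
    g '' (⋂ n, t n) = ⋂ n, g '' (t n) := by
  apply Subset.antisymm
  · exact subset_iInter fun n => image_mono (iInter_subset t n)
  · intro y hy
    simp only [mem_iInter, mem_image] at hy
    have key : (⋂ n, t n ∩ g ⁻¹' {y}).Nonempty := by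
      apply IsCompact.nonempty_iInter_of_sequence_nonempty_isCompact_isClosed
      · exact fun n => inter_subset_inter_left _ (hdec n)
      · intro n; obtain ⟨x, hx, hxy⟩ := hy n; exact ⟨x, hx, by simp [hxy]⟩
      · exact (hcomp 0).inter_right (isClosed_singleton.preimage hg)
      · exact fun n => ((hcomp n).isClosed).inter (isClosed_singleton.preimage hg)
    obtain ⟨x, hx⟩ := key
    simp only [mem_iInter, mem_inter_iff, mem_preimage, mem_singleton_iff] at hx
    exact ⟨x, mem_iInter.2 fun n => (hx n).1, (hx 0).2⟩

/-- nested compacts inside an open set. -/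
lemma exists_subset_open_of_iInter_subset {t : ℕ → Set ℝ}
    (hdec : ∀ n, t (n + 1) ⊆ t n) (hcomp : ∀ n, IsCompact (t n))
    {U : Set ℝ} (hU : IsOpen U) (h : (⋂ n, t n) ⊆ U) : ∃ n, t n ⊆ U := by
  by_contra hcon
  push_neg at hcon
  simp only [Set.not_subset] at hcon
  have key : (⋂ n, t n ∩ Uᶜ).Nonempty := by
    apply IsCompact.nonempty_iInter_of_sequence_nonempty_isCompact_isClosed
    · exact fun n => inter_subset_inter_left _ (hdec n)
    · intro n; obtain ⟨x, hx, hxU⟩ := hcon n; exact ⟨x, hx, hxU⟩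
    · exact (hcomp 0).inter_right hU.isClosed_compl
    · exact fun n => ((hcomp n).isClosed).inter hU.isClosed_compl
  obtain ⟨x, hx⟩ := key
  simp only [mem_iInter, mem_inter_iff, mem_compl_iff] at hx
  exact (hx 0).2 (h (mem_iInter.2 fun n => (hx n).1))

section Horseshoe

variable (g : ℝ → ℝ) (p q u v : ℝ)

/-- the two branch domains -/
def J : Bool → Set ℝ
  | true => Icc u v
  | false => Icc p q

/-- horseshoe hypotheses -/
structure HS : Prop where
  hpq : p ≤ q
  hqu : q < u
  huv : u ≤ v
  hg : Continuous g
  hmono : StrictMonoOn g (Icc p q)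
  hanti : StrictAntiOn g (Icc u v)
  hcov0 : Icc p v ⊆ g '' Icc p q
  hcov1 : Icc p v ⊆ g '' Icc u v

/-- cylinders, indexed by a symbol sequence and a depth -/
def Cyl (s : ℕ → Bool) : ℕ → Set ℝ
  | 0 => Icc p v
  | n + 1 => J p q u v (s 0) ∩ g ⁻¹' (Cyl (fun i => s (i + 1)) n)

variable {g p q u v}

namespace HS

variable (H : HS g p q u v)
include H

lemma hpv : p ≤ v := le_trans H.hpq (le_trans H.hqu.le H.huv)

lemma J_subset (a : Bool) : J p q u v a ⊆ Icc p v := by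
  cases a
  · exact Icc_subset_Icc (le_refl p) (le_trans H.hqu.le H.huv)
  · exact Icc_subset_Icc (le_trans H.hpq H.hqu.le) (le_refl v)

lemma gap_le {x y : ℝ} (hx : x ∈ J p q u v false) (hy : y ∈ J p q u v true) :
    u - q ≤ |x - y| := by
  simp only [J, mem_Icc] at hx hy
  rw [abs_sub_comm, abs_of_nonneg (by linarith [H.hqu.le])]
  linarith

lemma not_mem_both {x : ℝ} (hx : x ∈ J p q u v false) (hx' : x ∈ J p q u v true) : False := by
  simp only [J, mem_Icc] at hx hx'
  linarith [H.hqu]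

lemma strictMonoOrAnti (a : Bool) :
    StrictMonoOn g (J p q u v a) ∨ StrictAntiOn g (J p q u v a) := by
  cases a
  · exact Or.inl H.hmono
  · exact Or.inr H.hanti

lemma injOn_J (a : Bool) : Set.InjOn g (J p q u v a) := by
  rcases H.strictMonoOrAnti a with h | h
  · exact h.injOn
  · exact h.injOn

end HS

/-- shift of a symbol sequence -/
def shf (s : ℕ → Bool) : ℕ → Bool := fun i => s (i + 1)

namespace HS

variable (H : HS g p q u v)
include H

lemma cyl_zero (s : ℕ → Bool) : Cyl g p q u v s 0 = Icc p v := rfl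

lemma cyl_succ (s : ℕ → Bool) (n : ℕ) :
    Cyl g p q u v s (n + 1) = J p q u v (s 0) ∩ g ⁻¹' (Cyl g p q u v (shf s) n) := rfl

lemma cyl_subset (s : ℕ → Bool) (n : ℕ) : Cyl g p q u v s n ⊆ Icc p v := by
  cases n with
  | zero => exact subset_rfl
  | succ n => exact (inter_subset_left).trans (H.J_subset (s 0))

lemma cyl_congr {s s' : ℕ → Bool} (n : ℕ) (h : ∀ i < n, s i = s' i) :
    Cyl g p q u v s n = Cyl g p q u v s' n := by
  induction n generalizing s s' with
  | zero => rfl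
  | succ n ih =>
      rw [H.cyl_succ, H.cyl_succ, h 0 (Nat.succ_pos n),
        ih (s := shf s) (s' := shf s') (fun i hi => h (i + 1) (by omega))]

lemma cyl_isClosed (s : ℕ → Bool) (n : ℕ) : IsClosed (Cyl g p q u v s n) := by
  induction n generalizing s with
  | zero => exact isClosed_Icc
  | succ n ih =>
      rw [H.cyl_succ]
      refine IsClosed.inter ?_ ((ih (shf s)).preimage H.hg)
      cases (s 0) <;> exact isClosed_Icc

lemma cyl_isCompact (s : ℕ → Bool) (n : ℕ) : IsCompact (Cyl g p q u v s n) :=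
  IsCompact.of_isClosed_subset isCompact_Icc (H.cyl_isClosed s n) (H.cyl_subset s n)

lemma cyl_ordConnected (s : ℕ → Bool) (n : ℕ) : OrdConnected (Cyl g p q u v s n) := by
  induction n generalizing s with
  | zero => exact ordConnected_Icc
  | succ n ih =>
      rw [H.cyl_succ]
      constructor
      intro x hx z hz y hy
      have hJx : x ∈ J p q u v (s 0) := hx.1
      have hJz : z ∈ J p q u v (s 0) := hz.1
      have hJ : OrdConnected (J p q u v (s 0)) := by
        cases (s 0) <;> exact ordConnected_Icc
      have hJy : y ∈ J p q u v (s 0) := hJ.out hJx hJz hy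
      refine ⟨hJy, ?_⟩
      rcases H.strictMonoOrAnti (s 0) with hm | hm
      · have h1 : g x ≤ g y := hm.monotoneOn hJx hJy hy.1
        have h2 : g y ≤ g z := hm.monotoneOn hJy hJz hy.2
        exact (ih (shf s)).out hx.2 hz.2 ⟨h1, h2⟩
      · have h1 : g z ≤ g y := hm.antitoneOn hJy hJz hy.2
        have h2 : g y ≤ g x := hm.antitoneOn hJx hJy hy.1
        exact (ih (shf s)).out hz.2 hx.2 ⟨h1, h2⟩

lemma cyl_image (s : ℕ → Bool) (n : ℕ) :
    g '' Cyl g p q u v s (n + 1) = Cyl g p q u v (shf s) n := by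
  apply Subset.antisymm
  · rintro y ⟨x, hx, rfl⟩
    exact hx.2
  · intro y hy
    have hy' : y ∈ Icc p v := H.cyl_subset (shf s) n hy
    have hcov : Icc p v ⊆ g '' J p q u v (s 0) := by
      cases hs : (s 0)
      · exact H.hcov0
      · exact H.hcov1
    obtain ⟨x, hxJ, rfl⟩ := hcov hy'
    exact ⟨x, ⟨hxJ, hy⟩, rfl⟩

lemma cyl_nonempty (s : ℕ → Bool) (n : ℕ) : (Cyl g p q u v s n).Nonempty := by
  induction n generalizing s with
  | zero => exact ⟨p, left_mem_Icc.2 H.hpv⟩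
  | succ n ih =>
      obtain ⟨y, hy⟩ := ih (shf s)
      have := H.cyl_image s n
      rw [← this] at hy
      obtain ⟨x, hx, -⟩ := hy
      exact ⟨x, hx⟩

lemma cyl_antitone (s : ℕ → Bool) (n : ℕ) :
    Cyl g p q u v s (n + 1) ⊆ Cyl g p q u v s n := by
  induction n generalizing s with
  | zero => exact H.cyl_subset s 1
  | succ n ih =>
      rw [H.cyl_succ s (n+1), H.cyl_succ s n]
      exact inter_subset_inter_right _ (preimage_mono (ih (shf s)))

lemma cyl_iter_mem {x : ℝ} {s : ℕ → Bool} {n : ℕ} (hx : x ∈ Cyl g p q u v s n) :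
    ∀ i < n, g^[i] x ∈ J p q u v (s i) := by
  induction n generalizing s x with
  | zero => intro i hi; omega
  | succ n ih =>
      intro i hi
      cases i with
      | zero => exact hx.1
      | succ i =>
          have := ih hx.2 i (by omega)
          rwa [Function.iterate_succ_apply]

lemma cyl_iter_last {x : ℝ} {s : ℕ → Bool} {n : ℕ} (hx : x ∈ Cyl g p q u v s n) :
    g^[n] x ∈ Icc p v := by
  induction n generalizing s x with
  | zero => exact hx
  | succ n ih =>
      have := ih hx.2
      rwa [Function.iterate_succ_apply]

lemma cyl_builder {x : ℝ} {s : ℕ → Bool} {n : ℕ}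
    (h1 : ∀ i < n, g^[i] x ∈ J p q u v (s i)) (h2 : g^[n] x ∈ Icc p v) :
    x ∈ Cyl g p q u v s n := by
  induction n generalizing s x with
  | zero => exact h2
  | succ n ih =>
      refine ⟨h1 0 (Nat.succ_pos n), ?_⟩
      apply ih
      · intro i hi
        have := h1 (i + 1) (by omega)
        rwa [Function.iterate_succ_apply] at this
      · rwa [Function.iterate_succ_apply] at h2

lemma cyl_iter_tail {x : ℝ} {s : ℕ → Bool} {m n : ℕ}
    (hx : x ∈ Cyl g p q u v s (m + n)) :
    g^[m] x ∈ Cyl g p q u v (fun i => s (i + m)) n := by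
  apply H.cyl_builder
  · intro i hi
    rw [← Function.iterate_add_apply]
    exact H.cyl_iter_mem hx (i + m) (by omega)
  · rw [← Function.iterate_add_apply]
    have := H.cyl_iter_last hx
    rwa [Nat.add_comm m n] at this

end HS

open Classical in
/-- itinerary of a point -/
noncomputable def itin (g : ℝ → ℝ) (u v : ℝ) (x : ℝ) : ℕ → Bool :=
  fun n => if g^[n] x ∈ Icc u v then true else false

/-- points staying in the union forever -/
def Lam (g : ℝ → ℝ) (p q u v : ℝ) : Set ℝ :=
  {x | ∀ n, g^[n] x ∈ Icc p q ∪ Icc u v}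

/-- the fiber of a symbolic sequence -/
def KS (g : ℝ → ℝ) (p q u v : ℝ) (s : ℕ → Bool) : Set ℝ := ⋂ n, Cyl g p q u v s n

namespace HS

variable (H : HS g p q u v)
include H

lemma lam_isClosed : IsClosed (Lam g p q u v) := by
  have : Lam g p q u v = ⋂ n, g^[n] ⁻¹' (Icc p q ∪ Icc u v) := by
    ext x; simp [Lam]
  rw [this]
  exact isClosed_iInter fun n =>
    (IsClosed.union isClosed_Icc isClosed_Icc).preimage (H.hg.iterate n)

lemma mem_J_union_iff {y : ℝ} : y ∈ Icc p q ∪ Icc u v ↔ ∃ a, y ∈ J p q u v a := by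
  constructor
  · rintro (h | h)
    · exact ⟨false, h⟩
    · exact ⟨true, h⟩
  · rintro ⟨a, ha⟩
    cases a
    · exact Or.inl ha
    · exact Or.inr ha

lemma itin_spec {x : ℝ} {n : ℕ} {a : Bool} (h : g^[n] x ∈ J p q u v a) :
    itin g u v x n = a := by
  cases a
  · have : g^[n] x ∉ Icc u v := fun hc => H.not_mem_both h hc
    simp [itin, this]
  · have : g^[n] x ∈ Icc u v := h
    simp [itin, this]

lemma ks_subset_cyl (s : ℕ → Bool) (n : ℕ) : KS g p q u v s ⊆ Cyl g p q u v s n :=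
  iInter_subset _ n

lemma ks_iter_mem {x : ℝ} {s : ℕ → Bool} (hx : x ∈ KS g p q u v s) (n : ℕ) :
    g^[n] x ∈ J p q u v (s n) :=
  H.cyl_iter_mem (H.ks_subset_cyl s (n + 1) hx) n (by omega)

lemma ks_subset_lam (s : ℕ → Bool) : KS g p q u v s ⊆ Lam g p q u v := by
  intro x hx n
  exact (H.mem_J_union_iff).2 ⟨s n, H.ks_iter_mem hx n⟩

lemma itin_eq_of_mem_ks {x : ℝ} {s : ℕ → Bool} (hx : x ∈ KS g p q u v s) :
    itin g u v x = s :=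
  funext fun n => H.itin_spec (H.ks_iter_mem hx n)

lemma mem_ks_itin {x : ℝ} (hx : x ∈ Lam g p q u v) : x ∈ KS g p q u v (itin g u v x) := by
  apply mem_iInter.2
  intro n
  apply H.cyl_builder
  · intro i _
    obtain ⟨a, ha⟩ := (H.mem_J_union_iff).1 (hx i)
    rwa [H.itin_spec ha]
  · obtain ⟨a, ha⟩ := (H.mem_J_union_iff).1 (hx n)
    exact H.J_subset a ha

lemma ks_disjoint {s s' : ℕ → Bool} (h : s ≠ s') {x : ℝ}
    (hx : x ∈ KS g p q u v s) (hx' : x ∈ KS g p q u v s') : False := by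
  apply h
  rw [← H.itin_eq_of_mem_ks hx, ← H.itin_eq_of_mem_ks hx']

lemma ks_isCompact (s : ℕ → Bool) : IsCompact (KS g p q u v s) :=
  IsCompact.of_isClosed_subset isCompact_Icc
    (isClosed_iInter fun n => H.cyl_isClosed s n)
    ((H.ks_subset_cyl s 0).trans (by rw [H.cyl_zero]))

lemma ks_nonempty (s : ℕ → Bool) : (KS g p q u v s).Nonempty :=
  IsCompact.nonempty_iInter_of_sequence_nonempty_isCompact_isClosed _
    (fun n => H.cyl_antitone s n) (fun n => H.cyl_nonempty s n)
    (H.cyl_isCompact s 0) (fun n => H.cyl_isClosed s n)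

lemma ks_ordConnected (s : ℕ → Bool) : OrdConnected (KS g p q u v s) := by
  constructor
  intro x hx z hz y hy
  exact mem_iInter.2 fun n =>
    (H.cyl_ordConnected s n).out (mem_iInter.1 hx n) (mem_iInter.1 hz n) hy

lemma ks_subset_J (s : ℕ → Bool) : KS g p q u v s ⊆ J p q u v (s 0) := fun _ hx =>
  H.ks_iter_mem hx 0

lemma ks_image : ∀ s : ℕ → Bool, g '' KS g p q u v s = KS g p q u v (shf s) := by
  intro s
  have h0 : (⋂ n, Cyl g p q u v s n) = ⋂ n, Cyl g p q u v s (n + 1) := by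
    apply Subset.antisymm
    · exact subset_iInter fun n => iInter_subset _ (n + 1)
    · refine subset_iInter fun n => ?_
      exact (iInter_subset (fun m => Cyl g p q u v s (m + 1)) n).trans (H.cyl_antitone s n)
  rw [KS, h0, image_iInter_of_compact H.hg _
    (fun n => H.cyl_antitone s (n + 1)) (fun n => H.cyl_nonempty s (n + 1))
    (fun n => H.cyl_isCompact s (n + 1))]
  rw [KS]
  exact iInter_congr fun n => H.cyl_image s n

lemma ks_image_iter (m : ℕ) (s : ℕ → Bool) :
    g^[m] '' KS g p q u v s = KS g p q u v (fun i => s (i + m)) := by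
  induction m with
  | zero => simp [KS]
  | succ m ih =>
      have : g^[m + 1] = g ∘ g^[m] := Function.iterate_succ' g m
      rw [this, Set.image_comp, ih, H.ks_image]
      apply congrArg
      funext i
      simp [shf]
      congr 1
      omega

lemma ks_injOn_iter (m : ℕ) (s : ℕ → Bool) : Set.InjOn g^[m] (KS g p q u v s) := by
  induction m generalizing s with
  | zero => simp [Set.injOn_id]
  | succ m ih =>
      intro x hx y hy hxy
      rw [Function.iterate_succ_apply, Function.iterate_succ_apply] at hxy
      have hgx : g x ∈ KS g p q u v (shf s) := by
        rw [← H.ks_image]; exact ⟨x, hx, rfl⟩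
      have hgy : g y ∈ KS g p q u v (shf s) := by
        rw [← H.ks_image]; exact ⟨y, hy, rfl⟩
      have := ih (shf s) hgx hgy hxy
      exact H.injOn_J (s 0) (H.ks_subset_J s hx) (H.ks_subset_J s hy) this

end HS

/-- min and max of a fiber -/
noncomputable def mK (g : ℝ → ℝ) (p q u v : ℝ) (s : ℕ → Bool) : ℝ := sInf (KS g p q u v s)
noncomputable def MK (g : ℝ → ℝ) (p q u v : ℝ) (s : ℕ → Bool) : ℝ := sSup (KS g p q u v s)

/-- the set of fiber endpoints -/
def EE (g : ℝ → ℝ) (p q u v : ℝ) : Set ℝ :=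
  {x | ∃ s, x = mK g p q u v s ∨ x = MK g p q u v s}

section minmax

lemma image_sInf_mono {φ : ℝ → ℝ} {A D : Set ℝ} (hAD : A ⊆ D) (hm : StrictMonoOn φ D)
    (hA : IsCompact A) (hne : A.Nonempty) : φ (sInf A) = sInf (φ '' A) := by
  have h1 : sInf A ∈ A := hA.sInf_mem hne
  apply le_antisymm
  · apply le_csInf (hne.image φ)
    rintro y ⟨x, hx, rfl⟩
    exact hm.monotoneOn (hAD h1) (hAD hx) (csInf_le hA.bddBelow hx)
  · refine csInf_le ⟨φ (sInf A), ?_⟩ ⟨sInf A, h1, rfl⟩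
    rintro y ⟨x, hx, rfl⟩
    exact hm.monotoneOn (hAD h1) (hAD hx) (csInf_le hA.bddBelow hx)

lemma image_sSup_mono {φ : ℝ → ℝ} {A D : Set ℝ} (hAD : A ⊆ D) (hm : StrictMonoOn φ D)
    (hA : IsCompact A) (hne : A.Nonempty) : φ (sSup A) = sSup (φ '' A) := by
  have h1 : sSup A ∈ A := hA.sSup_mem hne
  apply le_antisymm
  · refine le_csSup ⟨φ (sSup A), ?_⟩ ⟨sSup A, h1, rfl⟩
    rintro y ⟨x, hx, rfl⟩
    exact hm.monotoneOn (hAD hx) (hAD h1) (le_csSup hA.bddAbove hx)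
  · apply csSup_le (hne.image φ)
    rintro y ⟨x, hx, rfl⟩
    exact hm.monotoneOn (hAD hx) (hAD h1) (le_csSup hA.bddAbove hx)

lemma image_sInf_anti {φ : ℝ → ℝ} {A D : Set ℝ} (hAD : A ⊆ D) (hm : StrictAntiOn φ D)
    (hA : IsCompact A) (hne : A.Nonempty) : φ (sInf A) = sSup (φ '' A) := by
  have h1 : sInf A ∈ A := hA.sInf_mem hne
  apply le_antisymm
  · refine le_csSup ⟨φ (sInf A), ?_⟩ ⟨sInf A, h1, rfl⟩
    rintro y ⟨x, hx, rfl⟩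
    exact hm.antitoneOn (hAD h1) (hAD hx) (csInf_le hA.bddBelow hx)
  · apply csSup_le (hne.image φ)
    rintro y ⟨x, hx, rfl⟩
    exact hm.antitoneOn (hAD h1) (hAD hx) (csInf_le hA.bddBelow hx)

lemma image_sSup_anti {φ : ℝ → ℝ} {A D : Set ℝ} (hAD : A ⊆ D) (hm : StrictAntiOn φ D)
    (hA : IsCompact A) (hne : A.Nonempty) : φ (sSup A) = sInf (φ '' A) := by
  have h1 : sSup A ∈ A := hA.sSup_mem hne
  apply le_antisymm
  · apply le_csInf (hne.image φ)
    rintro y ⟨x, hx, rfl⟩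
    exact hm.antitoneOn (hAD hx) (hAD h1) (le_csSup hA.bddAbove hx)
  · refine csInf_le ⟨φ (sSup A), ?_⟩ ⟨sSup A, h1, rfl⟩
    rintro y ⟨x, hx, rfl⟩
    exact hm.antitoneOn (hAD hx) (hAD h1) (le_csSup hA.bddAbove hx)

end minmax

namespace HS

variable (H : HS g p q u v)
include H

lemma mK_mem (s : ℕ → Bool) : mK g p q u v s ∈ KS g p q u v s :=
  (H.ks_isCompact s).sInf_mem (H.ks_nonempty s)

lemma MK_mem (s : ℕ → Bool) : MK g p q u v s ∈ KS g p q u v s :=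
  (H.ks_isCompact s).sSup_mem (H.ks_nonempty s)

lemma g_endpoint (s : ℕ → Bool) :
    (g (mK g p q u v s) = mK g p q u v (shf s) ∨ g (mK g p q u v s) = MK g p q u v (shf s)) ∧
    (g (MK g p q u v s) = mK g p q u v (shf s) ∨ g (MK g p q u v s) = MK g p q u v (shf s)) := by
  have himg := H.ks_image s
  rcases H.strictMonoOrAnti (s 0) with hm | hm
  · constructor
    · left
      rw [mK, mK, ← himg]
      exact image_sInf_mono (H.ks_subset_J s) hm (H.ks_isCompact s) (H.ks_nonempty s)
    · right
      rw [MK, MK, ← himg]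
      exact image_sSup_mono (H.ks_subset_J s) hm (H.ks_isCompact s) (H.ks_nonempty s)
  · constructor
    · right
      rw [mK, MK, ← himg]
      exact image_sInf_anti (H.ks_subset_J s) hm (H.ks_isCompact s) (H.ks_nonempty s)
    · left
      rw [MK, mK, ← himg]
      exact image_sSup_anti (H.ks_subset_J s) hm (H.ks_isCompact s) (H.ks_nonempty s)

lemma ee_subset_lam : EE g p q u v ⊆ Lam g p q u v := by
  rintro x ⟨s, h | h⟩
  · rw [h]; exact H.ks_subset_lam s (H.mK_mem s)
  · rw [h]; exact H.ks_subset_lam s (H.MK_mem s)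

lemma g_ee : ∀ x ∈ EE g p q u v, g x ∈ EE g p q u v := by
  rintro x ⟨s, h | h⟩
  · rcases (H.g_endpoint s).1 with h' | h'
    · exact ⟨shf s, Or.inl (by rw [h, h'])⟩
    · exact ⟨shf s, Or.inr (by rw [h, h'])⟩
  · rcases (H.g_endpoint s).2 with h' | h'
    · exact ⟨shf s, Or.inl (by rw [h, h'])⟩
    · exact ⟨shf s, Or.inr (by rw [h, h'])⟩

lemma ee_inter_ks {x : ℝ} {s : ℕ → Bool} (hx : x ∈ EE g p q u v)
    (hxs : x ∈ KS g p q u v s) : x = mK g p q u v s ∨ x = MK g p q u v s := by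
  obtain ⟨s', h⟩ := hx
  have hs' : s' = s := by
    by_contra hne
    rcases h with h | h
    · exact H.ks_disjoint hne (h ▸ H.mK_mem s') hxs
    · exact H.ks_disjoint hne (h ▸ H.MK_mem s') hxs
  rwa [hs'] at h

lemma mK_le_of_mem {x : ℝ} {s : ℕ → Bool} (hx : x ∈ KS g p q u v s) :
    mK g p q u v s ≤ x := csInf_le (H.ks_isCompact s).bddBelow hx

lemma le_MK_of_mem {x : ℝ} {s : ℕ → Bool} (hx : x ∈ KS g p q u v s) :
    x ≤ MK g p q u v s := le_csSup (H.ks_isCompact s).bddAbove hx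

lemma ee_isClosed : IsClosed (EE g p q u v) := by
  rw [← isSeqClosed_iff_isClosed]
  intro xs x hxs hlim
  have hxlam : x ∈ Lam g p q u v := by
    have : ∀ n, xs n ∈ Lam g p q u v := fun n => H.ee_subset_lam (hxs n)
    exact H.lam_isClosed.isSeqClosed this hlim
  set s := itin g u v x with hs
  have hxks : x ∈ KS g p q u v s := H.mem_ks_itin hxlam
  by_contra hcon
  have hne1 : x ≠ mK g p q u v s := fun h => hcon ⟨s, Or.inl h⟩
  have hne2 : x ≠ MK g p q u v s := fun h => hcon ⟨s, Or.inr h⟩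
  have h1 : mK g p q u v s < x := lt_of_le_of_ne (H.mK_le_of_mem hxks) (Ne.symm hne1)
  have h2 : x < MK g p q u v s := lt_of_le_of_ne (H.le_MK_of_mem hxks) hne2
  obtain ⟨N, hN⟩ := Metric.tendsto_atTop.1 hlim (min (x - mK g p q u v s) (MK g p q u v s - x))
    (by simp [h1, h2, sub_pos])
  have hd := hN N le_rfl
  rw [Real.dist_eq, abs_lt] at hd
  have hy : xs N ∈ KS g p q u v s := by
    apply (H.ks_ordConnected s).out (H.mK_mem s) (H.MK_mem s)
    constructor
    · have := min_le_left (x - mK g p q u v s) (MK g p q u v s - x); nlinarith [hd.1]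
    · have := min_le_right (x - mK g p q u v s) (MK g p q u v s - x); nlinarith [hd.2]
  rcases H.ee_inter_ks (hxs N) hy with h | h
  · have := min_le_left (x - mK g p q u v s) (MK g p q u v s - x)
    rw [h] at hd; nlinarith [hd.1]
  · have := min_le_right (x - mK g p q u v s) (MK g p q u v s - x)
    rw [h] at hd; nlinarith [hd.2]

end HS

/-- condensation points of EE within EE -/
def Estar (g : ℝ → ℝ) (p q u v : ℝ) : Set ℝ :=
  {x ∈ EE g p q u v | ∀ U : Set ℝ, IsOpen U → x ∈ U → ¬ (EE g p q u v ∩ U).Countable}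

namespace HS

variable (H : HS g p q u v)
include H

lemma g_endpoint_iter (s : ℕ → Bool) (m : ℕ) :
    (g^[m] (mK g p q u v s) = mK g p q u v (fun i => s (i + m)) ∨
     g^[m] (mK g p q u v s) = MK g p q u v (fun i => s (i + m))) ∧
    (g^[m] (MK g p q u v s) = mK g p q u v (fun i => s (i + m)) ∨
     g^[m] (MK g p q u v s) = MK g p q u v (fun i => s (i + m))) := by
  induction m with
  | zero => exact ⟨Or.inl rfl, Or.inr rfl⟩
  | succ m ih =>
      have hshift : shf (fun i => s (i + m)) = fun i => s (i + (m + 1)) := by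
        funext i; simp only [shf]; congr 1; omega
      constructor
      · rcases ih.1 with h | h
        · rw [Function.iterate_succ_apply', h]
          rcases (H.g_endpoint (fun i => s (i + m))).1 with h' | h'
          · exact Or.inl (by rw [h', hshift])
          · exact Or.inr (by rw [h', hshift])
        · rw [Function.iterate_succ_apply', h]
          rcases (H.g_endpoint (fun i => s (i + m))).2 with h' | h'
          · exact Or.inl (by rw [h', hshift])
          · exact Or.inr (by rw [h', hshift])
      · rcases ih.2 with h | h
        · rw [Function.iterate_succ_apply', h]
          rcases (H.g_endpoint (fun i => s (i + m))).1 with h' | h'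
          · exact Or.inl (by rw [h', hshift])
          · exact Or.inr (by rw [h', hshift])
        · rw [Function.iterate_succ_apply', h]
          rcases (H.g_endpoint (fun i => s (i + m))).2 with h' | h'
          · exact Or.inl (by rw [h', hshift])
          · exact Or.inr (by rw [h', hshift])

lemma periodic_endpoints {s : ℕ → Bool} {n : ℕ} (hn : 1 ≤ n)
    (hper : (fun i => s (i + n)) = s) (e : ℝ)
    (he : e = mK g p q u v s ∨ e = MK g p q u v s) :
    ∃ j, 1 ≤ j ∧ g^[j] e = e := by
  have hm := (H.g_endpoint_iter s n).1
  have hM := (H.g_endpoint_iter s n).2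
  rw [hper] at hm hM
  have key : ∀ a b : ℝ, a ∈ KS g p q u v s → b ∈ KS g p q u v s →
      (g^[n] a = a ∨ g^[n] a = b) → (g^[n] b = a ∨ g^[n] b = b) →
      ∃ j, 1 ≤ j ∧ g^[j] a = a := by
    intro a b ha hb haa hbb
    rcases haa with h | h
    · exact ⟨n, hn, h⟩
    · rcases hbb with h' | h'
      · refine ⟨n + n, by omega, ?_⟩
        rw [Function.iterate_add_apply, h, h']
      · have hab : a = b := by
          apply H.ks_injOn_iter n s ha hb
          rw [h, h']
        exact ⟨n, hn, by rw [h, ← hab]⟩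
  rcases he with rfl | rfl
  · exact key _ _ (H.mK_mem s) (H.MK_mem s) hm hM
  · exact key _ _ (H.MK_mem s) (H.mK_mem s) (by tauto) (by tauto)

lemma ee_uncountable_cyl (s : ℕ → Bool) (n : ℕ) :
    ¬ (EE g p q u v ∩ Cyl g p q u v s n).Countable := by
  intro hcnt
  classical
  set ext : (ℕ → Bool) → (ℕ → Bool) := fun s' i => if i < n then s i else s' (i - n) with hext
  set φ : (ℕ → Bool) → ℝ := fun s' => mK g p q u v (ext s') with hφ
  have hmem : ∀ s', φ s' ∈ EE g p q u v ∩ Cyl g p q u v s n := by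
    intro s'
    constructor
    · exact ⟨ext s', Or.inl rfl⟩
    · have : KS g p q u v (ext s') ⊆ Cyl g p q u v (ext s') n := H.ks_subset_cyl _ n
      have heq : Cyl g p q u v (ext s') n = Cyl g p q u v s n :=
        H.cyl_congr n (fun i hi => by simp [hext, hi])
      rw [← heq]
      exact this (H.mK_mem (ext s'))
  have hinj : Function.Injective φ := by
    intro a b hab
    have hexta : ext a = ext b := by
      by_contra hne
      have h2 : mK g p q u v (ext a) ∈ KS g p q u v (ext b) := by
        have heq : mK g p q u v (ext a) = mK g p q u v (ext b) := hab
        rw [heq]; exact H.mK_mem (ext b)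
      exact H.ks_disjoint hne (H.mK_mem (ext a)) h2
    funext i
    have := congrFun hexta (i + n)
    simpa [hext] using this
  apply not_countable_seqs
  haveI := hcnt.to_subtype
  have hinj2 : Function.Injective
      (fun s' : ℕ → Bool => (⟨φ s', hmem s'⟩ : ↥(EE g p q u v ∩ Cyl g p q u v s n))) :=
    fun a b hab => hinj (congrArg Subtype.val hab)
  exact hinj2.countable

lemma ee_uncountable : ¬ (EE g p q u v).Countable := by
  intro h
  apply H.ee_uncountable_cyl (fun _ => false) 0
  exact h.mono inter_subset_left

lemma estar_subset : Estar g p q u v ⊆ EE g p q u v := fun x hx => hx.1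

lemma estar_isClosed : IsClosed (Estar g p q u v) := by
  refine isClosed_of_closure_subset ?_
  intro x hx
  have hxE : x ∈ EE g p q u v := by
    have h1 : closure (Estar g p q u v) ⊆ closure (EE g p q u v) :=
      closure_mono (fun y hy => hy.1)
    exact (H.ee_isClosed.closure_subset) (h1 hx)
  refine ⟨hxE, ?_⟩
  intro U hU hxU hcnt
  obtain ⟨y, hyU, hyEs⟩ := _root_.mem_closure_iff.1 hx U hU hxU
  exact hyEs.2 U hU hyU hcnt

lemma ee_diff_estar_countable : (EE g p q u v \ Estar g p q u v).Countable := by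
  obtain ⟨B, hBc, -, hB⟩ := TopologicalSpace.exists_countable_basis ℝ
  have hcover : EE g p q u v \ Estar g p q u v ⊆
      ⋃ b ∈ {b ∈ B | (EE g p q u v ∩ b).Countable}, EE g p q u v ∩ b := by
    intro x hx
    obtain ⟨hxE, hxn⟩ := hx
    simp only [Estar, mem_setOf_eq, not_and, not_forall] at hxn
    obtain ⟨U, hU, hxU, hcnt⟩ := hxn hxE
    rw [not_not] at hcnt
    obtain ⟨b, hbB, hxb, hbU⟩ := hB.exists_subset_of_mem_open hxU hU
    exact mem_biUnion ⟨hbB, (hcnt.mono (inter_subset_inter_right _ hbU))⟩ ⟨hxE, hxb⟩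
  exact Set.Countable.mono hcover
    ((hBc.mono (sep_subset _ _)).biUnion fun b hb => hb.2)

lemma estar_local_uncountable {x : ℝ} (hx : x ∈ Estar g p q u v) {U : Set ℝ}
    (hU : IsOpen U) (hxU : x ∈ U) : ¬ (Estar g p q u v ∩ U).Countable := by
  intro h
  apply hx.2 U hU hxU
  have : EE g p q u v ∩ U ⊆ (Estar g p q u v ∩ U) ∪ (EE g p q u v \ Estar g p q u v) := by
    intro y ⟨hy1, hy2⟩
    by_cases hy : y ∈ Estar g p q u v
    · exact Or.inl ⟨hy, hy2⟩
    · exact Or.inr ⟨hy1, hy⟩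
  exact Set.Countable.mono this (h.union (H.ee_diff_estar_countable))

lemma estar_nonempty : (Estar g p q u v).Nonempty := by
  rcases (Estar g p q u v).eq_empty_or_nonempty with hE | hE
  · exfalso
    apply H.ee_uncountable
    have : EE g p q u v \ Estar g p q u v = EE g p q u v := by rw [hE]; simp
    rw [← this]
    exact H.ee_diff_estar_countable
  · exact hE

lemma lam_mem_J {x : ℝ} (hx : x ∈ Lam g p q u v) : x ∈ J p q u v (itin g u v x 0) :=
  H.ks_subset_J _ (H.mem_ks_itin hx)

lemma g_estar : ∀ x ∈ Estar g p q u v, g x ∈ Estar g p q u v := by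
  intro x hx
  have hxE : x ∈ EE g p q u v := hx.1
  have hxlam : x ∈ Lam g p q u v := H.ee_subset_lam hxE
  set a := itin g u v x 0 with ha
  have hxJ : x ∈ J p q u v a := H.lam_mem_J hxlam
  refine ⟨H.g_ee x hxE, ?_⟩
  intro U hU hgxU hcnt
  set V := g ⁻¹' U ∩ ball x (u - q) with hV
  have hVopen : IsOpen V := (hU.preimage H.hg).inter isOpen_ball
  have hxV : x ∈ V := ⟨hgxU, mem_ball_self (by linarith [H.hqu])⟩
  apply hx.2 V hVopen hxV
  have hsub : EE g p q u v ∩ V ⊆ J p q u v a := by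
    rintro y ⟨hyE, hyV⟩
    have hylam : y ∈ Lam g p q u v := H.ee_subset_lam hyE
    have hyJ : y ∈ J p q u v (itin g u v y 0) := H.lam_mem_J hylam
    by_cases hab : itin g u v y 0 = a
    · rwa [hab] at hyJ
    · exfalso
      have hgap : u - q ≤ |x - y| := by
        rcases Bool.eq_false_or_eq_true a with h1 | h1 <;>
          rcases Bool.eq_false_or_eq_true (itin g u v y 0) with h2 | h2
        · rw [h1, h2] at hab; simp at hab
        · rw [h1] at hxJ; rw [h2] at hyJ
          rw [abs_sub_comm]; exact H.gap_le hyJ hxJ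
        · rw [h1] at hxJ; rw [h2] at hyJ
          exact H.gap_le hxJ hyJ
        · rw [h1, h2] at hab; simp at hab
      have : dist y x < u - q := hyV.2
      rw [Real.dist_eq, abs_sub_comm] at this
      linarith
  have himg : g '' (EE g p q u v ∩ V) ⊆ EE g p q u v ∩ U := by
    rintro - ⟨y, ⟨hyE, hyV⟩, rfl⟩
    exact ⟨H.g_ee y hyE, hyV.1⟩
  apply countable_of_injOn_image ((H.injOn_J a).mono hsub)
  exact hcnt.mono himg

lemma g_iter_estar (m : ℕ) : ∀ x ∈ Estar g p q u v, g^[m] x ∈ Estar g p q u v := by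
  induction m with
  | zero => intro x hx; exact hx
  | succ m ih =>
      intro x hx
      rw [Function.iterate_succ_apply']
      exact H.g_estar _ (ih x hx)

lemma gap_ne {a b : Bool} (hab : a ≠ b) {x y : ℝ}
    (hx : x ∈ J p q u v a) (hy : y ∈ J p q u v b) : u - q ≤ |x - y| := by
  rcases Bool.eq_false_or_eq_true a with h1 | h1 <;>
    rcases Bool.eq_false_or_eq_true b with h2 | h2
  · rw [h1, h2] at hab; simp at hab
  · rw [h1] at hx; rw [h2] at hy
    rw [abs_sub_comm]; exact H.gap_le hy hx
  · rw [h1] at hx; rw [h2] at hy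
    exact H.gap_le hx hy
  · rw [h1, h2] at hab; simp at hab

lemma cyl_le {s : ℕ → Bool} {m n : ℕ} (h : m ≤ n) :
    Cyl g p q u v s n ⊆ Cyl g p q u v s m := by
  induction n with
  | zero => rw [Nat.le_zero.1 h]
  | succ n ih =>
      rcases Nat.eq_or_lt_of_le h with rfl | h'
      · exact subset_rfl
      · exact (H.cyl_antitone s n).trans (ih (by omega))

lemma ks_to_cyl_in_open {s : ℕ → Bool} {U : Set ℝ} (hU : IsOpen U)
    (h : KS g p q u v s ⊆ U) : ∃ n, 1 ≤ n ∧ Cyl g p q u v s n ⊆ U := by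
  obtain ⟨n, hn⟩ := exists_subset_open_of_iInter_subset
    (fun n => H.cyl_antitone s n) (fun n => H.cyl_isCompact s n) hU h
  exact ⟨n + 1, by omega, (H.cyl_antitone s n).trans hn⟩

lemma itin_ne_of_avoid {y : ℝ} {s' : ℕ → Bool} (hy : y ∈ EE g p q u v)
    (h1 : y ≠ mK g p q u v s') (h2 : y ≠ MK g p q u v s') : itin g u v y ≠ s' := by
  intro heq
  have hylam : y ∈ Lam g p q u v := H.ee_subset_lam hy
  have : y ∈ KS g p q u v s' := heq ▸ H.mem_ks_itin hylam
  rcases H.ee_inter_ks hy this with h | h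
  · exact h1 h
  · exact h2 h

omit H in
lemma not_countable_diff {S F : Set ℝ} (hS : ¬ S.Countable) (hF : F.Countable) :
    ¬ (S \ F).Countable := by
  intro h
  apply hS
  refine ((h.union hF).mono ?_)
  intro z hz
  by_cases hzF : z ∈ F
  · exact Or.inr hzF
  · exact Or.inl ⟨hz, hzF⟩

lemma exists_diff_itin {S : Set ℝ} (hcnt : ¬ S.Countable) (hSE : S ⊆ EE g p q u v)
    (s' : ℕ → Bool) : ∃ y ∈ S, itin g u v y ≠ s' := by
  have h2 : ¬ (S \ {mK g p q u v s', MK g p q u v s'}).Countable :=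
    not_countable_diff hcnt ((countable_singleton _).insert _)
  obtain ⟨y, hy⟩ := nonempty_of_not_countable h2
  refine ⟨y, hy.1, H.itin_ne_of_avoid (hSE hy.1) ?_ ?_⟩
  · intro h; exact hy.2 (Or.inl h)
  · intro h; exact hy.2 (Or.inr h)

lemma ne_of_itin_ne {y z : ℝ} (hy : y ∈ EE g p q u v) (h : itin g u v y ≠ itin g u v z) :
    y ≠ z := fun heq => h (by rw [heq])

lemma ks_subset_Ioo {lo mid hi : ℝ} (hlo : lo ∈ EE g p q u v) (hmid : mid ∈ EE g p q u v)
    (hhi : hi ∈ EE g p q u v) (h1 : lo < mid) (h2 : mid < hi)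
    (hne1 : itin g u v lo ≠ itin g u v mid) (hne2 : itin g u v hi ≠ itin g u v mid) :
    KS g p q u v (itin g u v mid) ⊆ Ioo lo hi := by
  have hmidK : mid ∈ KS g p q u v (itin g u v mid) := H.mem_ks_itin (H.ee_subset_lam hmid)
  have hloK : lo ∈ KS g p q u v (itin g u v lo) := H.mem_ks_itin (H.ee_subset_lam hlo)
  have hhiK : hi ∈ KS g p q u v (itin g u v hi) := H.mem_ks_itin (H.ee_subset_lam hhi)
  intro z hz
  constructor
  · by_contra hle
    push_neg at hle
    have : lo ∈ KS g p q u v (itin g u v mid) :=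
      (H.ks_ordConnected _).out hz hmidK ⟨hle, h1.le⟩
    exact H.ks_disjoint hne1 hloK this
  · by_contra hle
    push_neg at hle
    have : hi ∈ KS g p q u v (itin g u v mid) :=
      (H.ks_ordConnected _).out hmidK hz ⟨h2.le, hle⟩
    exact H.ks_disjoint hne2 hhiK this

/-- a full cylinder inside any ball around a point of `Estar` -/
lemma cyl_in_ball {x : ℝ} (hx : x ∈ Estar g p q u v) {ε : ℝ} (hε : 0 < ε) :
    ∃ s n, 1 ≤ n ∧ Cyl g p q u v s n ⊆ ball x ε := by
  set S := Estar g p q u v ∩ ball x ε with hS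
  have hcnt : ¬ S.Countable := H.estar_local_uncountable hx isOpen_ball (mem_ball_self hε)
  have hSE : S ⊆ EE g p q u v := fun y hy => hy.1.1
  obtain ⟨y₁, hy₁⟩ := nonempty_of_not_countable hcnt
  obtain ⟨y₂, hy₂S, hy₂⟩ := H.exists_diff_itin hcnt hSE (itin g u v y₁)
  have hcnt3 : ¬ (S \ ({mK g p q u v (itin g u v y₁), MK g p q u v (itin g u v y₁),
      mK g p q u v (itin g u v y₂), MK g p q u v (itin g u v y₂)} : Set ℝ)).Countable :=
    not_countable_diff hcnt (Set.Finite.countable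
      (((((Set.finite_singleton _).insert _).insert _).insert _)))
  obtain ⟨y₃, hy₃⟩ := nonempty_of_not_countable hcnt3
  have hy₃S : y₃ ∈ S := hy₃.1
  have hy₃1 : itin g u v y₃ ≠ itin g u v y₁ := by
    apply H.itin_ne_of_avoid (hSE hy₃S)
    · intro h; exact hy₃.2 (by rw [h]; simp)
    · intro h; exact hy₃.2 (by rw [h]; simp)
  have hy₃2 : itin g u v y₃ ≠ itin g u v y₂ := by
    apply H.itin_ne_of_avoid (hSE hy₃S)
    · intro h; exact hy₃.2 (by rw [h]; simp)
    · intro h; exact hy₃.2 (by rw [h]; simp)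
  -- order the three points
  obtain ⟨lo, mid, hi, hloS, hmidS, hhiS, hlm, hmh, hne1, hne2⟩ :
      ∃ lo mid hi, lo ∈ S ∧ mid ∈ S ∧ hi ∈ S ∧ lo < mid ∧ mid < hi ∧
        itin g u v lo ≠ itin g u v mid ∧ itin g u v hi ≠ itin g u v mid := by
    have d12 : y₁ ≠ y₂ := fun h => hy₂ (by rw [h])
    have d31 : y₃ ≠ y₁ := H.ne_of_itin_ne (hSE hy₃S) hy₃1
    have d32 : y₃ ≠ y₂ := H.ne_of_itin_ne (hSE hy₃S) hy₃2
    rcases lt_trichotomy y₁ y₂ with h12 | h12 | h12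
    · rcases lt_trichotomy y₃ y₁ with h31 | h31 | h31
      · exact ⟨y₃, y₁, y₂, hy₃S, hy₁, hy₂S, h31, h12, (by intro h; first | exact hy₂ h | exact hy₂ h.symm | exact hy₃1 h | exact hy₃1 h.symm | exact hy₃2 h | exact hy₃2 h.symm), (by intro h; first | exact hy₂ h | exact hy₂ h.symm | exact hy₃1 h | exact hy₃1 h.symm | exact hy₃2 h | exact hy₃2 h.symm)⟩
      · exact absurd h31 d31
      · rcases lt_trichotomy y₃ y₂ with h32 | h32 | h32
        · exact ⟨y₁, y₃, y₂, hy₁, hy₃S, hy₂S, h31, h32, (by intro h; first | exact hy₂ h | exact hy₂ h.symm | exact hy₃1 h | exact hy₃1 h.symm | exact hy₃2 h | exact hy₃2 h.symm),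
            (by intro h; first | exact hy₂ h | exact hy₂ h.symm | exact hy₃1 h | exact hy₃1 h.symm | exact hy₃2 h | exact hy₃2 h.symm)⟩
        · exact absurd h32 d32
        · exact ⟨y₁, y₂, y₃, hy₁, hy₂S, hy₃S, h12, h32, (by intro h; first | exact hy₂ h | exact hy₂ h.symm | exact hy₃1 h | exact hy₃1 h.symm | exact hy₃2 h | exact hy₃2 h.symm), (by intro h; first | exact hy₂ h | exact hy₂ h.symm | exact hy₃1 h | exact hy₃1 h.symm | exact hy₃2 h | exact hy₃2 h.symm)⟩
    · exact absurd h12 d12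
    · rcases lt_trichotomy y₃ y₂ with h32 | h32 | h32
      · exact ⟨y₃, y₂, y₁, hy₃S, hy₂S, hy₁, h32, h12, (by intro h; first | exact hy₂ h | exact hy₂ h.symm | exact hy₃1 h | exact hy₃1 h.symm | exact hy₃2 h | exact hy₃2 h.symm), (by intro h; first | exact hy₂ h | exact hy₂ h.symm | exact hy₃1 h | exact hy₃1 h.symm | exact hy₃2 h | exact hy₃2 h.symm)⟩
      · exact absurd h32 d32
      · rcases lt_trichotomy y₃ y₁ with h31 | h31 | h31
        · exact ⟨y₂, y₃, y₁, hy₂S, hy₃S, hy₁, h32, h31, (by intro h; first | exact hy₂ h | exact hy₂ h.symm | exact hy₃1 h | exact hy₃1 h.symm | exact hy₃2 h | exact hy₃2 h.symm),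
            (by intro h; first | exact hy₂ h | exact hy₂ h.symm | exact hy₃1 h | exact hy₃1 h.symm | exact hy₃2 h | exact hy₃2 h.symm)⟩
        · exact absurd h31 d31
        · exact ⟨y₂, y₁, y₃, hy₂S, hy₁, hy₃S, h12, h31, (by intro h; first | exact hy₂ h | exact hy₂ h.symm | exact hy₃1 h | exact hy₃1 h.symm | exact hy₃2 h | exact hy₃2 h.symm), (by intro h; first | exact hy₂ h | exact hy₂ h.symm | exact hy₃1 h | exact hy₃1 h.symm | exact hy₃2 h | exact hy₃2 h.symm)⟩
  have hKIoo : KS g p q u v (itin g u v mid) ⊆ Ioo lo hi :=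
    H.ks_subset_Ioo (hSE hloS) (hSE hmidS) (hSE hhiS) hlm hmh hne1 hne2
  have hIooball : Ioo lo hi ⊆ ball x ε := by
    intro z hz
    have h1 : dist lo x < ε := hloS.2
    have h2 : dist hi x < ε := hhiS.2
    rw [Real.dist_eq, abs_lt] at h1 h2
    rw [mem_ball, Real.dist_eq, abs_lt]
    obtain ⟨hz1, hz2⟩ := hz
    constructor <;> linarith
  obtain ⟨n, hn, hcyl⟩ := H.ks_to_cyl_in_open isOpen_Ioo hKIoo
  exact ⟨itin g u v mid, n, hn, hcyl.trans hIooball⟩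

/-- every full cylinder contains a periodic point of `Estar` -/
lemma periodic_in_estar_cyl (s : ℕ → Bool) (n : ℕ) (hn : 1 ≤ n) :
    ∃ e ∈ Estar g p q u v ∩ Cyl g p q u v s n, ∃ j, 1 ≤ j ∧ g^[j] e = e := by
  classical
  set sper : ℕ → Bool := fun i => s (i % n) with hsper
  have hper : (fun i => sper (i + n)) = sper := by
    funext i; simp only [hsper, Nat.add_mod_right]
  have hcyleq : Cyl g p q u v sper n = Cyl g p q u v s n :=
    H.cyl_congr n (fun i hi => by simp only [hsper, Nat.mod_eq_of_lt hi])
  have hKsub : KS g p q u v sper ⊆ Cyl g p q u v s n := hcyleq ▸ H.ks_subset_cyl sper n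
  set em := mK g p q u v sper with hem
  set eM := MK g p q u v sper with heM
  have hmain : em ∈ Estar g p q u v ∨ eM ∈ Estar g p q u v := by
    by_contra hcon
    push_neg at hcon
    have hemE : em ∈ EE g p q u v := ⟨sper, Or.inl rfl⟩
    have heME : eM ∈ EE g p q u v := ⟨sper, Or.inr rfl⟩
    have hU : ∃ U, IsOpen U ∧ em ∈ U ∧ (EE g p q u v ∩ U).Countable := by
      by_contra h
      exact hcon.1 ⟨hemE, fun U hUo hmemU hc => h ⟨U, hUo, hmemU, hc⟩⟩
    have hV : ∃ V, IsOpen V ∧ eM ∈ V ∧ (EE g p q u v ∩ V).Countable := by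
      by_contra h
      exact hcon.2 ⟨heME, fun U hUo hmemU hc => h ⟨U, hUo, hmemU, hc⟩⟩
    obtain ⟨U, hUo, hemU, hUcnt⟩ := hU
    obtain ⟨V, hVo, heMV, hVcnt⟩ := hV
    have hKO : KS g p q u v sper ⊆ U ∪ V ∪ Ioo em eM := by
      intro z hz
      rcases eq_or_ne z em with rfl | hz1
      · exact Or.inl (Or.inl hemU)
      rcases eq_or_ne z eM with rfl | hz2
      · exact Or.inl (Or.inr heMV)
      exact Or.inr ⟨lt_of_le_of_ne (H.mK_le_of_mem hz) (Ne.symm hz1),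
        lt_of_le_of_ne (H.le_MK_of_mem hz) hz2⟩
    obtain ⟨N, -, hcylN⟩ := H.ks_to_cyl_in_open
      ((hUo.union hVo).union isOpen_Ioo) hKO
    apply H.ee_uncountable_cyl sper N
    have hsub : EE g p q u v ∩ Cyl g p q u v sper N ⊆
        (EE g p q u v ∩ U) ∪ (EE g p q u v ∩ V) := by
      rintro y ⟨hyE, hyC⟩
      rcases hcylN hyC with (h | h) | h
      · exact Or.inl ⟨hyE, h⟩
      · exact Or.inr ⟨hyE, h⟩
      · exfalso
        have hyK : y ∈ KS g p q u v sper :=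
          (H.ks_ordConnected sper).out (H.mK_mem sper) (H.MK_mem sper) ⟨h.1.le, h.2.le⟩
        rcases H.ee_inter_ks hyE hyK with heq | heq
        · exact absurd heq (ne_of_gt h.1)
        · exact absurd heq (ne_of_lt h.2)
    exact (hUcnt.union hVcnt).mono hsub
  rcases hmain with h | h
  · exact ⟨em, ⟨h, hKsub (H.mK_mem sper)⟩,
      H.periodic_endpoints hn hper em (Or.inl rfl)⟩
  · exact ⟨eM, ⟨h, hKsub (H.MK_mem sper)⟩,
      H.periodic_endpoints hn hper eM (Or.inr rfl)⟩

lemma estar_subset_Icc : Estar g p q u v ⊆ Icc p v := fun x hx =>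
  (H.cyl_subset (itin g u v x) 0) (H.ks_subset_cyl _ 0
    (H.mem_ks_itin (H.ee_subset_lam hx.1)))

lemma estar_isCompact : IsCompact (Estar g p q u v) :=
  IsCompact.of_isClosed_subset isCompact_Icc H.estar_isClosed H.estar_subset_Icc

/-- transitivity of `g` on `Estar` -/
lemma estar_transitive {U V : Set ℝ} (hU : IsOpen U) (hV : IsOpen V)
    (hUne : (U ∩ Estar g p q u v).Nonempty) (hVne : (V ∩ Estar g p q u v).Nonempty) :
    ∃ n, 1 ≤ n ∧ ∃ x ∈ U ∩ Estar g p q u v, g^[n] x ∈ V ∩ Estar g p q u v := by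
  obtain ⟨xU, hxU, hxUe⟩ := hUne
  obtain ⟨xV, hxV, hxVe⟩ := hVne
  obtain ⟨εU, hεU, hballU⟩ := Metric.isOpen_iff.1 hU xU hxU
  obtain ⟨εV, hεV, hballV⟩ := Metric.isOpen_iff.1 hV xV hxV
  obtain ⟨sU, nU, hnU, hcylU⟩ := H.cyl_in_ball hxUe hεU
  obtain ⟨sV, nV, hnV, hcylV⟩ := H.cyl_in_ball hxVe hεV
  classical
  set sW : ℕ → Bool := fun i => if i < nU then sU i else sV (i - nU) with hsW
  obtain ⟨e, ⟨heEs, heC⟩, -⟩ := H.periodic_in_estar_cyl sW (nU + nV) (by omega)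
  refine ⟨nU, hnU, e, ⟨?_, heEs⟩, ?_, H.g_iter_estar nU e heEs⟩
  · apply hballU
    apply hcylU
    have h1 : Cyl g p q u v sW nU = Cyl g p q u v sU nU :=
      H.cyl_congr nU (fun i hi => by simp [hsW, hi])
    rw [← h1]
    exact H.cyl_le (by omega) heC
  · apply hballV
    apply hcylV
    have h2 := H.cyl_iter_tail heC
    have h3 : (fun i => sW (i + nU)) = sV := by
      funext i
      simp only [hsW]
      rw [if_neg (by omega)]
      congr 1
      omega
    rwa [h3] at h2

/-- density of periodic points of `g` in `Estar` -/
lemma estar_periodic_dense {y : ℝ} (hy : y ∈ Estar g p q u v) {ε : ℝ} (hε : 0 < ε) :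
    ∃ e ∈ Estar g p q u v, (∃ j, 1 ≤ j ∧ g^[j] e = e) ∧ |y - e| < ε := by
  obtain ⟨s, n, hn, hcyl⟩ := H.cyl_in_ball hy hε
  obtain ⟨e, ⟨heEs, heC⟩, hper⟩ := H.periodic_in_estar_cyl s n hn
  refine ⟨e, heEs, hper, ?_⟩
  have := hcyl heC
  rw [mem_ball, Real.dist_eq] at this
  rwa [abs_sub_comm]

/-- sensitivity of `g` on `Estar` : a nearby point whose orbit separates,
with separation time at least 1 -/
lemma estar_sensitive {x : ℝ} (hx : x ∈ Estar g p q u v) {ε : ℝ} (hε : 0 < ε) :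
    ∃ y ∈ Estar g p q u v, |x - y| < ε ∧
      ∃ m, 1 ≤ m ∧ u - q ≤ |g^[m] x - g^[m] y| := by
  have hgap : (0 : ℝ) < u - q := by linarith [H.hqu]
  set ε' := min ε (u - q) with hε'
  have hε'0 : 0 < ε' := lt_min hε hgap
  have hcnt : ¬ (Estar g p q u v ∩ ball x ε').Countable :=
    H.estar_local_uncountable hx isOpen_ball (mem_ball_self hε'0)
  obtain ⟨y, ⟨hyEs, hyball⟩, hyne⟩ := H.exists_diff_itin hcnt (fun z hz => hz.1.1)
    (itin g u v x)
  have hxy : |x - y| < ε' := by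
    have := hyball
    rw [mem_ball, Real.dist_eq] at this
    rwa [abs_sub_comm]
  obtain ⟨m, hm⟩ := Function.ne_iff.1 hyne
  have hxlam : x ∈ Lam g p q u v := H.ee_subset_lam hx.1
  have hylam : y ∈ Lam g p q u v := H.ee_subset_lam hyEs.1
  have hxK : x ∈ KS g p q u v (itin g u v x) := H.mem_ks_itin hxlam
  have hyK : y ∈ KS g p q u v (itin g u v y) := H.mem_ks_itin hylam
  have hsep : ∀ i, itin g u v x i ≠ itin g u v y i →
      u - q ≤ |g^[i] x - g^[i] y| := by
    intro i hi
    exact H.gap_ne (Ne.symm hi) (H.ks_iter_mem hyK i) (H.ks_iter_mem hxK i) |>.trans_eq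
      (by rw [abs_sub_comm])
  rcases Nat.eq_zero_or_pos m with rfl | hm1
  · exfalso
    have := hsep 0 (Ne.symm hm)
    simp only [Function.iterate_zero_apply] at this
    have h2 : |x - y| < u - q := lt_of_lt_of_le hxy (min_le_right _ _)
    linarith
  · exact ⟨y, hyEs, lt_of_lt_of_le hxy (min_le_left _ _),
      m, hm1, hsep m (Ne.symm hm)⟩

end HS

end Horseshoe

section Chialvo

variable (k r : ℝ)

lemma chialvo_continuous : Continuous (fun x : ℝ => x ^ 2 * Real.exp (r - x) + k) := by
  fun_prop

lemma chialvo_hasDeriv (x : ℝ) :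
    HasDerivAt (fun x : ℝ => x ^ 2 * Real.exp (r - x) + k)
      ((2 * x - x ^ 2) * Real.exp (r - x)) x := by
  have h1 : HasDerivAt (fun x : ℝ => x ^ 2) (2 * x) x := by
    simpa using hasDerivAt_pow 2 x
  have h2 : HasDerivAt (fun x : ℝ => r - x) (-1) x := by
    simpa using (hasDerivAt_id x).const_sub r
  have h3 : HasDerivAt (fun x : ℝ => Real.exp (r - x)) (Real.exp (r - x) * (-1)) x := h2.exp
  have h4 : HasDerivAt (fun x : ℝ => x ^ 2 * Real.exp (r - x) + k)
      (2 * x * Real.exp (r - x) + x ^ 2 * (Real.exp (r - x) * -1)) x := (h1.mul h3).add_const k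
  convert h4 using 1
  ring

lemma chialvo_strictMonoOn :
    StrictMonoOn (fun x : ℝ => x ^ 2 * Real.exp (r - x) + k) (Icc 0 2) := by
  apply strictMonoOn_of_deriv_pos (convex_Icc 0 2) (chialvo_continuous k r).continuousOn
  intro x hx
  rw [interior_Icc, mem_Ioo] at hx
  rw [(chialvo_hasDeriv k r x).deriv]
  apply mul_pos _ (Real.exp_pos _)
  nlinarith [hx.1, hx.2]

lemma chialvo_strictAntiOn :
    StrictAntiOn (fun x : ℝ => x ^ 2 * Real.exp (r - x) + k) (Ici 2) := by
  apply strictAntiOn_of_deriv_neg (convex_Ici 2) (chialvo_continuous k r).continuousOn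
  intro x hx
  rw [interior_Ici, mem_Ioi] at hx
  rw [(chialvo_hasDeriv k r x).deriv]
  apply mul_neg_of_neg_of_pos _ (Real.exp_pos _)
  nlinarith

lemma chialvo_ge (x : ℝ) : k ≤ (fun x : ℝ => x ^ 2 * Real.exp (r - x) + k) x := by
  simp only
  nlinarith [Real.exp_pos (r - x), sq_nonneg x, mul_nonneg (sq_nonneg x) (Real.exp_pos (r - x)).le]

end Chialvo

end ChialvoChaos

open ChialvoChaos Set Function Metric

/-- Devaney chaos for the 1D Chialvo map. Let `k ≥ 0`, `r ∈ ℝ` and `f = f_{r,k}`,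
`f(x) = x² exp(r − x) + k`, satisfy `f²(2) < f³(2) < 2 < f(2)`. Then `f` is
chaotic in the sense of Devaney on `I = [f²(2), f(2)]`: there is a nonempty
compact `f`-invariant set `Y ⊆ I` on which `f` is topologically transitive,
has a dense set of periodic points, and has sensitive dependence on initial
conditions. -/
theorem chialvo_devaney_chaos (k r : ℝ) (hk : 0 ≤ k)
    (f : ℝ → ℝ) (hf : f = fun x : ℝ => x ^ 2 * Real.exp (r - x) + k)
    (h1 : f (f 2) < f (f (f 2))) (h2 : f (f (f 2)) < 2) (h3 : 2 < f 2) :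
    ∃ Y : Set ℝ, Y.Nonempty ∧ IsCompact Y ∧ Y ⊆ Set.Icc (f (f 2)) (f 2) ∧
      Set.MapsTo f Y Y ∧
      (∀ U V : Set ℝ, IsOpen U → IsOpen V → (U ∩ Y).Nonempty → (V ∩ Y).Nonempty →
        ∃ n : ℕ, ∃ x ∈ U ∩ Y, f^[n] x ∈ V ∩ Y) ∧
      (∀ y ∈ Y, ∀ ε > (0 : ℝ), ∃ p ∈ Y, (∃ n : ℕ, 1 ≤ n ∧ f^[n] p = p) ∧ |y - p| < ε) ∧
      (∃ δ > (0 : ℝ), ∀ x ∈ Y, ∀ ε > (0 : ℝ), ∃ y ∈ Y, ∃ n : ℕ,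
        |x - y| < ε ∧ δ ≤ |f^[n] x - f^[n] y|) := by
  have hc : Continuous f := hf ▸ chialvo_continuous k r
  have hmono : StrictMonoOn f (Icc 0 2) := hf ▸ chialvo_strictMonoOn k r
  have hanti : StrictAntiOn f (Ici 2) := hf ▸ chialvo_strictAntiOn k r
  have hge : ∀ x, k ≤ f x := fun x => hf ▸ chialvo_ge k r x
  set b := f 2 with hb
  set a2 := f b with ha2
  set a3 := f a2 with ha3
  have ha2nn : 0 ≤ a2 := le_trans hk (hge b)
  have ha22 : a2 < 2 := lt_trans h1 h2
  -- the IVT points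
  have hw : ∃ w0 ∈ Ioo a2 2, f w0 = 2 := by
    have h := intermediate_value_Ioo (le_of_lt ha22) hc.continuousOn
      (a := a2) (b := 2) ⟨h2, h3⟩
    obtain ⟨w0, hw0, hfw0⟩ := h
    exact ⟨w0, hw0, hfw0⟩
  obtain ⟨w0, hw0mem, hfw0⟩ := hw
  have hs : ∃ s0 ∈ Ioo 2 b, f s0 = 2 := by
    have h := intermediate_value_Ioo' (le_of_lt h3) hc.continuousOn
      (a := 2) (b := b) ⟨ha22, h3⟩
    obtain ⟨s0, hs0, hfs0⟩ := h
    exact ⟨s0, hs0, hfs0⟩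
  obtain ⟨s0, hs0mem, hfs0⟩ := hs
  have ht : ∃ t0 ∈ Ioo s0 b, f t0 = w0 := by
    have h := intermediate_value_Ioo' (le_of_lt hs0mem.2) hc.continuousOn
      (a := s0) (b := b) (by rw [hfs0]; exact ⟨hw0mem.1, hw0mem.2⟩)
    obtain ⟨t0, ht0, hft0⟩ := h
    exact ⟨t0, ht0, hft0⟩
  obtain ⟨t0, ht0mem, hft0⟩ := ht
  set g := f ∘ f with hgdef
  have hgc : Continuous g := hc.comp hc
  have hg2 : g 2 = a2 := rfl
  have hgs0 : g s0 = b := by simp [hgdef, hfs0, hb]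
  have hgt0 : g t0 = 2 := by simp [hgdef, hft0, hfw0]
  have hβ : ∃ β0 ∈ Ioo 2 s0, g β0 = t0 := by
    have h := intermediate_value_Ioo (le_of_lt hs0mem.1) hgc.continuousOn
      (a := 2) (b := s0) (by
        rw [hgs0]
        exact ⟨lt_trans ha22 (lt_trans hs0mem.1 ht0mem.1), ht0mem.2⟩)
    obtain ⟨β0, hβ0, hgβ0⟩ := h
    exact ⟨β0, hβ0, hgβ0⟩
  obtain ⟨β0, hβ0mem, hgβ0⟩ := hβ
  have hα : ∃ α0 ∈ Ioo s0 t0, g α0 = t0 := by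
    have h := intermediate_value_Ioo' (le_of_lt ht0mem.1) hgc.continuousOn
      (a := s0) (b := t0) (by
        rw [hgs0, hgt0]
        exact ⟨lt_trans hs0mem.1 ht0mem.1, ht0mem.2⟩)
    obtain ⟨α0, hα0, hgα0⟩ := h
    exact ⟨α0, hα0, hgα0⟩
  obtain ⟨α0, hα0mem, hgα0⟩ := hα
  -- ordering facts
  have h2s0 : (2 : ℝ) < s0 := hs0mem.1
  have hs0t0 : s0 < t0 := ht0mem.1
  have ht0b : t0 < b := ht0mem.2
  have h2β0 : (2 : ℝ) < β0 := hβ0mem.1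
  have hβ0s0 : β0 < s0 := hβ0mem.2
  have hs0α0 : s0 < α0 := hα0mem.1
  have hα0t0 : α0 < t0 := hα0mem.2
  have hw0nn : 0 ≤ w0 := le_trans ha2nn hw0mem.1.le
  -- f maps [2, s0] into [2, b], decreasingly
  have hfanti := hanti
  have hmono2 : StrictMonoOn g (Icc 2 β0) := by
    intro x hx y hy hxy
    have hxs : x ∈ Icc 2 s0 := ⟨hx.1, le_trans hx.2 hβ0s0.le⟩
    have hys : y ∈ Icc 2 s0 := ⟨hy.1, le_trans hy.2 hβ0s0.le⟩
    have hfyx : f y < f x := hfanti (mem_Ici.2 hxs.1) (mem_Ici.2 hys.1) hxy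
    have hfx2 : 2 ≤ f x := by
      rw [← hfs0]
      rcases eq_or_lt_of_le hxs.2 with heq | hlt
      · rw [heq]
      · exact (hfanti (mem_Ici.2 hxs.1) (mem_Ici.2 (le_trans hxs.1 hxs.2)) hlt).le
    have hfy2 : 2 ≤ f y := by
      rw [← hfs0]
      rcases eq_or_lt_of_le hys.2 with heq | hlt
      · rw [heq]
      · exact (hfanti (mem_Ici.2 hys.1) (mem_Ici.2 (le_trans hys.1 hys.2)) hlt).le
    exact hfanti (mem_Ici.2 hfy2) (mem_Ici.2 hfx2) hfyx
  have hanti2 : StrictAntiOn g (Icc α0 t0) := by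
    intro x hx y hy hxy
    have hxs : x ∈ Icc s0 t0 := ⟨le_trans hs0α0.le hx.1, hx.2⟩
    have hys : y ∈ Icc s0 t0 := ⟨le_trans hs0α0.le hy.1, hy.2⟩
    have h2x : (2:ℝ) ≤ x := le_trans h2s0.le hxs.1
    have h2y : (2:ℝ) ≤ y := le_trans h2s0.le hys.1
    have hfyx : f y < f x := hfanti (mem_Ici.2 h2x) (mem_Ici.2 h2y) hxy
    have hbound : ∀ z, z ∈ Icc s0 t0 → f z ∈ Icc 0 2 := by
      intro z hz
      have h2z : (2:ℝ) ≤ z := le_trans h2s0.le hz.1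
      constructor
      · apply le_trans hw0nn
        rw [← hft0]
        rcases eq_or_lt_of_le hz.2 with heq | hlt
        · rw [heq]
        · exact (hfanti (mem_Ici.2 h2z) (mem_Ici.2 (le_trans h2z hz.2)) hlt).le
      · rw [← hfs0]
        rcases eq_or_lt_of_le hz.1 with heq | hlt
        · rw [← heq]
        · exact (hfanti (mem_Ici.2 h2s0.le) (mem_Ici.2 h2z) hlt).le
    exact hmono (hbound y hys) (hbound x hxs) hfyx
  have hcov0 : Icc 2 t0 ⊆ g '' Icc 2 β0 := by
    have h := intermediate_value_Icc (le_of_lt h2β0) hgc.continuousOn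
    rw [hg2, hgβ0] at h
    exact (Icc_subset_Icc ha22.le le_rfl).trans h
  have hcov1 : Icc 2 t0 ⊆ g '' Icc α0 t0 := by
    have h := intermediate_value_Icc' (le_of_lt hα0t0) hgc.continuousOn
    rw [hgt0, hgα0] at h
    exact h
  have H : HS g 2 β0 α0 t0 :=
    ⟨h2β0.le, lt_trans hβ0s0 hs0α0, hα0t0.le, hgc, hmono2, hanti2, hcov0, hcov1⟩
  set ES := Estar g 2 β0 α0 t0 with hES
  set Y := ES ∪ f '' ES with hY
  have hESsub : ES ⊆ Icc 2 t0 := H.estar_subset_Icc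
  have hfmaps : ∀ x ∈ Icc 2 t0, f x ∈ Icc a2 b := by
    intro x hx
    constructor
    · rw [ha2]
      exact hanti.antitoneOn (mem_Ici.2 hx.1)
        (mem_Ici.2 (by linarith [hx.1, ht0b, hx.2] : (2:ℝ) ≤ b)) (le_trans hx.2 ht0b.le)
    · rw [hb]
      exact hanti.antitoneOn (mem_Ici.2 le_rfl) (mem_Ici.2 hx.1) hx.1
  have hgiter : ∀ m : ℕ, g^[m] = f^[2 * m] := by
    intro m
    rw [Function.iterate_mul]
    have : f^[2] = g := by
      funext x
      simp [hgdef]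
    rw [this]
  have hYsub : Y ⊆ Icc a2 b := by
    rintro x (hx | ⟨z, hz, rfl⟩)
    · have := hESsub hx
      exact ⟨le_trans ha22.le this.1, le_trans this.2 ht0b.le⟩
    · exact hfmaps z (hESsub hz)
  refine ⟨Y, ?_, ?_, hYsub, ?_, ?_, ?_, ?_⟩
  · -- nonempty
    obtain ⟨x, hx⟩ := H.estar_nonempty
    exact ⟨x, Or.inl hx⟩
  · -- compact
    exact H.estar_isCompact.union (H.estar_isCompact.image hc)
  · -- maps to
    rintro x (hx | ⟨z, hz, rfl⟩)
    · exact Or.inr ⟨x, hx, rfl⟩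
    · exact Or.inl (H.g_estar z hz)
  · -- transitivity
    intro U V hU hV hUne hVne
    have hpick : ∀ W : Set ℝ, IsOpen W → (W ∩ Y).Nonempty →
        (W ∩ ES).Nonempty ∨ ((f ⁻¹' W ∩ ES).Nonempty) := by
      rintro W hW ⟨x, hxW, hx | ⟨z, hz, rfl⟩⟩
      · exact Or.inl ⟨x, hxW, hx⟩
      · exact Or.inr ⟨z, hxW, hz⟩
    rcases hpick U hU hUne with hUE | hUE
    · rcases hpick V hV hVne with hVE | hVE
      · obtain ⟨n, -, x, hxU, hxV⟩ := H.estar_transitive hU hV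
          (by obtain ⟨x, h1', h2'⟩ := hUE; exact ⟨x, h1', h2'⟩)
          (by obtain ⟨x, h1', h2'⟩ := hVE; exact ⟨x, h1', h2'⟩)
        refine ⟨2 * n, x, ⟨hxU.1, Or.inl hxU.2⟩, ?_⟩
        rw [← hgiter n]
        exact ⟨hxV.1, Or.inl hxV.2⟩
      · obtain ⟨n, -, x, hxU, hxV⟩ := H.estar_transitive hU (hV.preimage hc)
          (by obtain ⟨x, h1', h2'⟩ := hUE; exact ⟨x, h1', h2'⟩)
          (by obtain ⟨x, h1', h2'⟩ := hVE; exact ⟨x, h1', h2'⟩)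
        refine ⟨2 * n + 1, x, ⟨hxU.1, Or.inl hxU.2⟩, ?_, ?_⟩
        · rw [Function.iterate_succ_apply', ← hgiter n]
          exact hxV.1
        · rw [Function.iterate_succ_apply', ← hgiter n]
          exact Or.inr ⟨g^[n] x, hxV.2, rfl⟩
    · rcases hpick V hV hVne with hVE | hVE
      · obtain ⟨n, hn, x, hxU, hxV⟩ := H.estar_transitive (hU.preimage hc) hV
          (by obtain ⟨x, h1', h2'⟩ := hUE; exact ⟨x, h1', h2'⟩)
          (by obtain ⟨x, h1', h2'⟩ := hVE; exact ⟨x, h1', h2'⟩)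
        have harith : 2 * n = 2 * n - 1 + 1 := by omega
        have hkey : f^[2 * n - 1] (f x) = g^[n] x := by
          rw [hgiter n, harith, Function.iterate_succ_apply]
          simp only [Nat.add_sub_cancel]
        refine ⟨2 * n - 1, f x, ⟨hxU.1, Or.inr ⟨x, hxU.2, rfl⟩⟩, ?_, ?_⟩
        · rw [hkey]; exact hxV.1
        · rw [hkey]; exact Or.inl hxV.2
      · obtain ⟨n, -, x, hxU, hxV⟩ := H.estar_transitive (hU.preimage hc) (hV.preimage hc)
          (by obtain ⟨x, h1', h2'⟩ := hUE; exact ⟨x, h1', h2'⟩)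
          (by obtain ⟨x, h1', h2'⟩ := hVE; exact ⟨x, h1', h2'⟩)
        have hkey : f^[2 * n] (f x) = f (g^[n] x) := by
          rw [hgiter n, ← Function.iterate_succ_apply f (2 * n) x,
            Function.iterate_succ_apply' f (2 * n) x]
        refine ⟨2 * n, f x, ⟨hxU.1, Or.inr ⟨x, hxU.2, rfl⟩⟩, ?_, ?_⟩
        · rw [hkey]; exact hxV.1
        · rw [hkey]; exact Or.inr ⟨g^[n] x, hxV.2, rfl⟩
  · -- dense periodic points
    rintro y (hy | ⟨z, hz, rfl⟩) ε hε
    · obtain ⟨e, heES, ⟨j, hj, hje⟩, hdist⟩ := H.estar_periodic_dense hy hε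
      refine ⟨e, Or.inl heES, ⟨2 * j, by omega, ?_⟩, hdist⟩
      rw [← hgiter j, hje]
    · obtain ⟨η, hη, hcont⟩ := Metric.continuous_iff.1 hc z ε hε
      obtain ⟨e, heES, ⟨j, hj, hje⟩, hdist⟩ := H.estar_periodic_dense hz hη
      refine ⟨f e, Or.inr ⟨e, heES, rfl⟩, ⟨2 * j, by omega, ?_⟩, ?_⟩
      · have : f^[2 * j] (f e) = f (f^[2 * j] e) := by
          rw [← Function.iterate_succ_apply f (2 * j) e,
            Function.iterate_succ_apply' f (2 * j) e]
        rw [this, ← hgiter j, hje]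
      · have := hcont e (by rw [Real.dist_eq, abs_sub_comm]; exact hdist)
        rw [Real.dist_eq, abs_sub_comm] at this
        exact this
  · -- sensitivity
    refine ⟨α0 - β0, by linarith [hβ0s0, hs0α0], ?_⟩
    rintro x (hx | ⟨z, hz, rfl⟩) ε hε
    · obtain ⟨y, hyES, hxy, m, hm, hsep⟩ := H.estar_sensitive hx hε
      refine ⟨y, Or.inl hyES, 2 * m, hxy, ?_⟩
      rw [← hgiter m]
      exact hsep
    · obtain ⟨η, hη, hcont⟩ := Metric.continuous_iff.1 hc z ε hε
      obtain ⟨y, hyES, hxy, m, hm, hsep⟩ := H.estar_sensitive hz hη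
      refine ⟨f y, Or.inr ⟨y, hyES, rfl⟩, 2 * m - 1, ?_, ?_⟩
      · have := hcont y (show dist y z < η by
          rw [Real.dist_eq, abs_sub_comm]; exact hxy)
        rw [Real.dist_eq, abs_sub_comm] at this
        exact this
      · have harith : 2 * m = 2 * m - 1 + 1 := by omega
        have e1 : f^[2 * m - 1] (f z) = g^[m] z := by
          rw [hgiter m, harith, Function.iterate_succ_apply]
          simp only [Nat.add_sub_cancel]
        have e2 : f^[2 * m - 1] (f y) = g^[m] y := by
          rw [hgiter m, harith, Function.iterate_succ_apply]
          simp only [Nat.add_sub_cancel]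
        rw [e1, e2]
        exact hsep
end
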